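/- arXiv:2205.15007 — 8 statements merged into one kernel-verified Lean document; each statement's English description precedes it below -/
import Mathlib

section
/- Suppose φ, ψ ∈ L¹(ℝ) ∩ L²(ℝ). Then for every z ∈ ℂ with Im z ≠ 0: (i) the integrals defining y₁ᶻ(x) and y₂ᶻ(x) converge absolutely with |y₁ᶻ(x)| ≤ ‖φ‖_{L¹(ℝ)} and |y₂ᶻ(x)| ≤ ‖ψ‖_{L¹(ℝ)} for all x ∈ ℝ; (ii) y₁ᶻ and y₂ᶻ belong to L²(ℝ), with ‖y₁ᶻ‖_{L²(ℝ)} ≤ (2/|Im z|)·‖φ‖_{L²(ℝ)} and ‖y₂ᶻ‖_{L²(ℝ)} ≤ (2/|Im z|)·‖ψ‖_{L²(ℝ)}. -/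
open MeasureTheory Set Complex Filter Topology
open scoped ENNReal

/-- `y₁ᶻ(x)`: for `Im z > 0`, `∫_{−∞}^x e^{iz(x−s)} φ(s) ds`;
for `Im z < 0`, `−∫_x^∞ e^{iz(x−s)} φ(s) ds`. -/
noncomputable def y₁ (φ : ℝ → ℂ) (z : ℂ) (x : ℝ) : ℂ :=
  if 0 < z.im then ∫ s in Iic x, Complex.exp (Complex.I * z * ((x - s : ℝ) : ℂ)) * φ s
  else -∫ s in Ici x, Complex.exp (Complex.I * z * ((x - s : ℝ) : ℂ)) * φ s

/-- `y₂ᶻ(x)`: for `Im z > 0`, `−∫_x^∞ e^{−iz(x−s)} ψ(s) ds`;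
for `Im z < 0`, `∫_{−∞}^x e^{−iz(x−s)} ψ(s) ds`. -/
noncomputable def y₂ (ψ : ℝ → ℂ) (z : ℂ) (x : ℝ) : ℂ :=
  if 0 < z.im then -∫ s in Ici x, Complex.exp (-Complex.I * z * ((x - s : ℝ) : ℂ)) * ψ s
  else ∫ s in Iic x, Complex.exp (-Complex.I * z * ((x - s : ℝ) : ℂ)) * ψ s


lemma exp_abs_integrable (a : ℝ) (ha : 0 < a) :
    Integrable (fun t : ℝ => Real.exp (-(a * |t|))) := by
  rw [← integrableOn_univ, ← Iic_union_Ioi (a := (0:ℝ))]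
  refine IntegrableOn.union ?_ ?_
  · rw [← Measure.map_neg_eq_self (volume : Measure ℝ)]
    have m : MeasurableEmbedding fun x : ℝ => -x := (Homeomorph.neg ℝ).measurableEmbedding
    rw [m.integrableOn_map_iff]
    simp_rw [Function.comp_def, abs_neg, neg_preimage, neg_Iic, neg_zero]
    refine (integrableOn_Ici_iff_integrableOn_Ioi).mpr ?_
    exact (exp_neg_integrableOn_Ioi 0 ha).congr_fun
      (fun t ht => by rw [abs_of_pos ht]; simp only [neg_mul]) measurableSet_Ioi
  · exact (exp_neg_integrableOn_Ioi 0 ha).congr_fun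
      (fun t ht => by rw [abs_of_pos ht]; simp only [neg_mul]) measurableSet_Ioi

lemma exp_abs_integral (a : ℝ) (ha : 0 < a) :
    ∫ t : ℝ, Real.exp (-(a * |t|)) = 2 / a := by
  rw [integral_comp_abs (f := fun t => Real.exp (-(a * t)))]
  have : ∫ t in Ioi (0:ℝ), Real.exp (-(a * t)) = 1 / a := by
    have hderiv : ∀ t ∈ Ici (0:ℝ),
        HasDerivAt (fun t : ℝ => -(1 / a) * Real.exp (-(a * t))) (Real.exp (-(a * t))) t := by
      intro t _
      have h1 : HasDerivAt (fun t : ℝ => -(a * t)) (-a) t := by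
        have := ((hasDerivAt_id t).const_mul a).neg; rw [mul_one] at this; exact this
      have := (h1.exp).const_mul (-(1 / a))
      refine this.congr_deriv ?_
      have hane : a ≠ 0 := ha.ne'
      field_simp
    have hint : IntegrableOn (fun t : ℝ => Real.exp (-(a * t))) (Ioi 0) := by
      simpa [neg_mul] using exp_neg_integrableOn_Ioi 0 ha
    have htend : Tendsto (fun t : ℝ => -(1 / a) * Real.exp (-(a * t))) atTop (𝓝 0) := by
      have h2 : Tendsto (fun t : ℝ => -(a * t)) atTop atBot := by
        refine (tendsto_neg_atBot_iff).mpr ?_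
        exact Tendsto.const_mul_atTop ha tendsto_id
      have := (Real.tendsto_exp_atBot.comp h2).const_mul (-(1 / a))
      simpa using this
    have := integral_Ioi_of_hasDerivAt_of_tendsto' hderiv hint htend
    rw [this]
    simp
  rw [this]; ring

lemma ker_lintegral (a : ℝ) (ha : 0 < a) (x : ℝ) :
    ∫⁻ s : ℝ, ENNReal.ofReal (Real.exp (-(a * |x - s|))) ≤ ENNReal.ofReal (2 / a) := by
  have hint : Integrable (fun s : ℝ => Real.exp (-(a * |x - s|))) := by
    have := (exp_abs_integrable a ha).comp_sub_right x
    refine this.congr (ae_of_all _ fun s => by simp only []; rw [abs_sub_comm])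
  rw [← ofReal_integral_eq_lintegral_ofReal hint (ae_of_all _ fun s => (Real.exp_pos _).le)]
  refine ENNReal.ofReal_le_ofReal ?_
  have : ∫ s : ℝ, Real.exp (-(a * |x - s|)) = ∫ s : ℝ, Real.exp (-(a * |s|)) := by
    rw [← integral_sub_right_eq_self (fun s => Real.exp (-(a * |s|))) x]
    exact integral_congr_ae (ae_of_all _ fun s => by simp only []; rw [abs_sub_comm])
  rw [this, exp_abs_integral a ha]

lemma schur (a : ℝ) (ha : 0 < a) (F : ℝ → ℝ≥0∞) (hF : Measurable F) (hFfin : ∀ s, F s ≠ ∞) :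
    ∫⁻ x : ℝ, (∫⁻ s : ℝ, ENNReal.ofReal (Real.exp (-(a * |x - s|))) * F s) ^ 2
      ≤ ENNReal.ofReal (2 / a) ^ 2 * ∫⁻ s : ℝ, F s ^ 2 := by
  set k : ℝ → ℝ → ℝ≥0∞ := fun x s => ENNReal.ofReal (Real.exp (-(a * |x - s|))) with hk
  have hkmeas : Measurable (fun p : ℝ × ℝ => k p.1 p.2) := by
    apply Measurable.ennreal_ofReal
    fun_prop
  have hhalf : ∀ x s, ENNReal.ofReal (Real.exp (-(a * |x - s|) / 2)) *
      ENNReal.ofReal (Real.exp (-(a * |x - s|) / 2)) = k x s := by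
    intro x s
    rw [← ENNReal.ofReal_mul (Real.exp_pos _).le, ← Real.exp_add]
    ring_nf
    rfl
  have hsq : ∀ X : ℝ≥0∞, (X ^ ((1:ℝ)/2)) ^ 2 = X := by
    intro X
    rw [← ENNReal.rpow_natCast (X ^ ((1:ℝ)/2)) 2, ← ENNReal.rpow_mul]
    norm_num
  -- pointwise Cauchy-Schwarz
  have step2 : ∀ x, (∫⁻ s, k x s * F s) ^ 2
      ≤ ENNReal.ofReal (2 / a) * ∫⁻ s, k x s * F s ^ 2 := by
    intro x
    set f : ℝ → ℝ≥0∞ := fun s => ENNReal.ofReal (Real.exp (-(a * |x - s|) / 2)) with hf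
    have hfm : Measurable f := by apply Measurable.ennreal_ofReal; fun_prop
    have hfF : ∀ s, f s * (f s * F s) = k x s * F s := by
      intro s; rw [← mul_assoc, hhalf]
    have hpq : Real.HolderConjugate 2 2 := Real.HolderConjugate.two_two
    have hold := ENNReal.lintegral_mul_le_Lp_mul_Lq (volume : Measure ℝ) hpq
      hfm.aemeasurable ((hfm.mul hF).aemeasurable)
    have hf2 : ∀ s, f s ^ (2:ℝ) = k x s := by
      intro s
      rw [hf]
      rw [ENNReal.ofReal_rpow_of_pos (Real.exp_pos _)]
      rw [Real.rpow_def_of_pos (Real.exp_pos _), Real.log_exp]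
      congr 1
      ring
    have hg2 : ∀ s, (f s * F s) ^ (2:ℝ) = k x s * F s ^ 2 := by
      intro s
      rw [ENNReal.mul_rpow_of_nonneg _ _ (by norm_num : (0:ℝ) ≤ 2), hf2]
      congr 1
      rw [← ENNReal.rpow_natCast (F s) 2]
      norm_num
    calc (∫⁻ s, k x s * F s) ^ 2
        = (∫⁻ s, (f * fun s => f s * F s) s) ^ 2 := by
          congr 1; refine lintegral_congr fun s => (hfF s).symm
      _ ≤ ((∫⁻ s, f s ^ (2:ℝ)) ^ ((1:ℝ)/2) * (∫⁻ s, (f s * F s) ^ (2:ℝ)) ^ ((1:ℝ)/2)) ^ 2 := by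
          exact pow_le_pow_left' hold 2
      _ = (∫⁻ s, k x s) * ∫⁻ s, k x s * F s ^ 2 := by
          rw [mul_pow, hsq, hsq]
          congr 1
          · exact lintegral_congr fun s => hf2 s
          · exact lintegral_congr fun s => hg2 s
      _ ≤ ENNReal.ofReal (2 / a) * ∫⁻ s, k x s * F s ^ 2 := by
          exact mul_le_mul_left (ker_lintegral a ha x) _
  calc ∫⁻ x, (∫⁻ s, k x s * F s) ^ 2
      ≤ ∫⁻ x, ENNReal.ofReal (2 / a) * ∫⁻ s, k x s * F s ^ 2 := lintegral_mono step2
    _ = ENNReal.ofReal (2 / a) * ∫⁻ x, ∫⁻ s, k x s * F s ^ 2 :=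
        lintegral_const_mul' _ _ ENNReal.ofReal_ne_top
    _ = ENNReal.ofReal (2 / a) * ∫⁻ s, ∫⁻ x, k x s * F s ^ 2 := by
        rw [lintegral_lintegral_swap]
        exact (hkmeas.mul ((hF.comp measurable_snd).pow_const 2)).aemeasurable
    _ ≤ ENNReal.ofReal (2 / a) * ∫⁻ s, ENNReal.ofReal (2 / a) * F s ^ 2 := by
        refine mul_le_mul_right (lintegral_mono fun s => ?_) _
        rw [lintegral_mul_const' _ _ (by exact ENNReal.pow_ne_top (hFfin s))]
        refine mul_le_mul_left ?_ _
        refine le_trans (le_of_eq (lintegral_congr fun x => ?_)) (ker_lintegral a ha s)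
        show k x s = ENNReal.ofReal (Real.exp (-(a * |s - x|)))
        rw [hk]; simp only []; rw [abs_sub_comm]
    _ = ENNReal.ofReal (2 / a) ^ 2 * ∫⁻ s, F s ^ 2 := by
        rw [lintegral_const_mul' _ _ ENNReal.ofReal_ne_top, sq, mul_assoc]

lemma master (f : ℝ → ℂ) (hmeas : StronglyMeasurable f)
    (hf1 : Integrable f) (hf2 : MemLp f 2 volume) (c : ℂ) (a : ℝ) (ha : 0 < a)
    (S : ℝ → Set ℝ) (hSm : ∀ x, MeasurableSet (S x))
    (hSprod : MeasurableSet {p : ℝ × ℝ | p.2 ∈ S p.1})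
    (hce : ∀ x s, s ∈ S x → c.re * (x - s) = -(a * |x - s|)) :
    (∀ x, IntegrableOn (fun s => Complex.exp (c * ((x - s : ℝ) : ℂ)) * f s) (S x) volume) ∧
    (∀ x, ‖∫ s in S x, Complex.exp (c * ((x - s : ℝ) : ℂ)) * f s‖ ≤ ∫ s, ‖f s‖) ∧
    MemLp (fun x => ∫ s in S x, Complex.exp (c * ((x - s : ℝ) : ℂ)) * f s) 2 volume ∧
    eLpNorm (fun x => ∫ s in S x, Complex.exp (c * ((x - s : ℝ) : ℂ)) * f s) 2 volume
      ≤ ENNReal.ofReal (2 / a) * eLpNorm f 2 volume := by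
  set G : ℝ → ℝ → ℂ := fun x s => Complex.exp (c * ((x - s : ℝ) : ℂ)) * f s with hG
  have hnorm : ∀ x s, ‖G x s‖ = Real.exp (c.re * (x - s)) * ‖f s‖ := by
    intro x s
    rw [hG]
    simp only [norm_mul, Complex.norm_exp]
    congr 2
    simp [Complex.mul_re]
  have hnorm' : ∀ x s, s ∈ S x → ‖G x s‖ = Real.exp (-(a * |x - s|)) * ‖f s‖ := by
    intro x s hs; rw [hnorm, hce x s hs]
  have hGm : ∀ x, AEStronglyMeasurable (G x) (volume.restrict (S x)) := by
    intro x
    refine AEStronglyMeasurable.mul ?_ hmeas.aestronglyMeasurable.restrict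
    refine Continuous.aestronglyMeasurable ?_
    continuity
  -- (A) integrability
  have hA : ∀ x, IntegrableOn (G x) (S x) volume := by
    intro x
    refine Integrable.mono hf1.norm.restrict (hGm x) ?_
    refine (ae_restrict_iff' (hSm x)).mpr (ae_of_all _ fun s hs => ?_)
    rw [norm_norm, hnorm' x s hs]
    calc Real.exp (-(a * |x - s|)) * ‖f s‖ ≤ 1 * ‖f s‖ := by
          refine mul_le_mul_of_nonneg_right ?_ (norm_nonneg _)
          refine Real.exp_le_one_iff.mpr ?_
          simp [mul_nonneg ha.le (abs_nonneg _)]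
      _ = ‖f s‖ := one_mul _
  -- (B) pointwise bound
  have hB : ∀ x, ‖∫ s in S x, G x s‖ ≤ ∫ s, ‖f s‖ := by
    intro x
    calc ‖∫ s in S x, G x s‖ ≤ ∫ s in S x, ‖G x s‖ := norm_integral_le_integral_norm _
      _ ≤ ∫ s in S x, ‖f s‖ := by
          refine setIntegral_mono_on (hA x).norm hf1.norm.integrableOn (hSm x) fun s hs => ?_
          rw [hnorm' x s hs]
          calc Real.exp (-(a * |x - s|)) * ‖f s‖ ≤ 1 * ‖f s‖ := by
                refine mul_le_mul_of_nonneg_right ?_ (norm_nonneg _)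
                refine Real.exp_le_one_iff.mpr ?_
                simp [mul_nonneg ha.le (abs_nonneg _)]
            _ = ‖f s‖ := one_mul _
      _ ≤ ∫ s, ‖f s‖ := setIntegral_le_integral hf1.norm (ae_of_all _ fun s => norm_nonneg _)
  -- measurability of y
  set y : ℝ → ℂ := fun x => ∫ s in S x, G x s with hy
  have hym : StronglyMeasurable y := by
    have hH : StronglyMeasurable fun p : ℝ × ℝ =>
        ({q : ℝ × ℝ | q.2 ∈ S q.1}).indicator (fun q => G q.1 q.2) p := by
      refine StronglyMeasurable.indicator ?_ hSprod
      refine StronglyMeasurable.mul ?_ (hmeas.comp_measurable measurable_snd)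
      refine Continuous.stronglyMeasurable ?_
      continuity
    have hyeq : y = fun x => ∫ s,
        ({q : ℝ × ℝ | q.2 ∈ S q.1}).indicator (fun q => G q.1 q.2) (x, s) := by
      funext x
      show (∫ s in S x, G x s) = _
      rw [← integral_indicator (hSm x)]
      refine integral_congr_ae (ae_of_all _ fun s => ?_)
      by_cases hs : s ∈ S x <;> simp [Set.indicator_apply, hs]
    rw [hyeq]
    exact hH.integral_prod_right' (ν := (volume : Measure ℝ))
  -- L² bound
  set F : ℝ → ℝ≥0∞ := fun s => (‖f s‖₊ : ℝ≥0∞) with hF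
  have hFm : Measurable F := hmeas.measurable.nnnorm.coe_nnreal_ennreal
  have hkey : ∀ x, (‖y x‖₊ : ℝ≥0∞)
      ≤ ∫⁻ s, ENNReal.ofReal (Real.exp (-(a * |x - s|))) * F s := by
    intro x
    calc (‖y x‖₊ : ℝ≥0∞) ≤ ∫⁻ s in S x, ‖G x s‖₊ := enorm_integral_le_lintegral_enorm _
      _ = ∫⁻ s, (S x).indicator (fun s => (‖G x s‖₊ : ℝ≥0∞)) s :=
          (lintegral_indicator (hSm x) _).symm
      _ ≤ ∫⁻ s, ENNReal.ofReal (Real.exp (-(a * |x - s|))) * F s := by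
          refine lintegral_mono fun s => ?_
          by_cases hs : s ∈ S x
          · rw [Set.indicator_of_mem hs]
            rw [← enorm_eq_nnnorm, ← ofReal_norm, hnorm' x s hs, ENNReal.ofReal_mul (Real.exp_pos _).le]
            rw [ofReal_norm]
            exact le_rfl
          · rw [Set.indicator_of_notMem hs]; exact zero_le
  have hL2 : ∫⁻ x, (‖y x‖₊ : ℝ≥0∞) ^ 2
      ≤ ENNReal.ofReal (2 / a) ^ 2 * ∫⁻ s, F s ^ 2 := by
    refine le_trans (lintegral_mono fun x => pow_le_pow_left' (hkey x) 2) ?_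
    exact schur a ha F hFm fun s => ENNReal.coe_ne_top
  have h2 : ((2:ℝ≥0∞)).toReal = (2:ℝ) := by norm_num
  have hfLp : eLpNorm f 2 volume = (∫⁻ s, F s ^ 2) ^ ((1:ℝ)/2) := by
    rw [eLpNorm_eq_lintegral_rpow_enorm_toReal (by norm_num) (by norm_num), h2]
    simp only [enorm_eq_nnnorm]
    congr 1
    refine lintegral_congr fun s => ?_
    rw [← ENNReal.rpow_natCast (F s) 2]
    norm_num
    rfl
  have heLp : eLpNorm y 2 volume ≤ ENNReal.ofReal (2 / a) * eLpNorm f 2 volume := by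
    rw [eLpNorm_eq_lintegral_rpow_enorm_toReal (by norm_num) (by norm_num), hfLp, h2]
    simp only [enorm_eq_nnnorm]
    have h1 : ∫⁻ x, (‖y x‖₊ : ℝ≥0∞) ^ (2:ℝ) = ∫⁻ x, (‖y x‖₊ : ℝ≥0∞) ^ 2 := by
      refine lintegral_congr fun x => ?_
      rw [← ENNReal.rpow_natCast ((‖y x‖₊ : ℝ≥0∞)) 2]
      norm_num
    rw [h1]
    calc (∫⁻ x, (‖y x‖₊ : ℝ≥0∞) ^ 2) ^ ((1:ℝ)/2)
        ≤ (ENNReal.ofReal (2 / a) ^ 2 * ∫⁻ s, F s ^ 2) ^ ((1:ℝ)/2) :=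
          ENNReal.rpow_le_rpow hL2 (by norm_num)
      _ = ENNReal.ofReal (2 / a) * (∫⁻ s, F s ^ 2) ^ ((1:ℝ)/2) := by
          rw [ENNReal.mul_rpow_of_nonneg _ _ (by norm_num : (0:ℝ) ≤ 1/2)]
          congr 1
          rw [← ENNReal.rpow_natCast (ENNReal.ofReal (2/a)) 2, ← ENNReal.rpow_mul]
          norm_num
  refine ⟨hA, hB, ⟨hym.aestronglyMeasurable, ?_⟩, heLp⟩
  refine lt_of_le_of_lt heLp ?_
  exact ENNReal.mul_lt_top ENNReal.ofReal_lt_top hf2.2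

/-- if `φ, ψ ∈ L¹(ℝ) ∩ L²(ℝ)` then for every `z` with `Im z ≠ 0`:
(i) the integrals defining `y₁ᶻ(x)`, `y₂ᶻ(x)` converge absolutely with
`|y₁ᶻ(x)| ≤ ‖φ‖₁` and `|y₂ᶻ(x)| ≤ ‖ψ‖₁`; (ii) `y₁ᶻ, y₂ᶻ ∈ L²(ℝ)` with
`‖y₁ᶻ‖₂ ≤ (2/|Im z|)‖φ‖₂` and `‖y₂ᶻ‖₂ ≤ (2/|Im z|)‖ψ‖₂`. -/
theorem statement_0 (φ ψ : ℝ → ℂ)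
    (hφ1 : MemLp φ 1 volume) (hφ2 : MemLp φ 2 volume)
    (hψ1 : MemLp ψ 1 volume) (hψ2 : MemLp ψ 2 volume)
    (z : ℂ) (hz : z.im ≠ 0) :
    ((0 < z.im → ∀ x : ℝ,
        IntegrableOn
          (fun s => Complex.exp (Complex.I * z * ((x - s : ℝ) : ℂ)) * φ s) (Iic x) volume ∧
        IntegrableOn
          (fun s => Complex.exp (-Complex.I * z * ((x - s : ℝ) : ℂ)) * ψ s) (Ici x) volume) ∧
     (z.im < 0 → ∀ x : ℝ,
        IntegrableOn
          (fun s => Complex.exp (Complex.I * z * ((x - s : ℝ) : ℂ)) * φ s) (Ici x) volume ∧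
        IntegrableOn
          (fun s => Complex.exp (-Complex.I * z * ((x - s : ℝ) : ℂ)) * ψ s) (Iic x) volume)) ∧
    (∀ x : ℝ, ‖y₁ φ z x‖ ≤ ∫ s : ℝ, ‖φ s‖) ∧
    (∀ x : ℝ, ‖y₂ ψ z x‖ ≤ ∫ s : ℝ, ‖ψ s‖) ∧
    MemLp (y₁ φ z) 2 volume ∧
    MemLp (y₂ ψ z) 2 volume ∧
    eLpNorm (y₁ φ z) 2 volume ≤ ENNReal.ofReal (2 / |z.im|) * eLpNorm φ 2 volume ∧
    eLpNorm (y₂ ψ z) 2 volume ≤ ENNReal.ofReal (2 / |z.im|) * eLpNorm ψ 2 volume := by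
  classical
  obtain ⟨φ', hφ'm, hφe⟩ : ∃ g, StronglyMeasurable g ∧ φ =ᵐ[volume] g :=
    ⟨hφ1.1.mk φ, hφ1.1.stronglyMeasurable_mk, hφ1.1.ae_eq_mk⟩
  obtain ⟨ψ', hψ'm, hψe⟩ : ∃ g, StronglyMeasurable g ∧ ψ =ᵐ[volume] g :=
    ⟨hψ1.1.mk ψ, hψ1.1.stronglyMeasurable_mk, hψ1.1.ae_eq_mk⟩
  have hφi' : Integrable φ' volume := memLp_one_iff_integrable.mp (hφ1.ae_eq hφe)
  have hψi' : Integrable ψ' volume := memLp_one_iff_integrable.mp (hψ1.ae_eq hψe)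
  have hφ2' : MemLp φ' 2 volume := hφ2.ae_eq hφe
  have hψ2' : MemLp ψ' 2 volume := hψ2.ae_eq hψe
  have ha : (0:ℝ) < |z.im| := abs_pos.mpr hz
  have hIz : (Complex.I * z).re = -z.im := by simp [Complex.mul_re]
  have hIz' : (-Complex.I * z).re = z.im := by simp [Complex.mul_re]
  have hprodIic : MeasurableSet {p : ℝ × ℝ | p.2 ∈ Iic p.1} :=
    measurableSet_le measurable_snd measurable_fst
  have hprodIci : MeasurableSet {p : ℝ × ℝ | p.2 ∈ Ici p.1} :=
    measurableSet_le measurable_fst measurable_snd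
  have hcongrφ : ∀ (c : ℂ) (x : ℝ),
      (fun s : ℝ => Complex.exp (c * ((x - s : ℝ) : ℂ)) * φ s)
        =ᵐ[volume] (fun s : ℝ => Complex.exp (c * ((x - s : ℝ) : ℂ)) * φ' s) :=
    fun c x => hφe.mono fun s hs => by simp only []; rw [hs]
  have hcongrψ : ∀ (c : ℂ) (x : ℝ),
      (fun s : ℝ => Complex.exp (c * ((x - s : ℝ) : ℂ)) * ψ s)
        =ᵐ[volume] (fun s : ℝ => Complex.exp (c * ((x - s : ℝ) : ℂ)) * ψ' s) :=
    fun c x => hψe.mono fun s hs => by simp only []; rw [hs]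
  have hnφ : ∫ s, ‖φ' s‖ = ∫ s, ‖φ s‖ :=
    (integral_congr_ae (hφe.mono fun s hs => by rw [hs])).symm
  have hnψ : ∫ s, ‖ψ' s‖ = ∫ s, ‖ψ s‖ :=
    (integral_congr_ae (hψe.mono fun s hs => by rw [hs])).symm
  rcases lt_or_gt_of_ne hz with hneg | hpos
  · -- z.im < 0
    have ha' : |z.im| = -z.im := abs_of_neg hneg
    have m1 := master φ' hφ'm hφi' hφ2' (Complex.I * z) |z.im| ha Ici
      (fun _ => measurableSet_Ici) hprodIci
      (fun x s hs => by
        rw [hIz, ha', _root_.abs_of_nonpos (sub_nonpos.mpr hs)]; ring)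
    have m2 := master ψ' hψ'm hψi' hψ2' (-Complex.I * z) |z.im| ha Iic
      (fun _ => measurableSet_Iic) hprodIic
      (fun x s hs => by
        rw [hIz', ha', _root_.abs_of_nonneg (sub_nonneg.mpr hs)]; ring)
    have hif : ¬ (0 < z.im) := not_lt.mpr hneg.le
    have hy1 : y₁ φ z = fun x => -∫ s in Ici x,
        Complex.exp (Complex.I * z * ((x - s : ℝ) : ℂ)) * φ' s := by
      funext x
      simp only [y₁, if_neg hif]
      congr 1
      exact integral_congr_ae (ae_restrict_of_ae (hcongrφ _ x))
    have hy2 : y₂ ψ z = fun x => ∫ s in Iic x,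
        Complex.exp (-Complex.I * z * ((x - s : ℝ) : ℂ)) * ψ' s := by
      funext x
      simp only [y₂, if_neg hif]
      exact integral_congr_ae (ae_restrict_of_ae (hcongrψ _ x))
    refine ⟨⟨fun h => absurd h hif, fun _ x => ⟨?_, ?_⟩⟩, ?_, ?_, ?_, ?_, ?_, ?_⟩
    · exact (m1.1 x).congr (ae_restrict_of_ae (hcongrφ _ x).symm)
    · exact (m2.1 x).congr (ae_restrict_of_ae (hcongrψ _ x).symm)
    · intro x
      rw [hy1]
      simp only [norm_neg]
      exact (m1.2.1 x).trans (le_of_eq hnφ)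
    · intro x
      rw [hy2]
      exact (m2.2.1 x).trans (le_of_eq hnψ)
    · rw [hy1]; exact m1.2.2.1.neg
    · rw [hy2]; exact m2.2.2.1
    · rw [hy1, eLpNorm_congr_ae hφe]
      refine le_trans (le_of_eq (eLpNorm_neg _ _ _)) m1.2.2.2
    · rw [hy2, eLpNorm_congr_ae hψe]
      exact m2.2.2.2
  · -- 0 < z.im
    have ha' : |z.im| = z.im := abs_of_pos hpos
    have m1 := master φ' hφ'm hφi' hφ2' (Complex.I * z) |z.im| ha Iic
      (fun _ => measurableSet_Iic) hprodIic
      (fun x s hs => by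
        rw [hIz, ha', _root_.abs_of_nonneg (sub_nonneg.mpr hs)]; ring)
    have m2 := master ψ' hψ'm hψi' hψ2' (-Complex.I * z) |z.im| ha Ici
      (fun _ => measurableSet_Ici) hprodIci
      (fun x s hs => by
        rw [hIz', ha', _root_.abs_of_nonpos (sub_nonpos.mpr hs)]; ring)
    have hy1 : y₁ φ z = fun x => ∫ s in Iic x,
        Complex.exp (Complex.I * z * ((x - s : ℝ) : ℂ)) * φ' s := by
      funext x
      simp only [y₁, if_pos hpos]
      exact integral_congr_ae (ae_restrict_of_ae (hcongrφ _ x))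
    have hy2 : y₂ ψ z = fun x => -∫ s in Ici x,
        Complex.exp (-Complex.I * z * ((x - s : ℝ) : ℂ)) * ψ' s := by
      funext x
      simp only [y₂, if_pos hpos]
      congr 1
      exact integral_congr_ae (ae_restrict_of_ae (hcongrψ _ x))
    refine ⟨⟨fun _ x => ⟨?_, ?_⟩, fun h => absurd h (not_lt.mpr hpos.le)⟩, ?_, ?_, ?_, ?_, ?_, ?_⟩
    · exact (m1.1 x).congr (ae_restrict_of_ae (hcongrφ _ x).symm)
    · exact (m2.1 x).congr (ae_restrict_of_ae (hcongrψ _ x).symm)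
    · intro x
      rw [hy1]
      exact (m1.2.1 x).trans (le_of_eq hnφ)
    · intro x
      rw [hy2]
      simp only [norm_neg]
      exact (m2.2.1 x).trans (le_of_eq hnψ)
    · rw [hy1]; exact m1.2.2.1
    · rw [hy2]; exact m2.2.2.1.neg
    · rw [hy1, eLpNorm_congr_ae hφe]
      exact m1.2.2.2
    · rw [hy2, eLpNorm_congr_ae hψe]
      refine le_trans (le_of_eq (eLpNorm_neg _ _ _)) m2.2.2.2
end

section
/- Suppose φ, ψ ∈ L¹(ℝ). Then for each fixed x ∈ ℝ the maps z ↦ y₁ᶻ(x) and z ↦ y₂ᶻ(x) are analytic on the open upper half-plane and on the open lower half-plane and extend continuously to the closed upper and closed lower half-planes; moreover, for every z ∈ ℝ and every x ∈ ℝ, lim_{ε↓0} y₁^{z+iε}(x) − lim_{ε↓0} y₁^{z−iε}(x) = i·r₁(z)·e^{izx} and lim_{ε↓0} y₂^{z+iε}(x) − lim_{ε↓0} y₂^{z−iε}(x) = i·r₂(z)·e^{−izx}, where r₁(z) = −i ∫_ℝ φ(y) e^{−izy} dy and r₂(z) = i ∫_ℝ ψ(y) e^{izy} dy. -/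
open MeasureTheory Set Complex Filter Topology

namespace St1Aux

open Metric

noncomputable def K (u : ℝ → ℝ) (f : ℝ → ℂ) (S : Set ℝ) (z : ℂ) : ℂ :=
  ∫ s in S, Complex.exp (Complex.I * z * (u s : ℂ)) * f s

lemma norm_ker (z : ℂ) (u : ℝ) :
    ‖Complex.exp (Complex.I * z * (u : ℂ))‖ = Real.exp (-z.im * u) := by
  rw [Complex.norm_exp]
  congr 1
  simp [Complex.mul_re, Complex.mul_im]

lemma integrable_ker {f : ℝ → ℂ} {S : Set ℝ} (hS : MeasurableSet S)
    (hf : IntegrableOn f S) {u : ℝ → ℝ} (hu : Continuous u)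
    {z : ℂ} (hle : ∀ s ∈ S, -z.im * u s ≤ 0) :
    IntegrableOn (fun s => Complex.exp (Complex.I * z * (u s : ℂ)) * f s) S := by
  refine Integrable.mono' hf.norm ?_ ?_
  · exact ((Complex.continuous_exp.comp (by fun_prop)).aestronglyMeasurable).mul hf.1
  · refine (ae_restrict_iff' hS).2 (ae_of_all _ fun s hs => ?_)
    rw [norm_mul, norm_ker]
    calc Real.exp (-z.im * u s) * ‖f s‖ ≤ 1 * ‖f s‖ := by
          have : Real.exp (-z.im * u s) ≤ 1 := Real.exp_le_one_iff.2 (hle s hs)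
          exact mul_le_mul_of_nonneg_right this (norm_nonneg _)
      _ = ‖f s‖ := one_mul _

lemma t_exp_le {δ t : ℝ} (hδ : 0 < δ) : t * Real.exp (-(δ * t)) ≤ δ⁻¹ := by
  have h1 : δ * t ≤ Real.exp (δ * t) := le_trans (by linarith) (Real.add_one_le_exp (δ * t))
  rw [Real.exp_neg, ← div_eq_mul_inv, div_le_iff₀ (Real.exp_pos _)]
  have h2 : δ⁻¹ * (δ * t) = t := by field_simp
  nlinarith [mul_le_mul_of_nonneg_left h1 (le_of_lt (inv_pos.2 hδ))]

lemma upper {f : ℝ → ℂ} {S : Set ℝ} (hS : MeasurableSet S)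
    (hf : IntegrableOn f S) {u : ℝ → ℝ} (hu : Continuous u)
    (hu0 : ∀ s ∈ S, 0 ≤ u s) :
    ContinuousOn (K u f S) {z : ℂ | 0 ≤ z.im} ∧
    AnalyticOnNhd ℂ (K u f S) {z : ℂ | 0 < z.im} := by
  constructor
  · intro z₀ hz₀
    refine continuousWithinAt_of_dominated (bound := fun s => ‖f s‖)
      (Eventually.of_forall fun z =>
        ((Complex.continuous_exp.comp (by fun_prop)).aestronglyMeasurable).mul hf.1)
      ?_ hf.norm (ae_of_all _ fun s => Continuous.continuousWithinAt (by fun_prop))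
    filter_upwards [eventually_mem_nhdsWithin] with z (hz : 0 ≤ z.im)
    refine (ae_restrict_iff' hS).2 (ae_of_all _ fun s hs => ?_)
    rw [norm_mul, norm_ker]
    have h1 : Real.exp (-z.im * u s) ≤ 1 :=
      Real.exp_le_one_iff.2 (mul_nonpos_of_nonpos_of_nonneg (by linarith) (hu0 s hs))
    calc Real.exp (-z.im * u s) * ‖f s‖ ≤ 1 * ‖f s‖ :=
          mul_le_mul_of_nonneg_right h1 (norm_nonneg _)
      _ = ‖f s‖ := one_mul _
  · have hopen : IsOpen {z : ℂ | 0 < z.im} := isOpen_lt continuous_const Complex.continuous_im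
    refine DifferentiableOn.analyticOnNhd (fun z₀ hz₀ => ?_) hopen
    have hz₀ : (0:ℝ) < z₀.im := hz₀
    set δ : ℝ := z₀.im / 2 with hδdef
    have hδ : 0 < δ := half_pos hz₀
    have him : ∀ z ∈ ball z₀ δ, δ ≤ z.im := by
      intro z hz
      have := (Complex.abs_im_le_norm (z - z₀)).trans_lt (by simpa [Complex.dist_eq] using hz)
      rw [Complex.sub_im, abs_lt] at this
      simp only [hδdef] at *
      linarith [this.1]
    have key := hasDerivAt_integral_of_dominated_loc_of_deriv_le (μ := volume.restrict S)
      (F := fun z s => Complex.exp (Complex.I * z * (u s : ℂ)) * f s)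
      (F' := fun z s => Complex.exp (Complex.I * z * (u s : ℂ)) * (Complex.I * (u s : ℂ)) * f s)
      (x₀ := z₀) (bound := fun s => δ⁻¹ * ‖f s‖) (ball_mem_nhds z₀ hδ)
      (Eventually.of_forall fun z =>
        ((Complex.continuous_exp.comp (by fun_prop)).aestronglyMeasurable).mul hf.1)
      (integrable_ker hS hf hu fun s hs =>
        mul_nonpos_of_nonpos_of_nonneg (by linarith) (hu0 s hs))
      ((((Complex.continuous_exp.comp (by fun_prop)).mul (by fun_prop)).aestronglyMeasurable).mul hf.1)
      ?_ (hf.norm.const_mul _) ?_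
    · exact key.2.differentiableAt.differentiableWithinAt
    · refine (ae_restrict_iff' hS).2 (ae_of_all _ fun s hs z hz => ?_)
      rw [norm_mul, norm_mul, norm_ker, norm_mul]
      simp only [Complex.norm_I, Complex.norm_real, Real.norm_eq_abs, one_mul]
      rw [_root_.abs_of_nonneg (hu0 s hs)]
      have h1 : Real.exp (-z.im * u s) ≤ Real.exp (-(δ * u s)) := by
        apply Real.exp_le_exp.2
        have := him z hz
        nlinarith [hu0 s hs]
      have h2 : Real.exp (-z.im * u s) * u s ≤ δ⁻¹ := by
        calc Real.exp (-z.im * u s) * u s ≤ Real.exp (-(δ * u s)) * u s :=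
              mul_le_mul_of_nonneg_right h1 (hu0 s hs)
          _ = u s * Real.exp (-(δ * u s)) := mul_comm _ _
          _ ≤ δ⁻¹ := t_exp_le hδ
      exact mul_le_mul_of_nonneg_right h2 (norm_nonneg _)
    · refine ae_of_all _ fun s z _ => ?_
      have h0 : HasDerivAt (fun w : ℂ => Complex.I * w * (u s : ℂ)) (Complex.I * (u s : ℂ)) z := by
        simpa using ((hasDerivAt_id z).const_mul Complex.I).mul_const ((u s : ℂ))
      simpa [mul_comm, mul_assoc] using (h0.cexp.mul_const (f s))

lemma lower {f : ℝ → ℂ} {S : Set ℝ} (hS : MeasurableSet S)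
    (hf : IntegrableOn f S) {u : ℝ → ℝ} (hu : Continuous u)
    (hu0 : ∀ s ∈ S, u s ≤ 0) :
    ContinuousOn (K u f S) {z : ℂ | z.im ≤ 0} ∧
    AnalyticOnNhd ℂ (K u f S) {z : ℂ | z.im < 0} := by
  obtain ⟨hc, ha⟩ := upper (u := fun s => -u s) hS hf hu.neg
    (fun s hs => neg_nonneg.2 (hu0 s hs))
  have hKeq : K u f S = (K (fun s => -u s) f S) ∘ (fun z => -z) := by
    funext z
    simp only [K, Function.comp]
    refine integral_congr_ae (ae_of_all _ fun s => ?_)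
    have h : Complex.I * z * ((u s : ℝ) : ℂ) = Complex.I * (-z) * (((-u s : ℝ)) : ℂ) := by
      push_cast; ring
    dsimp only
    rw [h]
  rw [hKeq]
  constructor
  · exact hc.comp continuous_neg.continuousOn
      (fun z (hz : z.im ≤ 0) => by simp only [mem_setOf_eq, Complex.neg_im]; linarith)
  · exact ha.comp (analyticOnNhd_id.neg)
      (fun z (hz : z.im < 0) => by simp only [mem_setOf_eq, Complex.neg_im]; linarith)

end St1Aux

/-- `r₁(z) = −i ∫_ℝ φ(y) e^{−izy} dy`. -/
noncomputable def r₁ (φ : ℝ → ℂ) (z : ℂ) : ℂ :=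
  -Complex.I * ∫ y : ℝ, φ y * Complex.exp (-Complex.I * z * (y : ℂ))

/-- `r₂(z) = i ∫_ℝ ψ(y) e^{izy} dy`. -/
noncomputable def r₂ (ψ : ℝ → ℂ) (z : ℂ) : ℂ :=
  Complex.I * ∫ y : ℝ, ψ y * Complex.exp (Complex.I * z * (y : ℂ))

/-- for `φ, ψ ∈ L¹(ℝ)` and fixed `x ∈ ℝ`, the maps `z ↦ y₁ᶻ(x)`, `z ↦ y₂ᶻ(x)`
are analytic on the open upper and lower half-planes, extend continuously to the closed upper
and lower half-planes, and across the real axis they jump by `i·r₁(z)·e^{izx}` and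
`i·r₂(z)·e^{−izx}` respectively. -/
theorem statement_1 (φ ψ : ℝ → ℂ)
    (hφ : Integrable φ volume) (hψ : Integrable ψ volume) (x : ℝ) :
    AnalyticOnNhd ℂ (fun z => y₁ φ z x) {z : ℂ | 0 < z.im} ∧
    AnalyticOnNhd ℂ (fun z => y₁ φ z x) {z : ℂ | z.im < 0} ∧
    AnalyticOnNhd ℂ (fun z => y₂ ψ z x) {z : ℂ | 0 < z.im} ∧
    AnalyticOnNhd ℂ (fun z => y₂ ψ z x) {z : ℂ | z.im < 0} ∧
    (∃ F : ℂ → ℂ, ContinuousOn F {z : ℂ | 0 ≤ z.im} ∧ ∀ z : ℂ, 0 < z.im → F z = y₁ φ z x) ∧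
    (∃ F : ℂ → ℂ, ContinuousOn F {z : ℂ | z.im ≤ 0} ∧ ∀ z : ℂ, z.im < 0 → F z = y₁ φ z x) ∧
    (∃ F : ℂ → ℂ, ContinuousOn F {z : ℂ | 0 ≤ z.im} ∧ ∀ z : ℂ, 0 < z.im → F z = y₂ ψ z x) ∧
    (∃ F : ℂ → ℂ, ContinuousOn F {z : ℂ | z.im ≤ 0} ∧ ∀ z : ℂ, z.im < 0 → F z = y₂ ψ z x) ∧
    (∀ z : ℝ, ∃ Lp Lm : ℂ,
      Tendsto (fun ε : ℝ => y₁ φ ((z : ℂ) + (ε : ℂ) * Complex.I) x) (𝓝[>] 0) (𝓝 Lp) ∧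
      Tendsto (fun ε : ℝ => y₁ φ ((z : ℂ) - (ε : ℂ) * Complex.I) x) (𝓝[>] 0) (𝓝 Lm) ∧
      Lp - Lm = Complex.I * r₁ φ (z : ℂ) * Complex.exp (Complex.I * (z : ℂ) * (x : ℂ))) ∧
    (∀ z : ℝ, ∃ Lp Lm : ℂ,
      Tendsto (fun ε : ℝ => y₂ ψ ((z : ℂ) + (ε : ℂ) * Complex.I) x) (𝓝[>] 0) (𝓝 Lp) ∧
      Tendsto (fun ε : ℝ => y₂ ψ ((z : ℂ) - (ε : ℂ) * Complex.I) x) (𝓝[>] 0) (𝓝 Lm) ∧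
      Lp - Lm = Complex.I * r₂ ψ (z : ℂ) * Complex.exp (-Complex.I * (z : ℂ) * (x : ℂ))) := by
  have hIic : MeasurableSet (Iic x) := measurableSet_Iic
  have hIci : MeasurableSet (Ici x) := measurableSet_Ici
  have hu₁ : Continuous (fun s : ℝ => x - s) := by fun_prop
  have hu₂ : Continuous (fun s : ℝ => s - x) := by fun_prop
  obtain ⟨hcG₁, haG₁⟩ := St1Aux.upper hIic hφ.integrableOn hu₁
    (fun s (hs : s ≤ x) => sub_nonneg.2 hs)
  obtain ⟨hcH₁, haH₁⟩ := St1Aux.lower hIci hφ.integrableOn hu₁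
    (fun s (hs : x ≤ s) => sub_nonpos.2 hs)
  obtain ⟨hcG₂, haG₂⟩ := St1Aux.upper hIci hψ.integrableOn hu₂
    (fun s (hs : x ≤ s) => sub_nonneg.2 hs)
  obtain ⟨hcH₂, haH₂⟩ := St1Aux.lower hIic hψ.integrableOn hu₂
    (fun s (hs : s ≤ x) => sub_nonpos.2 hs)
  set G₁ := St1Aux.K (fun s => x - s) φ (Iic x) with hG₁def
  set H₁ := St1Aux.K (fun s => x - s) φ (Ici x) with hH₁def
  set G₂ := St1Aux.K (fun s => s - x) ψ (Ici x) with hG₂def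
  set H₂ := St1Aux.K (fun s => s - x) ψ (Iic x) with hH₂def
  have hopenU : IsOpen {z : ℂ | 0 < z.im} := isOpen_lt continuous_const Complex.continuous_im
  have hopenL : IsOpen {z : ℂ | z.im < 0} := isOpen_lt Complex.continuous_im continuous_const
  have hy₁pos : ∀ z : ℂ, 0 < z.im → y₁ φ z x = G₁ z := fun z hz => by
    simp only [y₁, if_pos hz]; rfl
  have hy₁neg : ∀ z : ℂ, ¬ 0 < z.im → y₁ φ z x = -(H₁ z) := fun z hz => by
    simp only [y₁, if_neg hz]; rfl
  have hker₂ : ∀ (z : ℂ) (s : ℝ),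
      Complex.exp (-Complex.I * z * ((x - s : ℝ) : ℂ)) =
        Complex.exp (Complex.I * z * ((s - x : ℝ) : ℂ)) := fun z s => by
    congr 1; push_cast; ring
  have hy₂pos : ∀ z : ℂ, 0 < z.im → y₂ ψ z x = -(G₂ z) := fun z hz => by
    simp only [y₂, if_pos hz, hker₂]; rfl
  have hy₂neg : ∀ z : ℂ, ¬ 0 < z.im → y₂ ψ z x = H₂ z := fun z hz => by
    simp only [y₂, if_neg hz, hker₂]; rfl
  -- limits of approach maps
  have himp : ∀ (z ε : ℝ), ((z:ℂ) + (ε:ℂ) * Complex.I).im = ε := by intro z ε; simp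
  have himm : ∀ (z ε : ℝ), ((z:ℂ) - (ε:ℂ) * Complex.I).im = -ε := by intro z ε; simp
  have htendU : ∀ z : ℝ, Tendsto (fun ε : ℝ => (z:ℂ) + (ε:ℂ) * Complex.I) (𝓝[>] 0)
      (𝓝[{w : ℂ | 0 ≤ w.im}] (z:ℂ)) := by
    intro z
    rw [tendsto_nhdsWithin_iff]
    constructor
    · have h : Tendsto (fun ε : ℝ => (z:ℂ) + (ε:ℂ) * Complex.I) (𝓝 0)
          (𝓝 ((z:ℂ) + ((0:ℝ):ℂ) * Complex.I)) := (Continuous.tendsto (by fun_prop) 0)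
      simpa using h.mono_left nhdsWithin_le_nhds
    · filter_upwards [self_mem_nhdsWithin] with ε (hε : ε ∈ Ioi (0:ℝ))
      simp only [mem_setOf_eq, himp]
      exact le_of_lt hε
  have htendL : ∀ z : ℝ, Tendsto (fun ε : ℝ => (z:ℂ) - (ε:ℂ) * Complex.I) (𝓝[>] 0)
      (𝓝[{w : ℂ | w.im ≤ 0}] (z:ℂ)) := by
    intro z
    rw [tendsto_nhdsWithin_iff]
    constructor
    · have h : Tendsto (fun ε : ℝ => (z:ℂ) - (ε:ℂ) * Complex.I) (𝓝 0)
          (𝓝 ((z:ℂ) - ((0:ℝ):ℂ) * Complex.I)) := (Continuous.tendsto (by fun_prop) 0)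
      simpa using h.mono_left nhdsWithin_le_nhds
    · filter_upwards [self_mem_nhdsWithin] with ε (hε : ε ∈ Ioi (0:ℝ))
      simp only [mem_setOf_eq, himm]
      linarith [mem_Ioi.1 hε]
  refine ⟨?_, ?_, ?_, ?_, ⟨G₁, hcG₁, fun z hz => (hy₁pos z hz).symm⟩,
    ⟨fun z => -(H₁ z), hcH₁.neg, fun z hz => (hy₁neg z (not_lt.2 hz.le)).symm⟩,
    ⟨fun z => -(G₂ z), hcG₂.neg, fun z hz => (hy₂pos z hz).symm⟩,
    ⟨H₂, hcH₂, fun z hz => (hy₂neg z (not_lt.2 hz.le)).symm⟩, ?_, ?_⟩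
  · intro z hz
    exact (haG₁ z hz).congr <| (hopenU.eventually_mem hz).mono fun w hw => (hy₁pos w hw).symm
  · intro z hz
    exact ((haH₁ z hz).neg).congr <| (hopenL.eventually_mem hz).mono fun w hw =>
      (hy₁neg w (not_lt.2 (le_of_lt hw))).symm
  · intro z hz
    exact ((haG₂ z hz).neg).congr <| (hopenU.eventually_mem hz).mono fun w hw =>
      (hy₂pos w hw).symm
  · intro z hz
    exact (haH₂ z hz).congr <| (hopenL.eventually_mem hz).mono fun w hw =>
      (hy₂neg w (not_lt.2 (le_of_lt hw))).symm
  · -- jump for y₁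
    intro z
    have hz0 : ((z:ℂ)).im = 0 := Complex.ofReal_im z
    refine ⟨G₁ (z:ℂ), -(H₁ (z:ℂ)), ?_, ?_, ?_⟩
    · have h := ((hcG₁ (z:ℂ) (by simp [hz0])).tendsto).comp (htendU z)
      refine Tendsto.congr' ?_ h
      filter_upwards [self_mem_nhdsWithin] with ε (hε : ε ∈ Ioi (0:ℝ))
      exact (hy₁pos _ (by rw [himp]; exact hε)).symm
    · have h := (((hcH₁ (z:ℂ) (by simp [hz0])).tendsto).comp (htendL z)).neg
      refine Tendsto.congr' ?_ h
      filter_upwards [self_mem_nhdsWithin] with ε (hε : ε ∈ Ioi (0:ℝ))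
      refine (hy₁neg _ ?_).symm
      rw [not_lt, himm]
      linarith [mem_Ioi.1 hε]
    · rw [sub_neg_eq_add]
      have hInt1 : IntegrableOn
          (fun s => Complex.exp (Complex.I * (z:ℂ) * ((x - s : ℝ):ℂ)) * φ s) (Iic x) :=
        St1Aux.integrable_ker hIic hφ.integrableOn hu₁ (fun s _ => by rw [hz0]; simp)
      have hInt2 : IntegrableOn
          (fun s => Complex.exp (Complex.I * (z:ℂ) * ((x - s : ℝ):ℂ)) * φ s) (Ici x) :=
        St1Aux.integrable_ker hIci hφ.integrableOn hu₁ (fun s _ => by rw [hz0]; simp)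
      have hsplit : G₁ (z:ℂ) + H₁ (z:ℂ)
          = ∫ s : ℝ, Complex.exp (Complex.I * (z:ℂ) * ((x - s : ℝ):ℂ)) * φ s := by
        rw [hG₁def, hH₁def]
        simp only [St1Aux.K]
        rw [integral_Iic_eq_integral_Iio]
        exact intervalIntegral.integral_Iio_add_Ici (hInt1.mono_set Iio_subset_Iic_self) hInt2
      rw [hsplit]
      have hptw : ∀ s : ℝ, Complex.exp (Complex.I * (z:ℂ) * ((x - s : ℝ):ℂ)) * φ s
          = (φ s * Complex.exp (-Complex.I * (z:ℂ) * (s:ℂ)))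
              * Complex.exp (Complex.I * (z:ℂ) * (x:ℂ)) := by
        intro s
        rw [show Complex.I * (z:ℂ) * ((x - s : ℝ):ℂ)
            = -Complex.I * (z:ℂ) * (s:ℂ) + Complex.I * (z:ℂ) * (x:ℂ) by push_cast; ring,
          Complex.exp_add]
        ring
      have hre : (∫ s : ℝ, Complex.exp (Complex.I * (z:ℂ) * ((x - s : ℝ):ℂ)) * φ s)
          = (∫ s : ℝ, φ s * Complex.exp (-Complex.I * (z:ℂ) * (s:ℂ)))
              * Complex.exp (Complex.I * (z:ℂ) * (x:ℂ)) := by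
        rw [← integral_mul_const]
        exact integral_congr_ae (ae_of_all _ fun s => hptw s)
      rw [hre, r₁]
      set T := ∫ s : ℝ, φ s * Complex.exp (-Complex.I * (z:ℂ) * (s:ℂ)) with hT
      rw [show Complex.I * (-Complex.I * T) = -(Complex.I * Complex.I) * T by ring,
        Complex.I_mul_I, neg_neg, one_mul]
  · -- jump for y₂
    intro z
    have hz0 : ((z:ℂ)).im = 0 := Complex.ofReal_im z
    refine ⟨-(G₂ (z:ℂ)), H₂ (z:ℂ), ?_, ?_, ?_⟩
    · have h := (((hcG₂ (z:ℂ) (by simp [hz0])).tendsto).comp (htendU z)).neg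
      refine Tendsto.congr' ?_ h
      filter_upwards [self_mem_nhdsWithin] with ε (hε : ε ∈ Ioi (0:ℝ))
      exact (hy₂pos _ (by rw [himp]; exact hε)).symm
    · have h := ((hcH₂ (z:ℂ) (by simp [hz0])).tendsto).comp (htendL z)
      refine Tendsto.congr' ?_ h
      filter_upwards [self_mem_nhdsWithin] with ε (hε : ε ∈ Ioi (0:ℝ))
      refine (hy₂neg _ ?_).symm
      rw [not_lt, himm]
      linarith [mem_Ioi.1 hε]
    · rw [show -(G₂ (z:ℂ)) - H₂ (z:ℂ) = -(H₂ (z:ℂ) + G₂ (z:ℂ)) by ring]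
      have hInt1 : IntegrableOn
          (fun s => Complex.exp (Complex.I * (z:ℂ) * ((s - x : ℝ):ℂ)) * ψ s) (Iic x) :=
        St1Aux.integrable_ker hIic hψ.integrableOn hu₂ (fun s _ => by rw [hz0]; simp)
      have hInt2 : IntegrableOn
          (fun s => Complex.exp (Complex.I * (z:ℂ) * ((s - x : ℝ):ℂ)) * ψ s) (Ici x) :=
        St1Aux.integrable_ker hIci hψ.integrableOn hu₂ (fun s _ => by rw [hz0]; simp)
      have hsplit : H₂ (z:ℂ) + G₂ (z:ℂ)
          = ∫ s : ℝ, Complex.exp (Complex.I * (z:ℂ) * ((s - x : ℝ):ℂ)) * ψ s := by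
        rw [hG₂def, hH₂def]
        simp only [St1Aux.K]
        rw [integral_Iic_eq_integral_Iio]
        exact intervalIntegral.integral_Iio_add_Ici (hInt1.mono_set Iio_subset_Iic_self) hInt2
      rw [hsplit]
      have hptw : ∀ s : ℝ, Complex.exp (Complex.I * (z:ℂ) * ((s - x : ℝ):ℂ)) * ψ s
          = (ψ s * Complex.exp (Complex.I * (z:ℂ) * (s:ℂ)))
              * Complex.exp (-Complex.I * (z:ℂ) * (x:ℂ)) := by
        intro s
        rw [show Complex.I * (z:ℂ) * ((s - x : ℝ):ℂ)
            = Complex.I * (z:ℂ) * (s:ℂ) + -Complex.I * (z:ℂ) * (x:ℂ) by push_cast; ring,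
          Complex.exp_add]
        ring
      have hre : (∫ s : ℝ, Complex.exp (Complex.I * (z:ℂ) * ((s - x : ℝ):ℂ)) * ψ s)
          = (∫ s : ℝ, ψ s * Complex.exp (Complex.I * (z:ℂ) * (s:ℂ)))
              * Complex.exp (-Complex.I * (z:ℂ) * (x:ℂ)) := by
        rw [← integral_mul_const]
        exact integral_congr_ae (ae_of_all _ fun s => hptw s)
      rw [hre, r₂]
      set T := ∫ s : ℝ, ψ s * Complex.exp (Complex.I * (z:ℂ) * (s:ℂ)) with hT
      rw [show Complex.I * (Complex.I * T) = (Complex.I * Complex.I) * T by ring,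
        Complex.I_mul_I]
      ring
end

section
/- Suppose φ, ψ ∈ L¹∘(0,∞) ∩ L²(0,∞). Then for every z ∈ ℂ with Re z ≠ 1/2: (i) the integrals defining y₁ᶻ(x) and y₂ᶻ(x) converge absolutely with |y₁ᶻ(x)| ≤ ‖φ‖_{L¹∘}·x^{−1/2} and |y₂ᶻ(x)| ≤ ‖ψ‖_{L¹∘}·x^{−1/2} for all x > 0; (ii) y₁ᶻ and y₂ᶻ belong to L²(0,∞), with ‖y₁ᶻ‖_{L²(0,∞)} ≤ (2/|Re z − 1/2|)·‖φ‖_{L²(0,∞)} and ‖y₂ᶻ‖_{L²(0,∞)} ≤ (2/|Re z − 1/2|)·‖ψ‖_{L²(0,∞)}. -/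
open MeasureTheory Set Complex Filter Topology

/-- `f ∈ L¹∘(0,∞)`: `∫_0^∞ |f(x)| x^{−1/2} dx < ∞`. -/
def MemL1c (f : ℝ → ℂ) : Prop :=
  IntegrableOn (fun x => f x / ((Real.sqrt x : ℝ) : ℂ)) (Ioi 0) volume

/-- `‖f‖_{L¹∘} = ∫_0^∞ |f(x)| x^{−1/2} dx`. -/
noncomputable def l1cNorm (f : ℝ → ℂ) : ℝ :=
  ∫ x in Ioi (0:ℝ), ‖f x‖ / Real.sqrt x

open scoped ENNReal

lemma lint_Ioi_rpow {c x : ℝ} (hc : c < -1) (hx : 0 < x) :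
    ∫⁻ s in Ioi x, ENNReal.ofReal (s ^ c) = ENNReal.ofReal (x ^ (c + 1) / (-(c + 1))) := by
  rw [← ofReal_integral_eq_lintegral_ofReal (integrableOn_Ioi_rpow_of_lt hc hx)
      ((ae_restrict_mem measurableSet_Ioi).mono fun s hs => Real.rpow_nonneg (hx.trans hs).le c),
    integral_Ioi_rpow_of_lt hc hx]
  rw [div_neg, neg_div]

lemma lint_Ioo_rpow {c s : ℝ} (hc : -1 < c) (hs : 0 < s) :
    ∫⁻ x in Ioo 0 s, ENNReal.ofReal (x ^ c) = ENNReal.ofReal (s ^ (c + 1) / (c + 1)) := by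
  have hInt : IntegrableOn (fun x : ℝ => x ^ c) (Ioo 0 s) :=
    ((intervalIntegral.intervalIntegrable_rpow' hc (a := 0) (b := s)).1).mono_set
      Ioo_subset_Ioc_self
  rw [← ofReal_integral_eq_lintegral_ofReal hInt
      ((ae_restrict_mem measurableSet_Ioo).mono fun x hx => Real.rpow_nonneg hx.1.le c)]
  congr 1
  rw [← integral_Ioc_eq_integral_Ioo, ← intervalIntegral.integral_of_le hs.le,
    integral_rpow (Or.inl hc), Real.zero_rpow (by linarith)]
  ring

lemma lint_Ioi_eq_indicator {x : ℝ} (hx : 0 < x) (h : ℝ → ℝ≥0∞) :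
    ∫⁻ s in Ioi x, h s = ∫⁻ s in Ioi (0:ℝ), (Ioi x).indicator h s := by
  rw [lintegral_indicator measurableSet_Ioi, Measure.restrict_restrict measurableSet_Ioi,
    inter_eq_left.mpr (Ioi_subset_Ioi hx.le)]

lemma hardy_tail {t ε : ℝ} (hε : 0 < ε) (ht : t = ε - 1/2) {g : ℝ → ℝ≥0∞} (hg : Measurable g) :
    ∫⁻ x in Ioi (0:ℝ),
        (ENNReal.ofReal (x ^ t) * ∫⁻ s in Ioi x, ENNReal.ofReal (s ^ (-t - 1)) * g s) ^ (2:ℝ)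
      ≤ ENNReal.ofReal (1 / ε) ^ (2:ℝ) * ∫⁻ s in Ioi (0:ℝ), g s ^ (2:ℝ) := by
  have h2 : Real.HolderConjugate 2 2 := Real.HolderConjugate.two_two
  set B : ℝ → ℝ≥0∞ := fun x => ∫⁻ s in Ioi x, ENNReal.ofReal (s ^ (-ε)) * g s ^ (2:ℝ) with hB
  have key : ∀ x ∈ Ioi (0:ℝ),
      (ENNReal.ofReal (x ^ t) * ∫⁻ s in Ioi x, ENNReal.ofReal (s ^ (-t - 1)) * g s) ^ (2:ℝ)
        ≤ ENNReal.ofReal (1 / ε) * (ENNReal.ofReal (x ^ (ε - 1)) * B x) := by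
    intro x hx
    rw [mem_Ioi] at hx
    set f₁ : ℝ → ℝ≥0∞ := fun s => ENNReal.ofReal (s ^ (-(1 + ε) / 2)) with hf₁
    set f₂ : ℝ → ℝ≥0∞ := fun s => ENNReal.ofReal (s ^ (-ε / 2)) * g s with hf₂
    have hsplit : ∫⁻ s in Ioi x, ENNReal.ofReal (s ^ (-t - 1)) * g s
        = ∫⁻ s in Ioi x, (f₁ * f₂) s := by
      refine setLIntegral_congr_fun measurableSet_Ioi (fun s hs => ?_)
      have hs0 : (0:ℝ) < s := hx.trans hs
      have he : (-t - 1 : ℝ) = -(1 + ε) / 2 + -ε / 2 := by rw [ht]; ring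
      simp only [hf₁, hf₂, Pi.mul_apply]
      rw [he, Real.rpow_add hs0, ENNReal.ofReal_mul (Real.rpow_nonneg hs0.le _), mul_assoc]
    have hf₁m : Measurable f₁ := ENNReal.measurable_ofReal.comp (measurable_id.pow_const _)
    have hf₂m : Measurable f₂ :=
      (ENNReal.measurable_ofReal.comp (measurable_id.pow_const _)).mul hg
    have hCS := ENNReal.lintegral_mul_le_Lp_mul_Lq (volume.restrict (Ioi x)) h2
      hf₁m.aemeasurable hf₂m.aemeasurable
    have hA : ∫⁻ s in Ioi x, f₁ s ^ (2:ℝ) = ENNReal.ofReal (x ^ (-ε) / ε) := by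
      have h1 : ∫⁻ s in Ioi x, f₁ s ^ (2:ℝ) = ∫⁻ s in Ioi x, ENNReal.ofReal (s ^ (-(1 + ε))) := by
        refine setLIntegral_congr_fun measurableSet_Ioi (fun s hs => ?_)
        have hs0 : (0:ℝ) < s := hx.trans hs
        rw [hf₁, ENNReal.ofReal_rpow_of_nonneg (Real.rpow_nonneg hs0.le _) (by norm_num : (0:ℝ) ≤ 2),
          ← Real.rpow_mul hs0.le]
        norm_num
      rw [h1, lint_Ioi_rpow (by linarith) hx, show (-(1 + ε) + 1 : ℝ) = -ε by ring, neg_neg]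
    have hBeq : ∫⁻ s in Ioi x, f₂ s ^ (2:ℝ) = B x := by
      refine setLIntegral_congr_fun measurableSet_Ioi (fun s hs => ?_)
      have hs0 : (0:ℝ) < s := hx.trans hs
      rw [hf₂, ENNReal.mul_rpow_of_nonneg _ _ (by norm_num : (0:ℝ) ≤ 2),
        ENNReal.ofReal_rpow_of_nonneg (Real.rpow_nonneg hs0.le _) (by norm_num : (0:ℝ) ≤ 2),
        ← Real.rpow_mul hs0.le]
      norm_num
    calc (ENNReal.ofReal (x ^ t) * ∫⁻ s in Ioi x, ENNReal.ofReal (s ^ (-t - 1)) * g s) ^ (2:ℝ)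
        ≤ (ENNReal.ofReal (x ^ t) *
            ((∫⁻ s in Ioi x, f₁ s ^ (2:ℝ)) ^ (1/2 : ℝ) * (∫⁻ s in Ioi x, f₂ s ^ (2:ℝ)) ^ (1/2 : ℝ))) ^ (2:ℝ) := by
          rw [hsplit]
          gcongr
      _ = ENNReal.ofReal (x ^ t) ^ (2:ℝ) *
            ((∫⁻ s in Ioi x, f₁ s ^ (2:ℝ)) * (∫⁻ s in Ioi x, f₂ s ^ (2:ℝ))) := by
          rw [ENNReal.mul_rpow_of_nonneg _ _ (by norm_num : (0:ℝ) ≤ 2),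
            ENNReal.mul_rpow_of_nonneg _ _ (by norm_num : (0:ℝ) ≤ 2),
            ← ENNReal.rpow_mul, ← ENNReal.rpow_mul]
          norm_num
      _ = ENNReal.ofReal (x ^ t * x ^ t * (x ^ (-ε) / ε)) * B x := by
          rw [hA, hBeq, show ((2:ℝ)) = ((2:ℕ):ℝ) by norm_num, ENNReal.rpow_natCast, sq,
            ← ENNReal.ofReal_mul (Real.rpow_nonneg hx.le _), ← mul_assoc,
            ← ENNReal.ofReal_mul (mul_nonneg (Real.rpow_nonneg hx.le _) (Real.rpow_nonneg hx.le _))]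
      _ = ENNReal.ofReal (1 / ε) * (ENNReal.ofReal (x ^ (ε - 1)) * B x) := by
          rw [← mul_assoc, ← ENNReal.ofReal_mul (by positivity)]
          have hre : x ^ t * x ^ t * (x ^ (-ε) / ε) = 1 / ε * x ^ (ε - 1) := by
            rw [← Real.rpow_add hx, ← mul_div_assoc, ← Real.rpow_add hx,
              show (t + t + -ε : ℝ) = ε - 1 by rw [ht]; ring]
            ring
          rw [hre]
  have tonelli : ∫⁻ x in Ioi (0:ℝ), ENNReal.ofReal (x ^ (ε - 1)) * B x
      = ENNReal.ofReal (1 / ε) * ∫⁻ s in Ioi (0:ℝ), g s ^ (2:ℝ) := by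
    set F : ℝ × ℝ → ℝ≥0∞ := fun p =>
      ({q : ℝ × ℝ | q.1 < q.2}).indicator
        (fun q => ENNReal.ofReal (q.1 ^ (ε - 1)) * (ENNReal.ofReal (q.2 ^ (-ε)) * g q.2 ^ (2:ℝ))) p
      with hF
    have hFm : Measurable F := by
      refine Measurable.indicator ?_ (measurableSet_lt measurable_fst measurable_snd)
      exact ((ENNReal.measurable_ofReal.comp (measurable_fst.pow_const _))).mul
        (((ENNReal.measurable_ofReal.comp (measurable_snd.pow_const _))).mul
          ((hg.comp measurable_snd).pow_const _))
    have step1 : ∀ x ∈ Ioi (0:ℝ), ENNReal.ofReal (x ^ (ε - 1)) * B x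
        = ∫⁻ s in Ioi (0:ℝ), F (x, s) := by
      intro x hx
      rw [mem_Ioi] at hx
      rw [hB]
      rw [← lintegral_const_mul' _ _ ENNReal.ofReal_ne_top, lint_Ioi_eq_indicator hx]
      refine lintegral_congr fun s => ?_
      by_cases hxs : x < s <;> simp [hF, Set.indicator_apply, hxs]
    have step3 : ∀ s ∈ Ioi (0:ℝ),
        ∫⁻ x in Ioi (0:ℝ), F (x, s) = ENNReal.ofReal (1 / ε) * g s ^ (2:ℝ) := by
      intro s hs
      rw [mem_Ioi] at hs
      have hFe : ∀ x : ℝ, F (x, s)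
          = (Iio s).indicator (fun x => ENNReal.ofReal (x ^ (ε - 1))) x
              * (ENNReal.ofReal (s ^ (-ε)) * g s ^ (2:ℝ)) := by
        intro x
        by_cases hxs : x < s <;> simp [hF, Set.indicator_apply, hxs]
      calc ∫⁻ x in Ioi (0:ℝ), F (x, s)
          = ∫⁻ x in Ioi (0:ℝ), (Iio s).indicator (fun x => ENNReal.ofReal (x ^ (ε - 1))) x
              * (ENNReal.ofReal (s ^ (-ε)) * g s ^ (2:ℝ)) := lintegral_congr fun x => hFe x
        _ = (∫⁻ x in Ioi (0:ℝ), (Iio s).indicator (fun x => ENNReal.ofReal (x ^ (ε - 1))) x)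
              * (ENNReal.ofReal (s ^ (-ε)) * g s ^ (2:ℝ)) := by
            exact lintegral_mul_const _ ((ENNReal.measurable_ofReal.comp
              (measurable_id.pow_const _)).indicator measurableSet_Iio)
        _ = ENNReal.ofReal (s ^ ε / ε) * (ENNReal.ofReal (s ^ (-ε)) * g s ^ (2:ℝ)) := by
            rw [lintegral_indicator measurableSet_Iio, Measure.restrict_restrict measurableSet_Iio,
              Set.Iio_inter_Ioi, lint_Ioo_rpow (by linarith) hs,
              show (ε - 1 + 1 : ℝ) = ε by ring]
        _ = ENNReal.ofReal (1 / ε) * g s ^ (2:ℝ) := by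
            rw [← mul_assoc, ← ENNReal.ofReal_mul (by positivity)]
            congr 2
            rw [div_mul_eq_mul_div, ← Real.rpow_add hs, add_neg_cancel, Real.rpow_zero]
    calc ∫⁻ x in Ioi (0:ℝ), ENNReal.ofReal (x ^ (ε - 1)) * B x
        = ∫⁻ x in Ioi (0:ℝ), ∫⁻ s in Ioi (0:ℝ), F (x, s) :=
          setLIntegral_congr_fun measurableSet_Ioi step1
      _ = ∫⁻ s in Ioi (0:ℝ), ∫⁻ x in Ioi (0:ℝ), F (x, s) :=
          lintegral_lintegral_swap hFm.aemeasurable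
      _ = ∫⁻ s in Ioi (0:ℝ), ENNReal.ofReal (1 / ε) * g s ^ (2:ℝ) :=
          setLIntegral_congr_fun measurableSet_Ioi step3
      _ = ENNReal.ofReal (1 / ε) * ∫⁻ s in Ioi (0:ℝ), g s ^ (2:ℝ) :=
          lintegral_const_mul' _ _ ENNReal.ofReal_ne_top
  calc ∫⁻ x in Ioi (0:ℝ),
        (ENNReal.ofReal (x ^ t) * ∫⁻ s in Ioi x, ENNReal.ofReal (s ^ (-t - 1)) * g s) ^ (2:ℝ)
      ≤ ∫⁻ x in Ioi (0:ℝ), ENNReal.ofReal (1 / ε) * (ENNReal.ofReal (x ^ (ε - 1)) * B x) :=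
        setLIntegral_mono' measurableSet_Ioi key
    _ = ENNReal.ofReal (1 / ε) * ∫⁻ x in Ioi (0:ℝ), ENNReal.ofReal (x ^ (ε - 1)) * B x :=
        lintegral_const_mul' _ _ ENNReal.ofReal_ne_top
    _ ≤ ENNReal.ofReal (1 / ε) * (ENNReal.ofReal (1 / ε) * ∫⁻ s in Ioi (0:ℝ), g s ^ (2:ℝ)) :=
        mul_le_mul_right tonelli.le _
    _ = ENNReal.ofReal (1 / ε) ^ (2:ℝ) * ∫⁻ s in Ioi (0:ℝ), g s ^ (2:ℝ) := by
        rw [← mul_assoc, show ((2:ℝ)) = ((2:ℕ):ℝ) by norm_num, ENNReal.rpow_natCast, sq]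

lemma lint_Ioo_eq_indicator {x : ℝ} (hx : 0 < x) (h : ℝ → ℝ≥0∞) :
    ∫⁻ s in Ioo 0 x, h s = ∫⁻ s in Ioi (0:ℝ), (Iio x).indicator h s := by
  rw [lintegral_indicator measurableSet_Iio, Measure.restrict_restrict measurableSet_Iio,
    Set.Iio_inter_Ioi]

lemma hardy_head {t ε : ℝ} (hε : 0 < ε) (ht : t = -ε - 1/2) {g : ℝ → ℝ≥0∞} (hg : Measurable g) :
    ∫⁻ x in Ioi (0:ℝ),
        (ENNReal.ofReal (x ^ t) * ∫⁻ s in Ioo 0 x, ENNReal.ofReal (s ^ (-t - 1)) * g s) ^ (2:ℝ)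
      ≤ ENNReal.ofReal (1 / ε) ^ (2:ℝ) * ∫⁻ s in Ioi (0:ℝ), g s ^ (2:ℝ) := by
  have h2 : Real.HolderConjugate 2 2 := Real.HolderConjugate.two_two
  set B : ℝ → ℝ≥0∞ := fun x => ∫⁻ s in Ioo 0 x, ENNReal.ofReal (s ^ ε) * g s ^ (2:ℝ) with hB
  have key : ∀ x ∈ Ioi (0:ℝ),
      (ENNReal.ofReal (x ^ t) * ∫⁻ s in Ioo 0 x, ENNReal.ofReal (s ^ (-t - 1)) * g s) ^ (2:ℝ)
        ≤ ENNReal.ofReal (1 / ε) * (ENNReal.ofReal (x ^ (-ε - 1)) * B x) := by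
    intro x hx
    rw [mem_Ioi] at hx
    set f₁ : ℝ → ℝ≥0∞ := fun s => ENNReal.ofReal (s ^ ((ε - 1) / 2)) with hf₁
    set f₂ : ℝ → ℝ≥0∞ := fun s => ENNReal.ofReal (s ^ (ε / 2)) * g s with hf₂
    have hsplit : ∫⁻ s in Ioo 0 x, ENNReal.ofReal (s ^ (-t - 1)) * g s
        = ∫⁻ s in Ioo 0 x, (f₁ * f₂) s := by
      refine setLIntegral_congr_fun measurableSet_Ioo (fun s hs => ?_)
      have hs0 : (0:ℝ) < s := hs.1
      have he : (-t - 1 : ℝ) = (ε - 1) / 2 + ε / 2 := by rw [ht]; ring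
      simp only [hf₁, hf₂, Pi.mul_apply]
      rw [he, Real.rpow_add hs0, ENNReal.ofReal_mul (Real.rpow_nonneg hs0.le _), mul_assoc]
    have hf₁m : Measurable f₁ := ENNReal.measurable_ofReal.comp (measurable_id.pow_const _)
    have hf₂m : Measurable f₂ :=
      (ENNReal.measurable_ofReal.comp (measurable_id.pow_const _)).mul hg
    have hCS := ENNReal.lintegral_mul_le_Lp_mul_Lq (volume.restrict (Ioo 0 x)) h2
      hf₁m.aemeasurable hf₂m.aemeasurable
    have hA : ∫⁻ s in Ioo 0 x, f₁ s ^ (2:ℝ) = ENNReal.ofReal (x ^ ε / ε) := by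
      have h1 : ∫⁻ s in Ioo 0 x, f₁ s ^ (2:ℝ) = ∫⁻ s in Ioo 0 x, ENNReal.ofReal (s ^ (ε - 1)) := by
        refine setLIntegral_congr_fun measurableSet_Ioo (fun s hs => ?_)
        have hs0 : (0:ℝ) < s := hs.1
        rw [hf₁, ENNReal.ofReal_rpow_of_nonneg (Real.rpow_nonneg hs0.le _) (by norm_num : (0:ℝ) ≤ 2),
          ← Real.rpow_mul hs0.le]
        norm_num
      rw [h1, lint_Ioo_rpow (by linarith) hx, show (ε - 1 + 1 : ℝ) = ε by ring]
    have hBeq : ∫⁻ s in Ioo 0 x, f₂ s ^ (2:ℝ) = B x := by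
      refine setLIntegral_congr_fun measurableSet_Ioo (fun s hs => ?_)
      have hs0 : (0:ℝ) < s := hs.1
      rw [hf₂, ENNReal.mul_rpow_of_nonneg _ _ (by norm_num : (0:ℝ) ≤ 2),
        ENNReal.ofReal_rpow_of_nonneg (Real.rpow_nonneg hs0.le _) (by norm_num : (0:ℝ) ≤ 2),
        ← Real.rpow_mul hs0.le]
      norm_num
    calc (ENNReal.ofReal (x ^ t) * ∫⁻ s in Ioo 0 x, ENNReal.ofReal (s ^ (-t - 1)) * g s) ^ (2:ℝ)
        ≤ (ENNReal.ofReal (x ^ t) *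
            ((∫⁻ s in Ioo 0 x, f₁ s ^ (2:ℝ)) ^ (1/2 : ℝ) * (∫⁻ s in Ioo 0 x, f₂ s ^ (2:ℝ)) ^ (1/2 : ℝ))) ^ (2:ℝ) := by
          rw [hsplit]
          gcongr
      _ = ENNReal.ofReal (x ^ t) ^ (2:ℝ) *
            ((∫⁻ s in Ioo 0 x, f₁ s ^ (2:ℝ)) * (∫⁻ s in Ioo 0 x, f₂ s ^ (2:ℝ))) := by
          rw [ENNReal.mul_rpow_of_nonneg _ _ (by norm_num : (0:ℝ) ≤ 2),
            ENNReal.mul_rpow_of_nonneg _ _ (by norm_num : (0:ℝ) ≤ 2),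
            ← ENNReal.rpow_mul, ← ENNReal.rpow_mul]
          norm_num
      _ = ENNReal.ofReal (x ^ t * x ^ t * (x ^ ε / ε)) * B x := by
          rw [hA, hBeq, show ((2:ℝ)) = ((2:ℕ):ℝ) by norm_num, ENNReal.rpow_natCast, sq,
            ← ENNReal.ofReal_mul (Real.rpow_nonneg hx.le _), ← mul_assoc,
            ← ENNReal.ofReal_mul (mul_nonneg (Real.rpow_nonneg hx.le _) (Real.rpow_nonneg hx.le _))]
      _ = ENNReal.ofReal (1 / ε) * (ENNReal.ofReal (x ^ (-ε - 1)) * B x) := by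
          rw [← mul_assoc, ← ENNReal.ofReal_mul (by positivity)]
          have hre : x ^ t * x ^ t * (x ^ ε / ε) = 1 / ε * x ^ (-ε - 1) := by
            rw [← Real.rpow_add hx, ← mul_div_assoc, ← Real.rpow_add hx,
              show (t + t + ε : ℝ) = -ε - 1 by rw [ht]; ring]
            ring
          rw [hre]
  have tonelli : ∫⁻ x in Ioi (0:ℝ), ENNReal.ofReal (x ^ (-ε - 1)) * B x
      = ENNReal.ofReal (1 / ε) * ∫⁻ s in Ioi (0:ℝ), g s ^ (2:ℝ) := by
    set F : ℝ × ℝ → ℝ≥0∞ := fun p =>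
      ({q : ℝ × ℝ | q.2 < q.1}).indicator
        (fun q => ENNReal.ofReal (q.1 ^ (-ε - 1)) * (ENNReal.ofReal (q.2 ^ ε) * g q.2 ^ (2:ℝ))) p
      with hF
    have hFm : Measurable F := by
      refine Measurable.indicator ?_ (measurableSet_lt measurable_snd measurable_fst)
      exact ((ENNReal.measurable_ofReal.comp (measurable_fst.pow_const _))).mul
        (((ENNReal.measurable_ofReal.comp (measurable_snd.pow_const _))).mul
          ((hg.comp measurable_snd).pow_const _))
    have step1 : ∀ x ∈ Ioi (0:ℝ), ENNReal.ofReal (x ^ (-ε - 1)) * B x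
        = ∫⁻ s in Ioi (0:ℝ), F (x, s) := by
      intro x hx
      rw [mem_Ioi] at hx
      rw [hB]
      rw [← lintegral_const_mul' _ _ ENNReal.ofReal_ne_top, lint_Ioo_eq_indicator hx]
      refine lintegral_congr fun s => ?_
      by_cases hxs : s < x <;> simp [hF, Set.indicator_apply, hxs]
    have step3 : ∀ s ∈ Ioi (0:ℝ),
        ∫⁻ x in Ioi (0:ℝ), F (x, s) = ENNReal.ofReal (1 / ε) * g s ^ (2:ℝ) := by
      intro s hs
      rw [mem_Ioi] at hs
      have hFe : ∀ x : ℝ, F (x, s)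
          = (Ioi s).indicator (fun x => ENNReal.ofReal (x ^ (-ε - 1))) x
              * (ENNReal.ofReal (s ^ ε) * g s ^ (2:ℝ)) := by
        intro x
        by_cases hxs : s < x <;> simp [hF, Set.indicator_apply, hxs]
      calc ∫⁻ x in Ioi (0:ℝ), F (x, s)
          = ∫⁻ x in Ioi (0:ℝ), (Ioi s).indicator (fun x => ENNReal.ofReal (x ^ (-ε - 1))) x
              * (ENNReal.ofReal (s ^ ε) * g s ^ (2:ℝ)) := lintegral_congr fun x => hFe x
        _ = (∫⁻ x in Ioi (0:ℝ), (Ioi s).indicator (fun x => ENNReal.ofReal (x ^ (-ε - 1))) x)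
              * (ENNReal.ofReal (s ^ ε) * g s ^ (2:ℝ)) := by
            exact lintegral_mul_const _ ((ENNReal.measurable_ofReal.comp
              (measurable_id.pow_const _)).indicator measurableSet_Ioi)
        _ = ENNReal.ofReal (s ^ (-ε) / ε) * (ENNReal.ofReal (s ^ ε) * g s ^ (2:ℝ)) := by
            rw [← lint_Ioi_eq_indicator hs, lint_Ioi_rpow (by linarith) hs,
              show (-ε - 1 + 1 : ℝ) = -ε by ring, neg_neg]
        _ = ENNReal.ofReal (1 / ε) * g s ^ (2:ℝ) := by
            rw [← mul_assoc, ← ENNReal.ofReal_mul (by positivity)]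
            congr 2
            rw [div_mul_eq_mul_div, ← Real.rpow_add hs, neg_add_cancel, Real.rpow_zero]
    calc ∫⁻ x in Ioi (0:ℝ), ENNReal.ofReal (x ^ (-ε - 1)) * B x
        = ∫⁻ x in Ioi (0:ℝ), ∫⁻ s in Ioi (0:ℝ), F (x, s) :=
          setLIntegral_congr_fun measurableSet_Ioi step1
      _ = ∫⁻ s in Ioi (0:ℝ), ∫⁻ x in Ioi (0:ℝ), F (x, s) :=
          lintegral_lintegral_swap hFm.aemeasurable
      _ = ∫⁻ s in Ioi (0:ℝ), ENNReal.ofReal (1 / ε) * g s ^ (2:ℝ) :=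
          setLIntegral_congr_fun measurableSet_Ioi step3
      _ = ENNReal.ofReal (1 / ε) * ∫⁻ s in Ioi (0:ℝ), g s ^ (2:ℝ) :=
          lintegral_const_mul' _ _ ENNReal.ofReal_ne_top
  calc ∫⁻ x in Ioi (0:ℝ),
        (ENNReal.ofReal (x ^ t) * ∫⁻ s in Ioo 0 x, ENNReal.ofReal (s ^ (-t - 1)) * g s) ^ (2:ℝ)
      ≤ ∫⁻ x in Ioi (0:ℝ), ENNReal.ofReal (1 / ε) * (ENNReal.ofReal (x ^ (-ε - 1)) * B x) :=
        setLIntegral_mono' measurableSet_Ioi key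
    _ = ENNReal.ofReal (1 / ε) * ∫⁻ x in Ioi (0:ℝ), ENNReal.ofReal (x ^ (-ε - 1)) * B x :=
        lintegral_const_mul' _ _ ENNReal.ofReal_ne_top
    _ ≤ ENNReal.ofReal (1 / ε) * (ENNReal.ofReal (1 / ε) * ∫⁻ s in Ioi (0:ℝ), g s ^ (2:ℝ)) :=
        mul_le_mul_right tonelli.le _
    _ = ENNReal.ofReal (1 / ε) ^ (2:ℝ) * ∫⁻ s in Ioi (0:ℝ), g s ^ (2:ℝ) := by
        rw [← mul_assoc, show ((2:ℝ)) = ((2:ℕ):ℝ) by norm_num, ENNReal.rpow_natCast, sq]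


lemma norm_kernel (w : ℂ) (φ : ℝ → ℂ) {x s : ℝ} (hx : 0 < x) (hs : 0 < s) :
    ‖((x / s : ℝ) : ℂ) ^ w * φ s / (s : ℂ)‖ = x ^ w.re * (s ^ (-w.re - 1) * ‖φ s‖) := by
  have hds : (0:ℝ) < x / s := div_pos hx hs
  rw [norm_div, norm_mul, 
    Complex.norm_cpow_eq_rpow_re_of_pos hds, Complex.norm_real, Real.norm_eq_abs, abs_of_pos hs,
    Real.div_rpow hx.le hs.le, show (-w.re - 1 : ℝ) = -w.re + (-1) by ring,
    Real.rpow_add hs, Real.rpow_neg_one, Real.rpow_neg hs.le]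
  ring

lemma memL1c_norm_integrable {φ : ℝ → ℂ} (hφ1 : MemL1c φ) :
    IntegrableOn (fun s => ‖φ s‖ / Real.sqrt s) (Ioi 0) volume := by
  have h := hφ1.norm
  have he : (fun s => ‖φ s / ((Real.sqrt s : ℝ) : ℂ)‖) = fun s => ‖φ s‖ / Real.sqrt s := by
    funext s
    rw [norm_div, Complex.norm_real, Real.norm_eq_abs, _root_.abs_of_nonneg (Real.sqrt_nonneg s)]
  rwa [he] at h

lemma tail_all {w : ℂ} (hw : -(1/2:ℝ) < w.re) {φ : ℝ → ℂ} (hφ1 : MemL1c φ)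
    (hφ2 : MemLp φ 2 (volume.restrict (Ioi 0))) :
    (∀ x ∈ Ioi (0:ℝ),
        IntegrableOn (fun s => ((x / s : ℝ) : ℂ) ^ w * φ s / (s : ℂ)) (Ioi x) volume) ∧
    (∀ x ∈ Ioi (0:ℝ),
        ‖∫ s in Ioi x, ((x / s : ℝ) : ℂ) ^ w * φ s / (s : ℂ)‖ ≤ l1cNorm φ / Real.sqrt x) ∧
    MemLp (fun x => ∫ s in Ioi x, ((x / s : ℝ) : ℂ) ^ w * φ s / (s : ℂ)) 2
      (volume.restrict (Ioi 0)) ∧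
    eLpNorm (fun x => ∫ s in Ioi x, ((x / s : ℝ) : ℂ) ^ w * φ s / (s : ℂ)) 2
        (volume.restrict (Ioi 0))
      ≤ ENNReal.ofReal (1 / (w.re + 1/2)) * eLpNorm φ 2 (volume.restrict (Ioi 0)) := by
  set t : ℝ := w.re with htdef
  set ε : ℝ := t + 1/2 with hεdef
  have hε : 0 < ε := by simp only [hεdef]; linarith
  set k : ℝ → ℝ → ℂ := fun x s => ((x / s : ℝ) : ℂ) ^ w * φ s / (s : ℂ) with hk
  set h : ℝ → ℝ := fun s => ‖φ s‖ / Real.sqrt s with hh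
  have hhi : IntegrableOn h (Ioi 0) volume := memL1c_norm_integrable hφ1
  have hhn : ∀ s, 0 ≤ h s := fun s => div_nonneg (norm_nonneg _) (Real.sqrt_nonneg _)
  have hφm : AEStronglyMeasurable φ (volume.restrict (Ioi 0)) := hφ2.aestronglyMeasurable
  have hsqrt : ∀ s : ℝ, 0 < s → s ^ (-(1/2) : ℝ) = (Real.sqrt s)⁻¹ := fun s hs => by
    rw [Real.rpow_neg hs.le, Real.sqrt_eq_rpow]
  have hdom : ∀ x : ℝ, 0 < x → ∀ s ∈ Ioi x, ‖k x s‖ ≤ x ^ (-(1/2) : ℝ) * h s := by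
    intro x hx s hs
    rw [mem_Ioi] at hs
    have hs0 : (0:ℝ) < s := hx.trans hs
    rw [hk, norm_kernel w φ hx hs0]
    have h1 : s ^ (-t - 1 : ℝ) = s ^ (-t - 1/2 : ℝ) * s ^ (-(1/2) : ℝ) := by
      rw [← Real.rpow_add hs0]; congr 1; ring
    calc x ^ t * (s ^ (-t - 1 : ℝ) * ‖φ s‖)
        = (x ^ t * s ^ (-t - 1/2 : ℝ)) * (s ^ (-(1/2) : ℝ) * ‖φ s‖) := by rw [h1]; ring
      _ ≤ (x ^ t * x ^ (-t - 1/2 : ℝ)) * (s ^ (-(1/2) : ℝ) * ‖φ s‖) := by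
          have h2 : s ^ (-t - 1/2 : ℝ) ≤ x ^ (-t - 1/2 : ℝ) :=
            Real.rpow_le_rpow_of_nonpos hx hs.le (by simp only [hεdef] at hε; linarith)
          have h3 : (0:ℝ) ≤ s ^ (-(1/2) : ℝ) * ‖φ s‖ :=
            mul_nonneg (Real.rpow_nonneg hs0.le _) (norm_nonneg _)
          exact mul_le_mul_of_nonneg_right
            (mul_le_mul_of_nonneg_left h2 (Real.rpow_nonneg hx.le _)) h3
      _ = x ^ (-(1/2) : ℝ) * h s := by
          rw [← Real.rpow_add hx, show (t + (-t - 1/2) : ℝ) = -(1/2) by ring, hsqrt s hs0, hh]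
          rw [div_eq_mul_inv]
          ring
  have hkm : ∀ x : ℝ, 0 < x → AEStronglyMeasurable (k x) (volume.restrict (Ioi x)) := by
    intro x hx
    refine AEMeasurable.aestronglyMeasurable (AEMeasurable.div (AEMeasurable.mul ?_ ?_) ?_)
    · exact ((Complex.measurable_ofReal.comp (measurable_const.div measurable_id)).pow_const
        w).aemeasurable
    · exact (hφm.mono_measure (Measure.restrict_mono (Ioi_subset_Ioi hx.le) le_rfl)).aemeasurable
    · exact Complex.measurable_ofReal.aemeasurable
  have hInt : ∀ x ∈ Ioi (0:ℝ), IntegrableOn (k x) (Ioi x) volume := by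
    intro x hx
    rw [mem_Ioi] at hx
    refine Integrable.mono'
      ((hhi.mono_set (Ioi_subset_Ioi hx.le)).const_mul (x ^ (-(1/2) : ℝ))) (hkm x hx) ?_
    exact (ae_restrict_mem measurableSet_Ioi).mono fun s hs => hdom x hx s hs
  have hPt : ∀ x ∈ Ioi (0:ℝ), ‖∫ s in Ioi x, k x s‖ ≤ l1cNorm φ / Real.sqrt x := by
    intro x hx
    have hx0 : (0:ℝ) < x := hx
    have e1 : ‖∫ s in Ioi x, k x s‖ ≤ ∫ s in Ioi x, x ^ (-(1/2):ℝ) * h s := by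
      refine (norm_integral_le_integral_norm _).trans ?_
      exact setIntegral_mono_on (hInt x hx).norm
        ((hhi.mono_set (Ioi_subset_Ioi hx0.le)).const_mul _) measurableSet_Ioi
        fun s hs => hdom x hx0 s hs
    have e3 : ∫ s in Ioi x, h s ≤ l1cNorm φ := by
      have : ∫ s in Ioi x, h s ≤ ∫ s in Ioi 0, h s :=
        setIntegral_mono_set hhi ((ae_restrict_mem measurableSet_Ioi).mono fun s _ => hhn s)
          (HasSubset.Subset.eventuallyLE (Ioi_subset_Ioi hx0.le))
      exact this
    calc ‖∫ s in Ioi x, k x s‖ ≤ x ^ (-(1/2):ℝ) * ∫ s in Ioi x, h s := by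
          rw [← integral_const_mul]; exact e1
      _ ≤ x ^ (-(1/2):ℝ) * l1cNorm φ :=
          mul_le_mul_of_nonneg_left e3 (Real.rpow_nonneg hx0.le _)
      _ = l1cNorm φ / Real.sqrt x := by rw [hsqrt x hx0, div_eq_mul_inv]; ring
  have hMeas : AEStronglyMeasurable (fun x => ∫ s in Ioi x, k x s) (volume.restrict (Ioi 0)) := by
    set ν := volume.restrict (Ioi (0:ℝ)) with hν
    have hG : AEStronglyMeasurable (fun p : ℝ × ℝ =>
        ({q : ℝ × ℝ | q.1 < q.2}).indicator (fun q => k q.1 q.2) p) (ν.prod ν) := by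
      refine AEStronglyMeasurable.indicator ?_ (measurableSet_lt measurable_fst measurable_snd)
      refine AEMeasurable.aestronglyMeasurable (AEMeasurable.div (AEMeasurable.mul ?_ ?_) ?_)
      · exact ((Complex.measurable_ofReal.comp
          (measurable_fst.div measurable_snd)).pow_const w).aemeasurable
      · exact (hφm.comp_snd).aemeasurable
      · exact (Complex.measurable_ofReal.comp measurable_snd).aemeasurable
    refine (hG.integral_prod_right').congr ?_
    filter_upwards [ae_restrict_mem measurableSet_Ioi] with x hx
    rw [mem_Ioi] at hx
    have e1 : (fun s => ({q : ℝ × ℝ | q.1 < q.2}).indicator (fun q => k q.1 q.2) (x, s))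
        = (Ioi x).indicator (k x) := by
      funext s; by_cases hxs : x < s <;> simp [Set.indicator_apply, hxs]
    calc ∫ s, ({q : ℝ × ℝ | q.1 < q.2}).indicator (fun q => k q.1 q.2) (x, s) ∂ν
        = ∫ s, (Ioi x).indicator (k x) s ∂ν := by rw [e1]
      _ = ∫ s in Ioi x, k x s ∂ν := integral_indicator measurableSet_Ioi
      _ = ∫ s in Ioi x, k x s := by
          rw [hν, Measure.restrict_restrict measurableSet_Ioi,
            inter_eq_left.mpr (Ioi_subset_Ioi hx.le)]
  set sm := hφm.mk φ with hsm
  have hae : φ =ᵐ[volume.restrict (Ioi 0)] sm := hφm.ae_eq_mk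
  have hgm : Measurable fun s => (‖sm s‖₊ : ℝ≥0∞) :=
    hφm.stronglyMeasurable_mk.measurable.nnnorm.coe_nnreal_ennreal
  have hYb : ∀ x ∈ Ioi (0:ℝ), (‖∫ s in Ioi x, k x s‖₊ : ℝ≥0∞)
      ≤ ENNReal.ofReal (x ^ t) * ∫⁻ s in Ioi x, ENNReal.ofReal (s ^ (-t - 1)) * (‖sm s‖₊ : ℝ≥0∞) := by
    intro x hx
    rw [mem_Ioi] at hx
    have hres : volume.restrict (Ioi x) = (volume.restrict (Ioi 0)).restrict (Ioi x) := by
      rw [Measure.restrict_restrict measurableSet_Ioi, inter_eq_left.mpr (Ioi_subset_Ioi hx.le)]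
    have haeg' : φ =ᵐ[volume.restrict (Ioi x)] sm := by
      rw [hres]
      exact hae.filter_mono (ae_mono Measure.restrict_le_self)
    calc (‖∫ s in Ioi x, k x s‖₊ : ℝ≥0∞) ≤ ∫⁻ s in Ioi x, ‖k x s‖₊ :=
        enorm_integral_le_lintegral_enorm _
      _ = ∫⁻ s in Ioi x,
            ENNReal.ofReal (x ^ t) * (ENNReal.ofReal (s ^ (-t - 1)) * (‖φ s‖₊ : ℝ≥0∞)) := by
          refine setLIntegral_congr_fun measurableSet_Ioi (fun s hs => ?_)
          rw [mem_Ioi] at hs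
          have hs0 : (0:ℝ) < s := hx.trans hs
          rw [← enorm_eq_nnnorm, ← ofReal_norm, ← enorm_eq_nnnorm, ← ofReal_norm, hk,
            norm_kernel w φ hx hs0, ENNReal.ofReal_mul (Real.rpow_nonneg hx.le _),
            ENNReal.ofReal_mul (Real.rpow_nonneg hs0.le _)]
      _ = ∫⁻ s in Ioi x, ENNReal.ofReal (x ^ t) * (ENNReal.ofReal (s ^ (-t - 1)) * (‖sm s‖₊ : ℝ≥0∞)) :=
          lintegral_congr_ae (haeg'.mono fun s hs => by simp only [hs])
      _ = ENNReal.ofReal (x ^ t) * ∫⁻ s in Ioi x, ENNReal.ofReal (s ^ (-t - 1)) * (‖sm s‖₊ : ℝ≥0∞) :=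
          lintegral_const_mul' _ _ ENNReal.ofReal_ne_top
  have heLp : eLpNorm (fun x => ∫ s in Ioi x, k x s) 2 (volume.restrict (Ioi 0))
      ≤ ENNReal.ofReal (1 / ε) * eLpNorm φ 2 (volume.restrict (Ioi 0)) := by
    rw [eLpNorm_eq_lintegral_rpow_enorm_toReal (by norm_num) (by norm_num),
      eLpNorm_eq_lintegral_rpow_enorm_toReal (p := 2) (by norm_num) (by norm_num)]
    simp only [ENNReal.toReal_ofNat]
    have hb1 : ∫⁻ x in Ioi (0:ℝ), (‖∫ s in Ioi x, k x s‖₊ : ℝ≥0∞) ^ (2:ℝ)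
        ≤ ENNReal.ofReal (1 / ε) ^ (2:ℝ) * ∫⁻ s in Ioi (0:ℝ), (‖sm s‖₊ : ℝ≥0∞) ^ (2:ℝ) := by
      refine le_trans (setLIntegral_mono' measurableSet_Ioi fun x hx => ?_)
        (hardy_tail hε (by simp only [hεdef]; ring) hgm)
      exact ENNReal.rpow_le_rpow (hYb x hx) (by norm_num)
    have hb2 : ∫⁻ s in Ioi (0:ℝ), (‖sm s‖₊ : ℝ≥0∞) ^ (2:ℝ)
        = ∫⁻ s in Ioi (0:ℝ), (‖φ s‖₊ : ℝ≥0∞) ^ (2:ℝ) :=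
      lintegral_congr_ae ((hae.symm).mono fun s hs => by simp only [hs])
    calc (∫⁻ x in Ioi (0:ℝ), (‖∫ s in Ioi x, k x s‖₊ : ℝ≥0∞) ^ (2:ℝ)) ^ (1/2:ℝ)
        ≤ (ENNReal.ofReal (1 / ε) ^ (2:ℝ)
            * ∫⁻ s in Ioi (0:ℝ), (‖φ s‖₊ : ℝ≥0∞) ^ (2:ℝ)) ^ (1/2:ℝ) := by
          refine ENNReal.rpow_le_rpow ?_ (by norm_num)
          rw [← hb2]
          exact hb1
      _ = ENNReal.ofReal (1 / ε)
            * (∫⁻ s in Ioi (0:ℝ), (‖φ s‖₊ : ℝ≥0∞) ^ (2:ℝ)) ^ (1/2:ℝ) := by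
          rw [ENNReal.mul_rpow_of_nonneg _ _ (by norm_num : (0:ℝ) ≤ 1/2), ← ENNReal.rpow_mul]
          norm_num
  exact ⟨hInt, hPt, ⟨hMeas, lt_of_le_of_lt heLp
    (ENNReal.mul_lt_top ENNReal.ofReal_lt_top hφ2.2)⟩, heLp⟩

lemma head_all {w : ℂ} (hw : w.re < -(1/2:ℝ)) {φ : ℝ → ℂ} (hφ1 : MemL1c φ)
    (hφ2 : MemLp φ 2 (volume.restrict (Ioi 0))) :
    (∀ x ∈ Ioi (0:ℝ),
        IntegrableOn (fun s => ((x / s : ℝ) : ℂ) ^ w * φ s / (s : ℂ)) (Ioo 0 x) volume) ∧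
    (∀ x ∈ Ioi (0:ℝ),
        ‖∫ s in Ioo 0 x, ((x / s : ℝ) : ℂ) ^ w * φ s / (s : ℂ)‖ ≤ l1cNorm φ / Real.sqrt x) ∧
    MemLp (fun x => ∫ s in Ioo 0 x, ((x / s : ℝ) : ℂ) ^ w * φ s / (s : ℂ)) 2
      (volume.restrict (Ioi 0)) ∧
    eLpNorm (fun x => ∫ s in Ioo 0 x, ((x / s : ℝ) : ℂ) ^ w * φ s / (s : ℂ)) 2
        (volume.restrict (Ioi 0))
      ≤ ENNReal.ofReal (1 / (-w.re - 1/2)) * eLpNorm φ 2 (volume.restrict (Ioi 0)) := by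
  set t : ℝ := w.re with htdef
  set ε : ℝ := -t - 1/2 with hεdef
  have hε : 0 < ε := by simp only [hεdef]; linarith
  set k : ℝ → ℝ → ℂ := fun x s => ((x / s : ℝ) : ℂ) ^ w * φ s / (s : ℂ) with hk
  set h : ℝ → ℝ := fun s => ‖φ s‖ / Real.sqrt s with hh
  have hhi : IntegrableOn h (Ioi 0) volume := memL1c_norm_integrable hφ1
  have hhn : ∀ s, 0 ≤ h s := fun s => div_nonneg (norm_nonneg _) (Real.sqrt_nonneg _)
  have hφm : AEStronglyMeasurable φ (volume.restrict (Ioi 0)) := hφ2.aestronglyMeasurable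
  have hsqrt : ∀ s : ℝ, 0 < s → s ^ (-(1/2) : ℝ) = (Real.sqrt s)⁻¹ := fun s hs => by
    rw [Real.rpow_neg hs.le, Real.sqrt_eq_rpow]
  have hdom : ∀ x : ℝ, 0 < x → ∀ s ∈ Ioo (0:ℝ) x, ‖k x s‖ ≤ x ^ (-(1/2) : ℝ) * h s := by
    intro x hx s hs
    have hs0 : (0:ℝ) < s := hs.1
    rw [hk, norm_kernel w φ hx hs0]
    have h1 : s ^ (-t - 1 : ℝ) = s ^ (-t - 1/2 : ℝ) * s ^ (-(1/2) : ℝ) := by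
      rw [← Real.rpow_add hs0]; congr 1; ring
    calc x ^ t * (s ^ (-t - 1 : ℝ) * ‖φ s‖)
        = (x ^ t * s ^ (-t - 1/2 : ℝ)) * (s ^ (-(1/2) : ℝ) * ‖φ s‖) := by rw [h1]; ring
      _ ≤ (x ^ t * x ^ (-t - 1/2 : ℝ)) * (s ^ (-(1/2) : ℝ) * ‖φ s‖) := by
          have h2 : s ^ (-t - 1/2 : ℝ) ≤ x ^ (-t - 1/2 : ℝ) :=
            Real.rpow_le_rpow hs0.le hs.2.le (by simp only [hεdef] at hε; linarith)
          have h3 : (0:ℝ) ≤ s ^ (-(1/2) : ℝ) * ‖φ s‖ :=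
            mul_nonneg (Real.rpow_nonneg hs0.le _) (norm_nonneg _)
          exact mul_le_mul_of_nonneg_right
            (mul_le_mul_of_nonneg_left h2 (Real.rpow_nonneg hx.le _)) h3
      _ = x ^ (-(1/2) : ℝ) * h s := by
          rw [← Real.rpow_add hx, show (t + (-t - 1/2) : ℝ) = -(1/2) by ring, hsqrt s hs0, hh]
          rw [div_eq_mul_inv]
          ring
  have hkm : ∀ x : ℝ, 0 < x → AEStronglyMeasurable (k x) (volume.restrict (Ioo 0 x)) := by
    intro x hx
    refine AEMeasurable.aestronglyMeasurable (AEMeasurable.div (AEMeasurable.mul ?_ ?_) ?_)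
    · exact ((Complex.measurable_ofReal.comp (measurable_const.div measurable_id)).pow_const
        w).aemeasurable
    · exact (hφm.mono_measure (Measure.restrict_mono Ioo_subset_Ioi_self le_rfl)).aemeasurable
    · exact Complex.measurable_ofReal.aemeasurable
  have hInt : ∀ x ∈ Ioi (0:ℝ), IntegrableOn (k x) (Ioo 0 x) volume := by
    intro x hx
    rw [mem_Ioi] at hx
    refine Integrable.mono'
      ((hhi.mono_set Ioo_subset_Ioi_self).const_mul (x ^ (-(1/2) : ℝ))) (hkm x hx) ?_
    exact (ae_restrict_mem measurableSet_Ioo).mono fun s hs => hdom x hx s hs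
  have hPt : ∀ x ∈ Ioi (0:ℝ), ‖∫ s in Ioo 0 x, k x s‖ ≤ l1cNorm φ / Real.sqrt x := by
    intro x hx
    have hx0 : (0:ℝ) < x := hx
    have e1 : ‖∫ s in Ioo 0 x, k x s‖ ≤ ∫ s in Ioo 0 x, x ^ (-(1/2):ℝ) * h s := by
      refine (norm_integral_le_integral_norm _).trans ?_
      exact setIntegral_mono_on (hInt x hx).norm
        ((hhi.mono_set Ioo_subset_Ioi_self).const_mul _) measurableSet_Ioo
        fun s hs => hdom x hx0 s hs
    have e3 : ∫ s in Ioo 0 x, h s ≤ l1cNorm φ := by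
      have : ∫ s in Ioo 0 x, h s ≤ ∫ s in Ioi 0, h s :=
        setIntegral_mono_set hhi ((ae_restrict_mem measurableSet_Ioi).mono fun s _ => hhn s)
          (HasSubset.Subset.eventuallyLE Ioo_subset_Ioi_self)
      exact this
    calc ‖∫ s in Ioo 0 x, k x s‖ ≤ x ^ (-(1/2):ℝ) * ∫ s in Ioo 0 x, h s := by
          rw [← integral_const_mul]; exact e1
      _ ≤ x ^ (-(1/2):ℝ) * l1cNorm φ :=
          mul_le_mul_of_nonneg_left e3 (Real.rpow_nonneg hx0.le _)
      _ = l1cNorm φ / Real.sqrt x := by rw [hsqrt x hx0, div_eq_mul_inv]; ring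
  have hMeas : AEStronglyMeasurable (fun x => ∫ s in Ioo 0 x, k x s)
      (volume.restrict (Ioi 0)) := by
    set ν := volume.restrict (Ioi (0:ℝ)) with hν
    have hG : AEStronglyMeasurable (fun p : ℝ × ℝ =>
        ({q : ℝ × ℝ | q.2 < q.1}).indicator (fun q => k q.1 q.2) p) (ν.prod ν) := by
      refine AEStronglyMeasurable.indicator ?_ (measurableSet_lt measurable_snd measurable_fst)
      refine AEMeasurable.aestronglyMeasurable (AEMeasurable.div (AEMeasurable.mul ?_ ?_) ?_)
      · exact ((Complex.measurable_ofReal.comp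
          (measurable_fst.div measurable_snd)).pow_const w).aemeasurable
      · exact (hφm.comp_snd).aemeasurable
      · exact (Complex.measurable_ofReal.comp measurable_snd).aemeasurable
    refine (hG.integral_prod_right').congr ?_
    filter_upwards [ae_restrict_mem measurableSet_Ioi] with x hx
    rw [mem_Ioi] at hx
    have e1 : (fun s => ({q : ℝ × ℝ | q.2 < q.1}).indicator (fun q => k q.1 q.2) (x, s))
        = (Iio x).indicator (k x) := by
      funext s; by_cases hxs : s < x <;> simp [Set.indicator_apply, hxs]
    calc ∫ s, ({q : ℝ × ℝ | q.2 < q.1}).indicator (fun q => k q.1 q.2) (x, s) ∂ν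
        = ∫ s, (Iio x).indicator (k x) s ∂ν := by rw [e1]
      _ = ∫ s in Iio x, k x s ∂ν := integral_indicator measurableSet_Iio
      _ = ∫ s in Ioo 0 x, k x s := by
          rw [hν, Measure.restrict_restrict measurableSet_Iio, Set.Iio_inter_Ioi]
  set sm := hφm.mk φ with hsm
  have hae : φ =ᵐ[volume.restrict (Ioi 0)] sm := hφm.ae_eq_mk
  have hgm : Measurable fun s => (‖sm s‖₊ : ℝ≥0∞) :=
    hφm.stronglyMeasurable_mk.measurable.nnnorm.coe_nnreal_ennreal
  have hYb : ∀ x ∈ Ioi (0:ℝ), (‖∫ s in Ioo 0 x, k x s‖₊ : ℝ≥0∞)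
      ≤ ENNReal.ofReal (x ^ t)
        * ∫⁻ s in Ioo 0 x, ENNReal.ofReal (s ^ (-t - 1)) * (‖sm s‖₊ : ℝ≥0∞) := by
    intro x hx
    rw [mem_Ioi] at hx
    have hres : volume.restrict (Ioo 0 x) = (volume.restrict (Ioi 0)).restrict (Iio x) := by
      rw [Measure.restrict_restrict measurableSet_Iio, Set.Iio_inter_Ioi]
    have haeg' : φ =ᵐ[volume.restrict (Ioo 0 x)] sm := by
      rw [hres]
      exact hae.filter_mono (ae_mono Measure.restrict_le_self)
    calc (‖∫ s in Ioo 0 x, k x s‖₊ : ℝ≥0∞) ≤ ∫⁻ s in Ioo 0 x, ‖k x s‖₊ :=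
        enorm_integral_le_lintegral_enorm _
      _ = ∫⁻ s in Ioo 0 x,
            ENNReal.ofReal (x ^ t) * (ENNReal.ofReal (s ^ (-t - 1)) * (‖φ s‖₊ : ℝ≥0∞)) := by
          refine setLIntegral_congr_fun measurableSet_Ioo (fun s hs => ?_)
          have hs0 : (0:ℝ) < s := hs.1
          rw [← enorm_eq_nnnorm, ← ofReal_norm, ← enorm_eq_nnnorm, ← ofReal_norm, hk,
            norm_kernel w φ hx hs0, ENNReal.ofReal_mul (Real.rpow_nonneg hx.le _),
            ENNReal.ofReal_mul (Real.rpow_nonneg hs0.le _)]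
      _ = ∫⁻ s in Ioo 0 x,
            ENNReal.ofReal (x ^ t) * (ENNReal.ofReal (s ^ (-t - 1)) * (‖sm s‖₊ : ℝ≥0∞)) :=
          lintegral_congr_ae (haeg'.mono fun s hs => by simp only [hs])
      _ = ENNReal.ofReal (x ^ t)
            * ∫⁻ s in Ioo 0 x, ENNReal.ofReal (s ^ (-t - 1)) * (‖sm s‖₊ : ℝ≥0∞) :=
          lintegral_const_mul' _ _ ENNReal.ofReal_ne_top
  have heLp : eLpNorm (fun x => ∫ s in Ioo 0 x, k x s) 2 (volume.restrict (Ioi 0))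
      ≤ ENNReal.ofReal (1 / ε) * eLpNorm φ 2 (volume.restrict (Ioi 0)) := by
    rw [eLpNorm_eq_lintegral_rpow_enorm_toReal (by norm_num) (by norm_num),
      eLpNorm_eq_lintegral_rpow_enorm_toReal (p := 2) (by norm_num) (by norm_num)]
    simp only [ENNReal.toReal_ofNat]
    have hb1 : ∫⁻ x in Ioi (0:ℝ), (‖∫ s in Ioo 0 x, k x s‖₊ : ℝ≥0∞) ^ (2:ℝ)
        ≤ ENNReal.ofReal (1 / ε) ^ (2:ℝ) * ∫⁻ s in Ioi (0:ℝ), (‖sm s‖₊ : ℝ≥0∞) ^ (2:ℝ) := by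
      refine le_trans (setLIntegral_mono' measurableSet_Ioi fun x hx => ?_)
        (hardy_head hε (by simp only [hεdef]; ring) hgm)
      exact ENNReal.rpow_le_rpow (hYb x hx) (by norm_num)
    have hb2 : ∫⁻ s in Ioi (0:ℝ), (‖sm s‖₊ : ℝ≥0∞) ^ (2:ℝ)
        = ∫⁻ s in Ioi (0:ℝ), (‖φ s‖₊ : ℝ≥0∞) ^ (2:ℝ) :=
      lintegral_congr_ae ((hae.symm).mono fun s hs => by simp only [hs])
    calc (∫⁻ x in Ioi (0:ℝ), (‖∫ s in Ioo 0 x, k x s‖₊ : ℝ≥0∞) ^ (2:ℝ)) ^ (1/2:ℝ)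
        ≤ (ENNReal.ofReal (1 / ε) ^ (2:ℝ)
            * ∫⁻ s in Ioi (0:ℝ), (‖φ s‖₊ : ℝ≥0∞) ^ (2:ℝ)) ^ (1/2:ℝ) := by
          refine ENNReal.rpow_le_rpow ?_ (by norm_num)
          rw [← hb2]
          exact hb1
      _ = ENNReal.ofReal (1 / ε)
            * (∫⁻ s in Ioi (0:ℝ), (‖φ s‖₊ : ℝ≥0∞) ^ (2:ℝ)) ^ (1/2:ℝ) := by
          rw [ENNReal.mul_rpow_of_nonneg _ _ (by norm_num : (0:ℝ) ≤ 1/2), ← ENNReal.rpow_mul]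
          norm_num
  exact ⟨hInt, hPt, ⟨hMeas, lt_of_le_of_lt heLp
    (ENNReal.mul_lt_top ENNReal.ofReal_lt_top hφ2.2)⟩, heLp⟩


/-- `y₁ᶻ(x)`: for `Re z < 1/2`, `−∫_x^∞ (x/s)^{−z} φ(s) ds/s`;
for `Re z > 1/2`, `∫_0^x (x/s)^{−z} φ(s) ds/s`. -/
noncomputable def Y₁ (φ : ℝ → ℂ) (z : ℂ) (x : ℝ) : ℂ :=
  if z.re < 1/2 then -∫ s in Ioi x, ((x / s : ℝ) : ℂ) ^ (-z) * φ s / (s : ℂ)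
  else ∫ s in Ioo 0 x, ((x / s : ℝ) : ℂ) ^ (-z) * φ s / (s : ℂ)

/-- `y₂ᶻ(x)`: for `Re z < 1/2`, `∫_0^x (x/s)^{z−1} ψ(s) ds/s`;
for `Re z > 1/2`, `−∫_x^∞ (x/s)^{z−1} ψ(s) ds/s`. -/
noncomputable def Y₂ (ψ : ℝ → ℂ) (z : ℂ) (x : ℝ) : ℂ :=
  if z.re < 1/2 then ∫ s in Ioo 0 x, ((x / s : ℝ) : ℂ) ^ (z - 1) * ψ s / (s : ℂ)
  else -∫ s in Ioi x, ((x / s : ℝ) : ℂ) ^ (z - 1) * ψ s / (s : ℂ)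

/-- for `φ, ψ ∈ L¹∘(0,∞) ∩ L²(0,∞)` and `Re z ≠ 1/2`:
(i) the defining integrals converge absolutely with
`|y₁ᶻ(x)| ≤ ‖φ‖_{L¹∘} x^{−1/2}`, `|y₂ᶻ(x)| ≤ ‖ψ‖_{L¹∘} x^{−1/2}`;
(ii) `y₁ᶻ, y₂ᶻ ∈ L²(0,∞)` with norms bounded by `(2/|Re z − 1/2|)` times
`‖φ‖₂`, `‖ψ‖₂` respectively. -/
theorem statement_3 (φ ψ : ℝ → ℂ)
    (hφ1 : MemL1c φ) (hψ1 : MemL1c ψ)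
    (hφ2 : MemLp φ 2 (volume.restrict (Ioi 0)))
    (hψ2 : MemLp ψ 2 (volume.restrict (Ioi 0)))
    (z : ℂ) (hz : z.re ≠ 1/2) :
    ((z.re < 1/2 → ∀ x ∈ Ioi (0:ℝ),
        IntegrableOn (fun s => ((x / s : ℝ) : ℂ) ^ (-z) * φ s / (s : ℂ)) (Ioi x) volume ∧
        IntegrableOn (fun s => ((x / s : ℝ) : ℂ) ^ (z - 1) * ψ s / (s : ℂ)) (Ioo 0 x) volume) ∧
     (1/2 < z.re → ∀ x ∈ Ioi (0:ℝ),
        IntegrableOn (fun s => ((x / s : ℝ) : ℂ) ^ (-z) * φ s / (s : ℂ)) (Ioo 0 x) volume ∧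
        IntegrableOn (fun s => ((x / s : ℝ) : ℂ) ^ (z - 1) * ψ s / (s : ℂ)) (Ioi x) volume)) ∧
    (∀ x ∈ Ioi (0:ℝ),
      ‖Y₁ φ z x‖ ≤ l1cNorm φ / Real.sqrt x ∧ ‖Y₂ ψ z x‖ ≤ l1cNorm ψ / Real.sqrt x) ∧
    MemLp (Y₁ φ z) 2 (volume.restrict (Ioi 0)) ∧
    MemLp (Y₂ ψ z) 2 (volume.restrict (Ioi 0)) ∧
    eLpNorm (Y₁ φ z) 2 (volume.restrict (Ioi 0)) ≤
      ENNReal.ofReal (2 / |z.re - 1/2|) * eLpNorm φ 2 (volume.restrict (Ioi 0)) ∧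
    eLpNorm (Y₂ ψ z) 2 (volume.restrict (Ioi 0)) ≤
      ENNReal.ofReal (2 / |z.re - 1/2|) * eLpNorm ψ 2 (volume.restrict (Ioi 0)) := by
  by_cases hlt : z.re < 1/2
  · -- case Re z < 1/2 : Y₁ tail with w = -z, Y₂ head with w = z - 1
    have hw1 : -(1/2:ℝ) < (-z).re := by rw [Complex.neg_re]; linarith
    have hw2 : (z - 1).re < -(1/2:ℝ) := by rw [Complex.sub_re, Complex.one_re]; linarith
    obtain ⟨hInt1, hPt1, hMem1, heLp1⟩ := tail_all hw1 hφ1 hφ2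
    obtain ⟨hInt2, hPt2, hMem2, heLp2⟩ := head_all hw2 hψ1 hψ2
    have habs : |z.re - 1/2| = 1/2 - z.re := by rw [abs_of_neg (by linarith)]; ring
    have hcle1 : ENNReal.ofReal (1 / ((-z).re + 1/2)) ≤ ENNReal.ofReal (2 / |z.re - 1/2|) := by
      rw [habs, Complex.neg_re, show (-z.re + 1/2 : ℝ) = 1/2 - z.re by ring]
      exact ENNReal.ofReal_le_ofReal ((div_le_div_iff_of_pos_right (by linarith)).mpr one_le_two)
    have hcle2 : ENNReal.ofReal (1 / (-(z - 1).re - 1/2)) ≤ ENNReal.ofReal (2 / |z.re - 1/2|) := by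
      rw [habs, Complex.sub_re, Complex.one_re,
        show (-(z.re - 1) - 1/2 : ℝ) = 1/2 - z.re by ring]
      exact ENNReal.ofReal_le_ofReal ((div_le_div_iff_of_pos_right (by linarith)).mpr one_le_two)
    have hY1 : Y₁ φ z = fun x => -∫ s in Ioi x, ((x / s : ℝ) : ℂ) ^ (-z) * φ s / (s : ℂ) :=
      funext fun x => if_pos hlt
    have hY2 : Y₂ ψ z = fun x => ∫ s in Ioo 0 x, ((x / s : ℝ) : ℂ) ^ (z - 1) * ψ s / (s : ℂ) :=
      funext fun x => if_pos hlt
    refine ⟨⟨fun _ x hx => ⟨hInt1 x hx, hInt2 x hx⟩,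
        fun hgt => absurd (hlt.trans hgt) (lt_irrefl _)⟩, ?_, ?_, ?_, ?_, ?_⟩
    · intro x hx
      constructor
      · rw [hY1, norm_neg]; exact hPt1 x hx
      · rw [hY2]; exact hPt2 x hx
    · rw [hY1]
      exact hMem1.neg
    · rw [hY2]; exact hMem2
    · rw [hY1]
      refine le_trans ?_ (mul_le_mul_left hcle1 _)
      rw [show (fun x => -∫ s in Ioi x, ((x / s : ℝ) : ℂ) ^ (-z) * φ s / (s : ℂ))
          = -(fun x => ∫ s in Ioi x, ((x / s : ℝ) : ℂ) ^ (-z) * φ s / (s : ℂ)) from rfl,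
        eLpNorm_neg]
      exact heLp1
    · rw [hY2]
      exact le_trans heLp2 (mul_le_mul_left hcle2 _)
  · -- case Re z > 1/2 : Y₁ head with w = -z, Y₂ tail with w = z - 1
    have hgt : (1/2:ℝ) < z.re := lt_of_le_of_ne (not_lt.mp hlt) (Ne.symm hz)
    have hw1 : (-z).re < -(1/2:ℝ) := by rw [Complex.neg_re]; linarith
    have hw2 : -(1/2:ℝ) < (z - 1).re := by rw [Complex.sub_re, Complex.one_re]; linarith
    obtain ⟨hInt1, hPt1, hMem1, heLp1⟩ := head_all hw1 hφ1 hφ2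
    obtain ⟨hInt2, hPt2, hMem2, heLp2⟩ := tail_all hw2 hψ1 hψ2
    have habs : |z.re - 1/2| = z.re - 1/2 := abs_of_pos (by linarith)
    have hcle1 : ENNReal.ofReal (1 / (-(-z).re - 1/2)) ≤ ENNReal.ofReal (2 / |z.re - 1/2|) := by
      rw [habs, Complex.neg_re, neg_neg]
      exact ENNReal.ofReal_le_ofReal ((div_le_div_iff_of_pos_right (by linarith)).mpr one_le_two)
    have hcle2 : ENNReal.ofReal (1 / ((z - 1).re + 1/2)) ≤ ENNReal.ofReal (2 / |z.re - 1/2|) := by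
      rw [habs, Complex.sub_re, Complex.one_re,
        show (z.re - 1 + 1/2 : ℝ) = z.re - 1/2 by ring]
      exact ENNReal.ofReal_le_ofReal ((div_le_div_iff_of_pos_right (by linarith)).mpr one_le_two)
    have hY1 : Y₁ φ z = fun x => ∫ s in Ioo 0 x, ((x / s : ℝ) : ℂ) ^ (-z) * φ s / (s : ℂ) :=
      funext fun x => if_neg hlt
    have hY2 : Y₂ ψ z = fun x => -∫ s in Ioi x, ((x / s : ℝ) : ℂ) ^ (z - 1) * ψ s / (s : ℂ) :=
      funext fun x => if_neg hlt
    refine ⟨⟨fun hll => absurd (hll.trans hgt) (lt_irrefl _),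
        fun _ x hx => ⟨hInt1 x hx, hInt2 x hx⟩⟩, ?_, ?_, ?_, ?_, ?_⟩
    · intro x hx
      constructor
      · rw [hY1]; exact hPt1 x hx
      · rw [hY2, norm_neg]; exact hPt2 x hx
    · rw [hY1]; exact hMem1
    · rw [hY2]
      exact hMem2.neg
    · rw [hY1]
      exact le_trans heLp1 (mul_le_mul_left hcle1 _)
    · rw [hY2]
      refine le_trans ?_ (mul_le_mul_left hcle2 _)
      rw [show (fun x => -∫ s in Ioi x, ((x / s : ℝ) : ℂ) ^ (z - 1) * ψ s / (s : ℂ))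
          = -(fun x => ∫ s in Ioi x, ((x / s : ℝ) : ℂ) ^ (z - 1) * ψ s / (s : ℂ)) from rfl,
        eLpNorm_neg]
      exact heLp2
end

section
/- Suppose φ, ψ ∈ L¹∘(0,∞). Then for each fixed x > 0 the maps z ↦ y₁ᶻ(x) and z ↦ y₂ᶻ(x) are analytic on each of the open half-planes {Re z < 1/2} and {Re z > 1/2} and extend continuously to their closures; moreover, for every z with Re z = 1/2 and every x > 0, lim_{ε↓0} y₁^{z−ε}(x) − lim_{ε↓0} y₁^{z+ε}(x) = −x^{−z}·r₁(z) and lim_{ε↓0} y₂^{z−ε}(x) − lim_{ε↓0} y₂^{z+ε}(x) = x^{z−1}·r₂(z), where r₁(z) = ∫_0^∞ y^{z−1} φ(y) dy and r₂(z) = ∫_0^∞ y^{−z} ψ(y) dy. -/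
open MeasureTheory Set Complex Filter Topology

/-- Mellin transform `r₁(z) = ∫_0^∞ y^{z−1} φ(y) dy`. -/
noncomputable def mr₁ (φ : ℝ → ℂ) (z : ℂ) : ℂ :=
  ∫ y in Ioi (0:ℝ), (y : ℂ) ^ (z - 1) * φ y

/-- Mellin transform `r₂(z) = ∫_0^∞ y^{−z} ψ(y) dy`. -/
noncomputable def mr₂ (ψ : ℝ → ℂ) (z : ℂ) : ℂ :=
  ∫ y in Ioi (0:ℝ), (y : ℂ) ^ (-z) * ψ y

noncomputable def bnd (f : ℝ → ℂ) (x s : ℝ) : ℝ := (Real.sqrt x)⁻¹ * ‖f s / ((Real.sqrt s : ℝ) : ℂ)‖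

lemma bnd_integrable {f : ℝ → ℂ} (hf : MemL1c f) {x : ℝ} {A : Set ℝ} (hA : A ⊆ Ioi 0) :
    IntegrableOn (bnd f x) A volume :=
  (IntegrableOn.mono_set hf.norm hA).const_mul _

lemma bnd_eq {f : ℝ → ℂ} {x s : ℝ} (hx : 0 < x) (hs : 0 < s) :
    (x/s) ^ (-(1/2) : ℝ) * ‖f s‖ / s = bnd f x s := by
  have h1 : Real.sqrt s ≠ 0 := by positivity
  have h2 : Real.sqrt x ≠ 0 := by positivity
  have h3 : Real.sqrt s * Real.sqrt s = s := Real.mul_self_sqrt hs.le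
  rw [Real.rpow_neg (by positivity), ← Real.sqrt_eq_rpow, Real.sqrt_div hx.le, bnd,
    norm_div, Complex.norm_real, Real.norm_eq_abs, _root_.abs_of_nonneg (Real.sqrt_nonneg s)]
  field_simp
  linear_combination ‖f s‖ * h3

lemma abs_log_le {t δ : ℝ} (ht : 0 < t) (hδ : 0 < δ) :
    |Real.log t| ≤ δ⁻¹ * (t ^ δ + t ^ (-δ)) := by
  rcases le_total 1 t with h | h
  · rw [_root_.abs_of_nonneg (Real.log_nonneg h)]
    have h1 : Real.log (t ^ δ) ≤ t ^ δ := le_trans (Real.log_le_sub_one_of_pos (by positivity)) (by linarith)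
    rw [Real.log_rpow ht] at h1
    have h2 : (0:ℝ) ≤ t ^ (-δ) := by positivity
    rw [inv_mul_eq_div, le_div_iff₀ hδ]
    nlinarith
  · rw [_root_.abs_of_nonpos (Real.log_nonpos ht.le h)]
    have h1 : Real.log (t ^ (-δ)) ≤ t ^ (-δ) := le_trans (Real.log_le_sub_one_of_pos (by positivity)) (by linarith)
    rw [Real.log_rpow ht] at h1
    have h2 : (0:ℝ) ≤ t ^ δ := by positivity
    rw [inv_mul_eq_div, le_div_iff₀ hδ]
    nlinarith

section Kern
variable {f : ℝ → ℂ} {x : ℝ} {A : Set ℝ}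

lemma f_aesm (hf : MemL1c f) (hA : A ⊆ Ioi 0) :
    AEStronglyMeasurable f (volume.restrict A) := by
  have h1 : AEStronglyMeasurable (fun s => f s / ((Real.sqrt s : ℝ) : ℂ) * ((Real.sqrt s : ℝ) : ℂ))
      (volume.restrict (Ioi 0)) :=
    hf.aestronglyMeasurable.mul (Complex.continuous_ofReal.comp Real.continuous_sqrt).aestronglyMeasurable
  have h2 : AEStronglyMeasurable f (volume.restrict (Ioi 0)) := by
    refine h1.congr ?_
    filter_upwards [ae_restrict_mem measurableSet_Ioi] with s hs
    have hs0 : (0:ℝ) < s := hs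
    have : ((Real.sqrt s : ℝ) : ℂ) ≠ 0 := by
      simp only [ne_eq, Complex.ofReal_eq_zero]
      positivity
    field_simp
  exact h2.mono_measure (Measure.restrict_mono hA le_rfl)

lemma cpow_contOn (hx : 0 < x) (hA : A ⊆ Ioi 0) (w : ℂ) :
    ContinuousOn (fun s : ℝ => ((x / s : ℝ) : ℂ) ^ w) A := by
  intro s hs
  have hs0 : 0 < s := hA hs
  have hbase : ContinuousAt (fun s : ℝ => ((x / s : ℝ) : ℂ)) s :=
    ContinuousAt.comp (g := (Complex.ofReal)) Complex.continuous_ofReal.continuousAt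
      ((continuousAt_const.div continuousAt_id hs0.ne'))
  exact (hbase.cpow continuousAt_const
    (Complex.ofReal_mem_slitPlane.2 (by positivity))).continuousWithinAt

lemma log_contOn (hx : 0 < x) (hA : A ⊆ Ioi 0) :
    ContinuousOn (fun s : ℝ => Complex.log ((x / s : ℝ) : ℂ)) A := by
  intro s hs
  have hs0 : 0 < s := hA hs
  have hbase : ContinuousAt (fun s : ℝ => ((x / s : ℝ) : ℂ)) s :=
    ContinuousAt.comp (g := (Complex.ofReal)) Complex.continuous_ofReal.continuousAt
      ((continuousAt_const.div continuousAt_id hs0.ne'))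
  exact (hbase.clog (Complex.ofReal_mem_slitPlane.2 (by positivity))).continuousWithinAt

lemma kern_aesm (hf : MemL1c f) (hx : 0 < x) (hAm : MeasurableSet A) (hA : A ⊆ Ioi 0) (w : ℂ) :
    AEStronglyMeasurable (fun s => ((x / s : ℝ) : ℂ) ^ w * f s / (s : ℂ)) (volume.restrict A) := by
  have h1 : AEStronglyMeasurable (fun s : ℝ => ((x / s : ℝ) : ℂ) ^ w) (volume.restrict A) :=
    (cpow_contOn hx hA w).aestronglyMeasurable hAm
  simp only [div_eq_mul_inv]
  exact (h1.mul (f_aesm hf hA)).mul (Complex.measurable_ofReal.inv.aestronglyMeasurable)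

lemma kern'_aesm (hf : MemL1c f) (hx : 0 < x) (hAm : MeasurableSet A) (hA : A ⊆ Ioi 0) (w : ℂ) :
    AEStronglyMeasurable
      (fun s => ((x / s : ℝ) : ℂ) ^ w * Complex.log ((x / s : ℝ) : ℂ) * (f s / (s : ℂ)))
      (volume.restrict A) := by
  have h1 : AEStronglyMeasurable
      (fun s : ℝ => ((x / s : ℝ) : ℂ) ^ w * Complex.log ((x / s : ℝ) : ℂ)) (volume.restrict A) :=
    ((cpow_contOn hx hA w).mul (log_contOn hx hA)).aestronglyMeasurable hAm
  simp only [div_eq_mul_inv]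
  exact h1.mul ((f_aesm hf hA).mul (Complex.measurable_ofReal.inv.aestronglyMeasurable))

lemma norm_kern_le (hx : 0 < x) {s : ℝ} (hs : 0 < s) {w : ℂ}
    (hw : (x/s) ^ w.re ≤ (x/s) ^ (-(1/2) : ℝ)) :
    ‖((x / s : ℝ) : ℂ) ^ w * f s / (s : ℂ)‖ ≤ bnd f x s := by
  have ht : 0 < x / s := by positivity
  rw [norm_div, norm_mul, Complex.norm_cpow_eq_rpow_re_of_pos ht,
    Complex.norm_real, Real.norm_eq_abs, _root_.abs_of_pos hs, ← bnd_eq hx hs (f := f)]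
  gcongr

lemma norm_kern'_le (hx : 0 < x) {s : ℝ} (hs : 0 < s) {w : ℂ} {δ : ℝ} (hδ : 0 < δ)
    (hw : ((x/s) ^ δ + (x/s) ^ (-δ)) * (x/s) ^ w.re ≤ 2 * (x/s) ^ (-(1/2) : ℝ)) :
    ‖((x / s : ℝ) : ℂ) ^ w * Complex.log ((x / s : ℝ) : ℂ) * (f s / (s : ℂ))‖
      ≤ 2 * δ⁻¹ * bnd f x s := by
  have ht : 0 < x / s := by positivity
  have hlog : ‖Complex.log ((x / s : ℝ) : ℂ)‖ = |Real.log (x/s)| := by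
    rw [← Complex.ofReal_log ht.le, Complex.norm_real, Real.norm_eq_abs]
  rw [norm_mul, norm_mul, norm_div,
    Complex.norm_cpow_eq_rpow_re_of_pos ht, hlog, Complex.norm_real, Real.norm_eq_abs,
    _root_.abs_of_pos hs]
  have key : (x/s) ^ w.re * |Real.log (x/s)| ≤ 2 * δ⁻¹ * (x/s) ^ (-(1/2):ℝ) := by
    calc (x/s) ^ w.re * |Real.log (x/s)|
        ≤ (x/s) ^ w.re * (δ⁻¹ * ((x/s) ^ δ + (x/s) ^ (-δ))) :=
          mul_le_mul_of_nonneg_left (abs_log_le ht hδ) (by positivity)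
      _ = δ⁻¹ * (((x/s) ^ δ + (x/s) ^ (-δ)) * (x/s) ^ w.re) := by ring
      _ ≤ δ⁻¹ * (2 * (x/s) ^ (-(1/2):ℝ)) := by gcongr
      _ = 2 * δ⁻¹ * (x/s) ^ (-(1/2):ℝ) := by ring
  calc (x/s) ^ w.re * |Real.log (x/s)| * (‖f s‖ / s)
      ≤ (2 * δ⁻¹ * (x/s) ^ (-(1/2):ℝ)) * (‖f s‖ / s) :=
        mul_le_mul_of_nonneg_right key (by positivity)
    _ = 2 * δ⁻¹ * ((x/s) ^ (-(1/2):ℝ) * ‖f s‖ / s) := by ring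
    _ = 2 * δ⁻¹ * bnd f x s := by rw [bnd_eq hx hs]

end Kern

section Main
variable {f : ℝ → ℂ} {x : ℝ} {A : Set ℝ}

lemma integrableOn_kern (hf : MemL1c f) (hx : 0 < x) (hAm : MeasurableSet A) (hA : A ⊆ Ioi 0)
    {w : ℂ} (hw : ∀ s ∈ A, (x/s) ^ w.re ≤ (x/s) ^ (-(1/2) : ℝ)) :
    IntegrableOn (fun s => ((x / s : ℝ) : ℂ) ^ w * f s / (s : ℂ)) A volume := by
  refine Integrable.mono' (bnd_integrable hf hA (x := x)) (kern_aesm hf hx hAm hA w) ?_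
  rw [ae_restrict_iff' hAm]
  exact ae_of_all _ fun s hs => norm_kern_le hx (hA hs) (hw s hs)

lemma tendsto_kern {ι : Type*} {l : Filter ι} [l.IsCountablyGenerated]
    (hf : MemL1c f) (hx : 0 < x) (hAm : MeasurableSet A) (hA : A ⊆ Ioi 0)
    {g : ι → ℂ} {w₀ : ℂ} (hg : Tendsto g l (𝓝 w₀))
    (hb : ∀ᶠ i in l, ∀ s ∈ A, (x/s) ^ ((g i).re) ≤ (x/s) ^ (-(1/2) : ℝ)) :
    Tendsto (fun i => ∫ s in A, ((x / s : ℝ) : ℂ) ^ (g i) * f s / (s : ℂ)) l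
      (𝓝 (∫ s in A, ((x / s : ℝ) : ℂ) ^ w₀ * f s / (s : ℂ))) := by
  refine tendsto_integral_filter_of_dominated_convergence (bnd f x)
    (Eventually.of_forall fun i => kern_aesm hf hx hAm hA (g i)) ?_ (bnd_integrable hf hA) ?_
  · refine hb.mono fun i hi => ?_
    rw [ae_restrict_iff' hAm]
    exact ae_of_all _ fun s hs => norm_kern_le hx (hA hs) (hi s hs)
  · rw [ae_restrict_iff' hAm]
    refine ae_of_all _ fun s hs => ?_
    have hs0 : 0 < s := hA hs
    have hc : ((x / s : ℝ) : ℂ) ≠ 0 := by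
      simp only [ne_eq, Complex.ofReal_eq_zero]
      positivity
    exact ((((continuousAt_const_cpow hc).tendsto.comp hg).mul_const (f s)).div_const (s : ℂ))

lemma hasDerivAt_kern (hf : MemL1c f) (hx : 0 < x) (hAm : MeasurableSet A) (hA : A ⊆ Ioi 0)
    {w₀ : ℂ} {δ : ℝ} (hδ : 0 < δ)
    (hball : ∀ w ∈ Metric.ball w₀ δ, ∀ s ∈ A,
      (x/s) ^ w.re ≤ (x/s) ^ (-(1/2) : ℝ) ∧
      ((x/s) ^ δ + (x/s) ^ (-δ)) * (x/s) ^ w.re ≤ 2 * (x/s) ^ (-(1/2) : ℝ)) :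
    HasDerivAt (fun w => ∫ s in A, ((x / s : ℝ) : ℂ) ^ w * f s / (s : ℂ))
      (∫ s in A, ((x / s : ℝ) : ℂ) ^ w₀ * Complex.log ((x / s : ℝ) : ℂ) * (f s / (s : ℂ))) w₀ := by
  have hmem : w₀ ∈ Metric.ball w₀ δ := Metric.mem_ball_self hδ
  refine (hasDerivAt_integral_of_dominated_loc_of_deriv_le (F := fun w s => ((x / s : ℝ) : ℂ) ^ w * f s / (s : ℂ))
    (F' := fun w s => ((x / s : ℝ) : ℂ) ^ w * Complex.log ((x / s : ℝ) : ℂ) * (f s / (s : ℂ)))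
    (bound := fun s => 2 * δ⁻¹ * bnd f x s) (Metric.ball_mem_nhds w₀ hδ)
    (Eventually.of_forall fun w => kern_aesm hf hx hAm hA w)
    (integrableOn_kern hf hx hAm hA fun s hs => (hball w₀ hmem s hs).1)
    (kern'_aesm hf hx hAm hA w₀) ?_ ((bnd_integrable hf hA).const_mul _) ?_).2
  · rw [ae_restrict_iff' hAm]
    refine ae_of_all _ fun s hs w hw => ?_
    exact norm_kern'_le hx (hA hs) hδ (hball w hw s hs).2
  · rw [ae_restrict_iff' hAm]
    refine ae_of_all _ fun s hs w hw => ?_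
    have hs0 : 0 < s := hA hs
    have hc : ((x / s : ℝ) : ℂ) ≠ 0 := by
      simp only [ne_eq, Complex.ofReal_eq_zero]
      positivity
    have h1 : HasDerivAt (fun w : ℂ => ((x / s : ℝ) : ℂ) ^ w * (f s / (s : ℂ)))
        ((((x / s : ℝ) : ℂ) ^ w * Complex.log ((x / s : ℝ) : ℂ) * 1) * (f s / (s : ℂ))) w :=
      ((hasDerivAt_id w).const_cpow (Or.inl hc)).mul_const _
    have h2 : (fun w : ℂ => ((x / s : ℝ) : ℂ) ^ w * f s / (s : ℂ))
        = fun w : ℂ => ((x / s : ℝ) : ℂ) ^ w * (f s / (s : ℂ)) := by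
      funext w
      ring
    rw [h2]
    exact h1.congr_deriv (by ring)

end Main

noncomputable def Kp (f : ℝ → ℂ) (x : ℝ) (w : ℂ) : ℂ := ∫ s in Ioi x, ((x / s : ℝ) : ℂ) ^ w * f s / (s : ℂ)
noncomputable def Km (f : ℝ → ℂ) (x : ℝ) (w : ℂ) : ℂ := ∫ s in Ioo 0 x, ((x / s : ℝ) : ℂ) ^ w * f s / (s : ℂ)

section Cases
variable {f : ℝ → ℂ} {x : ℝ}

lemma tP {x s : ℝ} (hx : 0 < x) (hs : s ∈ Ioi x) : 0 < x / s ∧ x / s ≤ 1 := by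
  have h1 : x < s := hs
  have h2 : 0 < s := lt_trans hx h1
  exact ⟨by positivity, (div_le_one h2).2 h1.le⟩

lemma tM {x s : ℝ} (hx : 0 < x) (hs : s ∈ Ioo 0 x) : 0 < x / s ∧ 1 ≤ x / s := by
  have h1 : 0 < s := hs.1
  exact ⟨by positivity, (one_le_div h1).2 hs.2.le⟩

lemma cndP (hx : 0 < x) {w : ℂ} (hw : -(1/2) ≤ w.re) {s : ℝ} (hs : s ∈ Ioi x) :
    (x/s) ^ w.re ≤ (x/s) ^ (-(1/2) : ℝ) :=
  Real.rpow_le_rpow_of_exponent_ge (tP hx hs).1 (tP hx hs).2 hw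

lemma cndM (hx : 0 < x) {w : ℂ} (hw : w.re ≤ -(1/2)) {s : ℝ} (hs : s ∈ Ioo 0 x) :
    (x/s) ^ w.re ≤ (x/s) ^ (-(1/2) : ℝ) :=
  Real.rpow_le_rpow_of_exponent_le (tM hx hs).2 hw

lemma pair_bound {t a δ : ℝ} (ht : 0 < t)
    (h2 : t ^ (δ + a) ≤ t ^ (-(1/2) : ℝ)) (h3 : t ^ (a - δ) ≤ t ^ (-(1/2) : ℝ)) :
    (t ^ δ + t ^ (-δ)) * t ^ a ≤ 2 * t ^ (-(1/2) : ℝ) := by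
  have e1 : t ^ δ * t ^ a = t ^ (δ + a) := (Real.rpow_add ht δ a).symm
  have e2 : t ^ (-δ) * t ^ a = t ^ (a - δ) := by
    rw [← Real.rpow_add ht]; ring_nf
  calc (t ^ δ + t ^ (-δ)) * t ^ a = t ^ (δ + a) + t ^ (a - δ) := by rw [add_mul, e1, e2]
    _ ≤ t ^ (-(1/2):ℝ) + t ^ (-(1/2):ℝ) := add_le_add h2 h3
    _ = 2 * t ^ (-(1/2):ℝ) := by ring

lemma re_close {w w₀ : ℂ} {δ : ℝ} (hw : w ∈ Metric.ball w₀ δ) : |w.re - w₀.re| < δ := by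
  have h1 : |(w - w₀).re| ≤ ‖w - w₀‖ := Complex.abs_re_le_norm _
  have h2 : dist w w₀ < δ := Metric.mem_ball.1 hw
  rw [Complex.dist_eq] at h2
  simpa [Complex.sub_re] using lt_of_le_of_lt h1 h2

lemma KpCont (hf : MemL1c f) (hx : 0 < x) : ContinuousOn (Kp f x) {w : ℂ | -(1/2) ≤ w.re} := by
  intro w₀ hw₀
  exact tendsto_kern (l := 𝓝[{w : ℂ | -(1/2) ≤ w.re}] w₀) hf hx measurableSet_Ioi
    (Ioi_subset_Ioi hx.le) (g := id) (tendsto_id.mono_right nhdsWithin_le_nhds)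
    (eventually_mem_nhdsWithin.mono fun w hw s hs => cndP hx hw hs)

lemma KmCont (hf : MemL1c f) (hx : 0 < x) : ContinuousOn (Km f x) {w : ℂ | w.re ≤ -(1/2)} := by
  intro w₀ hw₀
  exact tendsto_kern (l := 𝓝[{w : ℂ | w.re ≤ -(1/2)}] w₀) hf hx measurableSet_Ioo
    Ioo_subset_Ioi_self (g := id) (tendsto_id.mono_right nhdsWithin_le_nhds)
    (eventually_mem_nhdsWithin.mono fun w hw s hs => cndM hx hw hs)

lemma KpDiff (hf : MemL1c f) (hx : 0 < x) {w₀ : ℂ} (hw₀ : -(1/2) < w₀.re) :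
    DifferentiableAt ℂ (Kp f x) w₀ := by
  set δ := (w₀.re + 1/2)/2 with hδdef
  have hδ : 0 < δ := by rw [hδdef]; linarith
  refine (hasDerivAt_kern hf hx measurableSet_Ioi (Ioi_subset_Ioi hx.le) hδ ?_).differentiableAt
  intro w hw s hs
  have hre := re_close hw
  rw [abs_lt] at hre
  have h1 : -(1/2) ≤ w.re := by rw [hδdef] at *; linarith
  have h2 : -(1/2) ≤ δ + w.re := by rw [hδdef] at *; linarith
  have h3 : -(1/2) ≤ w.re - δ := by rw [hδdef] at *; linarith
  exact ⟨cndP hx h1 hs, pair_bound (tP hx hs).1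
    (Real.rpow_le_rpow_of_exponent_ge (tP hx hs).1 (tP hx hs).2 h2)
    (Real.rpow_le_rpow_of_exponent_ge (tP hx hs).1 (tP hx hs).2 h3)⟩

lemma KmDiff (hf : MemL1c f) (hx : 0 < x) {w₀ : ℂ} (hw₀ : w₀.re < -(1/2)) :
    DifferentiableAt ℂ (Km f x) w₀ := by
  set δ := (-(1/2) - w₀.re)/2 with hδdef
  have hδ : 0 < δ := by rw [hδdef]; linarith
  refine (hasDerivAt_kern hf hx measurableSet_Ioo Ioo_subset_Ioi_self hδ ?_).differentiableAt
  intro w hw s hs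
  have hre := re_close hw
  rw [abs_lt] at hre
  have h1 : w.re ≤ -(1/2) := by rw [hδdef] at *; linarith
  have h2 : δ + w.re ≤ -(1/2) := by rw [hδdef] at *; linarith
  have h3 : w.re - δ ≤ -(1/2) := by rw [hδdef] at *; linarith
  exact ⟨cndM hx h1 hs, pair_bound (tM hx hs).1
    (Real.rpow_le_rpow_of_exponent_le (tM hx hs).2 h2)
    (Real.rpow_le_rpow_of_exponent_le (tM hx hs).2 h3)⟩

lemma kern_eq (hx : 0 < x) {s : ℝ} (hs : 0 < s) (w : ℂ) :
    ((x / s : ℝ) : ℂ) ^ w * f s / (s : ℂ) = (x : ℂ) ^ w * ((s : ℂ) ^ (-w - 1) * f s) := by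
  have hsne : (s : ℂ) ≠ 0 := by
    simp only [ne_eq, Complex.ofReal_eq_zero]; positivity
  have h1 : ((x / s : ℝ) : ℂ) = ((x:ℝ):ℂ) * ((s⁻¹ : ℝ) : ℂ) := by push_cast; rw [div_eq_mul_inv]
  rw [h1, mul_cpow_ofReal_nonneg hx.le (inv_nonneg.2 hs.le)]
  have h2 : ((s⁻¹ : ℝ) : ℂ) = ((s:ℝ):ℂ)⁻¹ := by push_cast; rfl
  have h3 : ((s:ℝ):ℂ)⁻¹ ^ w = ((s:ℝ):ℂ) ^ (-w) := by
    rw [inv_cpow _ _ (by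
      rw [Complex.arg_ofReal_of_nonneg hs.le]
      exact Real.pi_ne_zero.symm), ← Complex.cpow_neg]
  have h4 : ((s:ℝ):ℂ) ^ (-w - 1) = ((s:ℝ):ℂ) ^ (-w) / (s:ℂ) := by
    rw [Complex.cpow_sub _ _ hsne, Complex.cpow_one]
  rw [h2, h3, h4]
  field_simp

lemma jump_eq (hf : MemL1c f) (hx : 0 < x) {w : ℂ} (hw : w.re = -(1/2)) :
    Kp f x w + Km f x w = (x : ℂ) ^ w * ∫ s in Ioi (0:ℝ), (s : ℂ) ^ (-w - 1) * f s := by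
  have hIoi : IntegrableOn (fun s => ((x / s : ℝ) : ℂ) ^ w * f s / (s : ℂ)) (Ioi x) volume :=
    integrableOn_kern hf hx measurableSet_Ioi (Ioi_subset_Ioi hx.le)
      (fun s hs => cndP hx (le_of_eq hw.symm) hs)
  have hIci : IntegrableOn (fun s => ((x / s : ℝ) : ℂ) ^ w * f s / (s : ℂ)) (Ici x) volume :=
    (integrableOn_Ici_iff_integrableOn_Ioi).2 hIoi
  have hIoo : IntegrableOn (fun s => ((x / s : ℝ) : ℂ) ^ w * f s / (s : ℂ)) (Ioo 0 x) volume :=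
    integrableOn_kern hf hx measurableSet_Ioo Ioo_subset_Ioi_self
      (fun s hs => cndM hx (le_of_eq hw) hs)
  have hsplit : ∫ s in Ioi (0:ℝ), ((x / s : ℝ) : ℂ) ^ w * f s / (s : ℂ)
      = Km f x w + Kp f x w := by
    have hu := setIntegral_union (s := Ioo 0 x) (t := Ici x) (μ := volume)
      (f := fun s => ((x / s : ℝ) : ℂ) ^ w * f s / (s : ℂ))
      (disjoint_left.2 fun s h1 h2 => absurd h1.2 (not_lt.2 h2))
      measurableSet_Ici hIoo hIci
    rw [show Ioi (0:ℝ) = Ioo 0 x ∪ Ici x from (Ioo_union_Ici_eq_Ioi hx).symm, hu,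
      integral_Ici_eq_integral_Ioi]
    rfl
  have hcongr : ∫ s in Ioi (0:ℝ), ((x / s : ℝ) : ℂ) ^ w * f s / (s : ℂ)
      = ∫ s in Ioi (0:ℝ), (x : ℂ) ^ w * ((s : ℂ) ^ (-w - 1) * f s) := by
    refine setIntegral_congr_fun measurableSet_Ioi fun s hs => kern_eq hx hs w
  rw [add_comm, ← hsplit, hcongr, integral_const_mul]

end Cases


/-- for `φ, ψ ∈ L¹∘(0,∞)` and fixed `x > 0`, the maps `z ↦ y₁ᶻ(x)`,
`z ↦ y₂ᶻ(x)` are analytic on `{Re z < 1/2}` and `{Re z > 1/2}`, extend continuously to their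
closures, and across `Σ = {Re z = 1/2}` they jump by `−x^{−z} r₁(z)` and `x^{z−1} r₂(z)`. -/
theorem statement_4 (φ ψ : ℝ → ℂ)
    (hφ1 : MemL1c φ) (hψ1 : MemL1c ψ) (x : ℝ) (hx : 0 < x) :
    AnalyticOnNhd ℂ (fun z => Y₁ φ z x) {z : ℂ | z.re < 1/2} ∧
    AnalyticOnNhd ℂ (fun z => Y₁ φ z x) {z : ℂ | 1/2 < z.re} ∧
    AnalyticOnNhd ℂ (fun z => Y₂ ψ z x) {z : ℂ | z.re < 1/2} ∧
    AnalyticOnNhd ℂ (fun z => Y₂ ψ z x) {z : ℂ | 1/2 < z.re} ∧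
    (∃ F : ℂ → ℂ, ContinuousOn F {z : ℂ | z.re ≤ 1/2} ∧ ∀ z : ℂ, z.re < 1/2 → F z = Y₁ φ z x) ∧
    (∃ F : ℂ → ℂ, ContinuousOn F {z : ℂ | 1/2 ≤ z.re} ∧ ∀ z : ℂ, 1/2 < z.re → F z = Y₁ φ z x) ∧
    (∃ F : ℂ → ℂ, ContinuousOn F {z : ℂ | z.re ≤ 1/2} ∧ ∀ z : ℂ, z.re < 1/2 → F z = Y₂ ψ z x) ∧
    (∃ F : ℂ → ℂ, ContinuousOn F {z : ℂ | 1/2 ≤ z.re} ∧ ∀ z : ℂ, 1/2 < z.re → F z = Y₂ ψ z x) ∧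
    (∀ z : ℂ, z.re = 1/2 → ∃ Lm Lp : ℂ,
      Tendsto (fun ε : ℝ => Y₁ φ (z - (ε : ℂ)) x) (𝓝[>] 0) (𝓝 Lm) ∧
      Tendsto (fun ε : ℝ => Y₁ φ (z + (ε : ℂ)) x) (𝓝[>] 0) (𝓝 Lp) ∧
      Lm - Lp = -((x : ℂ) ^ (-z) * mr₁ φ z)) ∧
    (∀ z : ℂ, z.re = 1/2 → ∃ Lm Lp : ℂ,
      Tendsto (fun ε : ℝ => Y₂ ψ (z - (ε : ℂ)) x) (𝓝[>] 0) (𝓝 Lm) ∧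
      Tendsto (fun ε : ℝ => Y₂ ψ (z + (ε : ℂ)) x) (𝓝[>] 0) (𝓝 Lp) ∧
      Lm - Lp = (x : ℂ) ^ (z - 1) * mr₂ ψ z) := by
  have hopen1 : IsOpen {z : ℂ | z.re < 1/2} := isOpen_lt Complex.continuous_re continuous_const
  have hopen2 : IsOpen {z : ℂ | 1/2 < z.re} := isOpen_lt continuous_const Complex.continuous_re
  have hY1l : ∀ z : ℂ, z.re < 1/2 → Y₁ φ z x = -(Kp φ x (-z)) := fun z hz => by
    rw [Y₁, if_pos hz]; rfl
  have hY1r : ∀ z : ℂ, ¬(z.re < 1/2) → Y₁ φ z x = Km φ x (-z) := fun z hz => by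
    rw [Y₁, if_neg hz]; rfl
  have hY2l : ∀ z : ℂ, z.re < 1/2 → Y₂ ψ z x = Km ψ x (z - 1) := fun z hz => by
    rw [Y₂, if_pos hz]; rfl
  have hY2r : ∀ z : ℂ, ¬(z.re < 1/2) → Y₂ ψ z x = -(Kp ψ x (z - 1)) := fun z hz => by
    rw [Y₂, if_neg hz]; rfl
  have hnegre : ∀ z : ℂ, (-z).re = -z.re := fun z => by simp
  have hsubre : ∀ z : ℂ, (z - 1).re = z.re - 1 := fun z => by simp
  have hdiffneg : ∀ z₀ : ℂ, DifferentiableAt ℂ (fun z : ℂ => -z) z₀ := fun z₀ =>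
    differentiableAt_id.neg
  have hdiffsub : ∀ z₀ : ℂ, DifferentiableAt ℂ (fun z : ℂ => z - 1) z₀ := fun z₀ =>
    differentiableAt_id.sub_const 1
  refine ⟨?_, ?_, ?_, ?_, ?_, ?_, ?_, ?_, ?_, ?_⟩
  · -- Y₁ analytic on left
    refine DifferentiableOn.analyticOnNhd (fun z₀ hz₀ => ?_) hopen1
    have hz₀' : z₀.re < 1/2 := hz₀
    have hD : DifferentiableAt ℂ (fun z => -(Kp φ x (-z))) z₀ :=
      (DifferentiableAt.comp (g := Kp φ x) (f := fun z : ℂ => -z) z₀ (KpDiff hφ1 hx (by rw [hnegre]; linarith)) (hdiffneg z₀)).neg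
    refine (hD.congr_of_eventuallyEq ?_).differentiableWithinAt
    filter_upwards [hopen1.mem_nhds hz₀] with z hz using hY1l z hz
  · refine DifferentiableOn.analyticOnNhd (fun z₀ hz₀ => ?_) hopen2
    have hz₀' : (1:ℝ)/2 < z₀.re := hz₀
    have hD : DifferentiableAt ℂ (fun z => Km φ x (-z)) z₀ :=
      DifferentiableAt.comp (g := Km φ x) (f := fun z : ℂ => -z) z₀ (KmDiff hφ1 hx (by rw [hnegre]; linarith)) (hdiffneg z₀)
    refine (hD.congr_of_eventuallyEq ?_).differentiableWithinAt
    filter_upwards [hopen2.mem_nhds hz₀] with z hz using hY1r z (not_lt.2 (le_of_lt (by exact hz)))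
  · refine DifferentiableOn.analyticOnNhd (fun z₀ hz₀ => ?_) hopen1
    have hz₀' : z₀.re < 1/2 := hz₀
    have hD : DifferentiableAt ℂ (fun z => Km ψ x (z - 1)) z₀ :=
      DifferentiableAt.comp (g := Km ψ x) (f := fun z : ℂ => z - 1) z₀ (KmDiff hψ1 hx (by rw [hsubre]; linarith)) (hdiffsub z₀)
    refine (hD.congr_of_eventuallyEq ?_).differentiableWithinAt
    filter_upwards [hopen1.mem_nhds hz₀] with z hz using hY2l z hz
  · refine DifferentiableOn.analyticOnNhd (fun z₀ hz₀ => ?_) hopen2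
    have hz₀' : (1:ℝ)/2 < z₀.re := hz₀
    have hD : DifferentiableAt ℂ (fun z => -(Kp ψ x (z - 1))) z₀ :=
      (DifferentiableAt.comp (g := Kp ψ x) (f := fun z : ℂ => z - 1) z₀ (KpDiff hψ1 hx (by rw [hsubre]; linarith)) (hdiffsub z₀)).neg
    refine (hD.congr_of_eventuallyEq ?_).differentiableWithinAt
    filter_upwards [hopen2.mem_nhds hz₀] with z hz using hY2r z (not_lt.2 (le_of_lt (by exact hz)))
  · refine ⟨fun z => -(Kp φ x (-z)), ?_, fun z hz => (hY1l z hz).symm⟩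
    refine ((KpCont hφ1 hx).comp continuous_neg.continuousOn fun z hz => ?_).neg
    have hz' : z.re ≤ 1/2 := hz
    simp only [mem_setOf_eq, id_eq, hnegre]
    linarith
  · refine ⟨fun z => Km φ x (-z), ?_, fun z hz => (hY1r z (not_lt.2 hz.le)).symm⟩
    refine (KmCont hφ1 hx).comp continuous_neg.continuousOn fun z hz => ?_
    have hz' : (1:ℝ)/2 ≤ z.re := hz
    simp only [mem_setOf_eq, id_eq, hnegre]
    linarith
  · refine ⟨fun z => Km ψ x (z - 1), ?_, fun z hz => (hY2l z hz).symm⟩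
    refine (KmCont hψ1 hx).comp (continuous_id.sub continuous_const).continuousOn
      fun z hz => ?_
    have hz' : z.re ≤ 1/2 := hz
    simp only [mem_setOf_eq, id_eq, hsubre]
    linarith
  · refine ⟨fun z => -(Kp ψ x (z - 1)), ?_, fun z hz => (hY2r z (not_lt.2 hz.le)).symm⟩
    refine ((KpCont hψ1 hx).comp (continuous_id.sub continuous_const).continuousOn
      fun z hz => ?_).neg
    have hz' : (1:ℝ)/2 ≤ z.re := hz
    simp only [mem_setOf_eq, Pi.sub_apply, id_eq, hsubre]
    linarith
  · -- jump for Y₁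
    intro z hz
    have h0 : Tendsto (fun ε : ℝ => (ε:ℂ)) (𝓝[>](0:ℝ)) (𝓝 0) :=
      (Complex.continuous_ofReal.tendsto 0).mono_left nhdsWithin_le_nhds
    refine ⟨-(Kp φ x (-z)), Km φ x (-z), ?_, ?_, ?_⟩
    · have hg : Tendsto (fun ε : ℝ => -(z - (ε:ℂ))) (𝓝[>](0:ℝ)) (𝓝 (-z)) := by
        simpa using ((tendsto_const_nhds (x := z)).sub h0).neg
      have hT := tendsto_kern (l := 𝓝[>](0:ℝ)) hφ1 hx measurableSet_Ioi (Ioi_subset_Ioi hx.le)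
        (g := fun ε : ℝ => -(z - (ε:ℂ))) hg ?_
      · refine Tendsto.congr' ?_ hT.neg
        filter_upwards [self_mem_nhdsWithin] with ε hε
        have hε' : (0:ℝ) < ε := hε
        exact (hY1l _ (by simp only [Complex.sub_re, Complex.ofReal_re, hz]; linarith)).symm
      · filter_upwards [self_mem_nhdsWithin] with ε hε
        have hε' : (0:ℝ) < ε := hε
        intro s hs
        refine cndP hx ?_ hs
        simp only [Complex.neg_re, Complex.sub_re, Complex.ofReal_re, hz]
        linarith
    · have hg : Tendsto (fun ε : ℝ => -(z + (ε:ℂ))) (𝓝[>](0:ℝ)) (𝓝 (-z)) := by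
        simpa using ((tendsto_const_nhds (x := z)).add h0).neg
      have hT := tendsto_kern (l := 𝓝[>](0:ℝ)) (A := Ioo 0 x) hφ1 hx measurableSet_Ioo Ioo_subset_Ioi_self
        (g := fun ε : ℝ => -(z + (ε:ℂ))) hg ?_
      · refine Tendsto.congr' ?_ hT
        filter_upwards [self_mem_nhdsWithin] with ε hε
        have hε' : (0:ℝ) < ε := hε
        exact (hY1r _ (by simp only [Complex.add_re, Complex.ofReal_re, hz]; intro h; linarith)).symm
      · filter_upwards [self_mem_nhdsWithin] with ε hε
        have hε' : (0:ℝ) < ε := hε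
        intro s hs
        refine cndM hx ?_ hs
        simp only [Complex.neg_re, Complex.add_re, Complex.ofReal_re, hz]
        linarith
    · have hw : (-z).re = -(1/2) := by rw [hnegre, hz]
      have hj := jump_eq hφ1 hx hw
      rw [show -(-z) - 1 = z - 1 by ring] at hj
      rw [mr₁]
      rw [← hj]
      ring
  · -- jump for Y₂
    intro z hz
    have h0 : Tendsto (fun ε : ℝ => (ε:ℂ)) (𝓝[>](0:ℝ)) (𝓝 0) :=
      (Complex.continuous_ofReal.tendsto 0).mono_left nhdsWithin_le_nhds
    refine ⟨Km ψ x (z - 1), -(Kp ψ x (z - 1)), ?_, ?_, ?_⟩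
    · have hg : Tendsto (fun ε : ℝ => z - (ε:ℂ) - 1) (𝓝[>](0:ℝ)) (𝓝 (z - 1)) := by
        simpa using (((tendsto_const_nhds (x := z)).sub h0).sub_const 1)
      have hT := tendsto_kern (l := 𝓝[>](0:ℝ)) (A := Ioo 0 x) hψ1 hx measurableSet_Ioo Ioo_subset_Ioi_self
        (g := fun ε : ℝ => z - (ε:ℂ) - 1) hg ?_
      · refine Tendsto.congr' ?_ hT
        filter_upwards [self_mem_nhdsWithin] with ε hε
        have hε' : (0:ℝ) < ε := hε
        exact (hY2l _ (by simp only [Complex.sub_re, Complex.ofReal_re, hz]; linarith)).symm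
      · filter_upwards [self_mem_nhdsWithin] with ε hε
        have hε' : (0:ℝ) < ε := hε
        intro s hs
        refine cndM hx ?_ hs
        simp only [Complex.sub_re, Complex.ofReal_re, Complex.one_re, hz]
        linarith
    · have hg : Tendsto (fun ε : ℝ => z + (ε:ℂ) - 1) (𝓝[>](0:ℝ)) (𝓝 (z - 1)) := by
        simpa using (((tendsto_const_nhds (x := z)).add h0).sub_const 1)
      have hT := tendsto_kern (l := 𝓝[>](0:ℝ)) hψ1 hx measurableSet_Ioi (Ioi_subset_Ioi hx.le)
        (g := fun ε : ℝ => z + (ε:ℂ) - 1) hg ?_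
      · refine Tendsto.congr' ?_ hT.neg
        filter_upwards [self_mem_nhdsWithin] with ε hε
        have hε' : (0:ℝ) < ε := hε
        exact (hY2r _ (by simp only [Complex.add_re, Complex.ofReal_re, hz]; intro h; linarith)).symm
      · filter_upwards [self_mem_nhdsWithin] with ε hε
        have hε' : (0:ℝ) < ε := hε
        intro s hs
        refine cndP hx ?_ hs
        simp only [Complex.sub_re, Complex.add_re, Complex.ofReal_re, Complex.one_re, hz]
        linarith
    · have hw : (z - 1).re = -(1/2) := by rw [hsubre, hz]; norm_num
      have hj := jump_eq hψ1 hx hw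
      rw [show -(z - 1) - 1 = -z by ring] at hj
      rw [mr₂]
      rw [← hj]
      ring
end

section
/- If the sequences (q_n)_{n≥0}, (p_n)_{n≥0}, (q*_n)_{n≥0}, (p*_n)_{n≥0} of differentiable functions on an open interval J ⊆ ℝ satisfy the Zakharov–Shabat system for all n ≥ 0, then for every n ≥ 0 the function I_n(t) := p_{n+1}(t) + (−1)^n p*_{n+1}(t) + Σ_{k=0}^{n} (−1)^k ( q*_k(t)·q_{n−k}(t) − p*_k(t)·p_{n−k}(t) ) is constant on J. -/
open Set Filter Topology

/-- if `(q_n), (p_n), (q*_n), (p*_n)` satisfy the Zakharov–Shabat system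
`q_n′ = q_{n+1} − q₀ p_n`, `p_n′ = −q₀* q_n`, `(q*_n)′ = q*_{n+1} − q₀* p*_n`,
`(p*_n)′ = −q₀ q*_n` on an open interval `J ⊆ ℝ`, then for each `n ≥ 0`
`I_n = p_{n+1} + (−1)ⁿ p*_{n+1} + Σ_{k=0}^n (−1)ᵏ (q*_k q_{n−k} − p*_k p_{n−k})`
is constant on `J`. -/
theorem statement_13 (J : Set ℝ) (hJo : IsOpen J) (hJc : J.OrdConnected)
    (q p qs ps : ℕ → ℝ → ℂ)
    (hq : ∀ n : ℕ, ∀ t ∈ J, HasDerivAt (q n) (q (n+1) t - q 0 t * p n t) t)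
    (hp : ∀ n : ℕ, ∀ t ∈ J, HasDerivAt (p n) (-(qs 0 t * q n t)) t)
    (hqs : ∀ n : ℕ, ∀ t ∈ J, HasDerivAt (qs n) (qs (n+1) t - qs 0 t * ps n t) t)
    (hps : ∀ n : ℕ, ∀ t ∈ J, HasDerivAt (ps n) (-(q 0 t * qs n t)) t)
    (n : ℕ) :
    ∀ t ∈ J, ∀ s ∈ J,
      p (n+1) t + (-1 : ℂ) ^ n * ps (n+1) t +
        ∑ k ∈ Finset.range (n+1), (-1 : ℂ) ^ k * (qs k t * q (n-k) t - ps k t * p (n-k) t)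
      =
      p (n+1) s + (-1 : ℂ) ^ n * ps (n+1) s +
        ∑ k ∈ Finset.range (n+1), (-1 : ℂ) ^ k * (qs k s * q (n-k) s - ps k s * p (n-k) s) := by
  set F : ℝ → ℂ := fun t =>
      p (n+1) t + (-1 : ℂ) ^ n * ps (n+1) t +
        ∑ k ∈ Finset.range (n+1), (-1 : ℂ) ^ k * (qs k t * q (n-k) t - ps k t * p (n-k) t)
    with hF
  have key : ∀ t ∈ J, HasDerivAt F 0 t := by
    intro t ht
    have h1 := hp (n+1) t ht
    have h2 := (hps (n+1) t ht).const_mul ((-1 : ℂ) ^ n)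
    have h3 : HasDerivAt
        (fun t => ∑ k ∈ Finset.range (n+1),
          (-1 : ℂ) ^ k * (qs k t * q (n-k) t - ps k t * p (n-k) t))
        (∑ k ∈ Finset.range (n+1),
          ((-1 : ℂ) ^ k * (qs k t * q (n+1-k) t)
            - (-1 : ℂ) ^ (k+1) * (qs (k+1) t * q (n+1-(k+1)) t))) t := by
      apply HasDerivAt.fun_sum
      intro k hk
      have hkn : k ≤ n := Nat.lt_succ_iff.mp (Finset.mem_range.mp hk)
      have hD : HasDerivAt (fun t => (-1 : ℂ) ^ k * (qs k t * q (n-k) t - ps k t * p (n-k) t))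
          ((-1 : ℂ) ^ k *
            (((qs (k+1) t - qs 0 t * ps k t) * q (n-k) t
              + qs k t * (q (n-k+1) t - q 0 t * p (n-k) t))
            - ((-(q 0 t * qs k t)) * p (n-k) t + ps k t * (-(qs 0 t * q (n-k) t))))) t := by
        exact (((hqs k t ht).mul (hq (n-k) t ht)).sub
          ((hps k t ht).mul (hp (n-k) t ht))).const_mul _
      refine hD.congr_deriv ?_
      have e1 : n + 1 - k = (n - k) + 1 := by omega
      have e2 : n + 1 - (k + 1) = n - k := by omega
      rw [e1, e2]
      ring
    have hsum := Finset.sum_range_sub'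
      (fun k => (-1 : ℂ) ^ k * (qs k t * q (n+1-k) t)) (n+1)
    rw [hsum] at h3
    have := (h1.add h2).add h3
    refine this.congr_deriv ?_
    simp only [Nat.sub_self, Nat.sub_zero, pow_zero, pow_succ]
    ring
  have hconv : Convex ℝ J := convex_iff_ordConnected.mpr hJc
  intro t ht s hs
  have hdiff : DifferentiableOn ℝ F J := fun x hx =>
    ((key x hx).differentiableAt).differentiableWithinAt
  have hfd : ∀ x ∈ J, fderivWithin ℝ F J x = 0 := by
    intro x hx
    rw [fderivWithin_eq_fderiv (hJo.uniqueDiffOn x hx) (key x hx).differentiableAt,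
      (key x hx).hasFDerivAt.fderiv]
    ext
    simp
  exact hconv.is_const_of_fderivWithin_eq_zero hdiff hfd ht hs
end

section
/- If the sequences (q_n)_{n≥0}, (p_n)_{n≥0}, (q*_n)_{n≥0}, (p*_n)_{n≥0} of differentiable functions on an open interval J ⊆ (0,∞) satisfy the multiplicative Zakharov–Shabat system for all n ≥ 0, then for every n ≥ 0 the function I_n(t) := p_{n+1}(t) + (−1)^n p*_{n+1}(t) − Σ_{k=0}^{n} (−1)^k ( q*_k(t)·q_{n−k}(t) − p*_k(t)·p_{n−k}(t) ) is constant on J. -/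
open Set Filter Topology

/-- if `(q_n), (p_n), (q*_n), (p*_n)` satisfy the multiplicative
Zakharov–Shabat system `t q_n′ = q_{n+1} + q₀ p_n`, `t p_n′ = q₀* q_n`,
`t (q*_n)′ = q*_{n+1} + q₀* p*_n`, `t (p*_n)′ = q₀ q*_n` on an open interval `J ⊆ (0,∞)`,
then for each `n ≥ 0`
`I_n = p_{n+1} + (−1)ⁿ p*_{n+1} − Σ_{k=0}^n (−1)ᵏ (q*_k q_{n−k} − p*_k p_{n−k})`
is constant on `J`. -/
theorem statement_14 (J : Set ℝ) (hJo : IsOpen J) (hJc : J.OrdConnected)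
    (hJpos : J ⊆ Ioi 0)
    (q p qs ps : ℕ → ℝ → ℂ)
    (hq : ∀ n : ℕ, ∀ t ∈ J, ∃ d : ℂ,
      HasDerivAt (q n) d t ∧ (t : ℂ) * d = q (n+1) t + q 0 t * p n t)
    (hp : ∀ n : ℕ, ∀ t ∈ J, ∃ d : ℂ,
      HasDerivAt (p n) d t ∧ (t : ℂ) * d = qs 0 t * q n t)
    (hqs : ∀ n : ℕ, ∀ t ∈ J, ∃ d : ℂ,
      HasDerivAt (qs n) d t ∧ (t : ℂ) * d = qs (n+1) t + qs 0 t * ps n t)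
    (hps : ∀ n : ℕ, ∀ t ∈ J, ∃ d : ℂ,
      HasDerivAt (ps n) d t ∧ (t : ℂ) * d = q 0 t * qs n t)
    (n : ℕ) :
    ∀ t ∈ J, ∀ s ∈ J,
      p (n+1) t + (-1 : ℂ) ^ n * ps (n+1) t -
        ∑ k ∈ Finset.range (n+1), (-1 : ℂ) ^ k * (qs k t * q (n-k) t - ps k t * p (n-k) t)
      =
      p (n+1) s + (-1 : ℂ) ^ n * ps (n+1) s -
        ∑ k ∈ Finset.range (n+1), (-1 : ℂ) ^ k * (qs k s * q (n-k) s - ps k s * p (n-k) s) := by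
  classical
  choose dq hdq hdqe using hq
  choose dp hdp hdpe using hp
  choose dqs hdqs hdqse using hqs
  choose dps hdps hdpse using hps
  set f : ℝ → ℂ := fun t =>
    p (n+1) t + (-1 : ℂ) ^ n * ps (n+1) t -
      ∑ k ∈ Finset.range (n+1), (-1 : ℂ) ^ k * (qs k t * q (n-k) t - ps k t * p (n-k) t)
    with hf
  have key : ∀ t ∈ J, HasDerivAt f 0 t := by
    intro t ht
    have htpos : (0:ℝ) < t := hJpos ht
    have ht0 : (t:ℂ) ≠ 0 := by exact_mod_cast htpos.ne'
    set dA : ℂ := dp (n+1) t ht + (-1:ℂ)^n * dps (n+1) t ht -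
      ∑ k ∈ Finset.range (n+1), (-1:ℂ)^k *
        ((dqs k t ht * q (n-k) t + qs k t * dq (n-k) t ht) -
         (dps k t ht * p (n-k) t + ps k t * dp (n-k) t ht)) with hdA
    have hdf : HasDerivAt f dA t := by
      apply HasDerivAt.sub
      · exact (hdp (n+1) t ht).add ((hdps (n+1) t ht).const_mul _)
      · apply HasDerivAt.fun_sum
        intro k hk
        exact (((hdqs k t ht).mul (hdq (n-k) t ht)).sub
          ((hdps k t ht).mul (hdp (n-k) t ht))).const_mul _
    have expand : (t:ℂ) * dA =
        (↑t * dp (n+1) t ht) + (-1:ℂ)^n * (↑t * dps (n+1) t ht) -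
        ∑ k ∈ Finset.range (n+1), (-1:ℂ)^k *
          (((↑t * dqs k t ht) * q (n-k) t + qs k t * (↑t * dq (n-k) t ht)) -
           ((↑t * dps k t ht) * p (n-k) t + ps k t * (↑t * dp (n-k) t ht))) := by
      rw [hdA, mul_sub, Finset.mul_sum]
      congr 1
      · ring
      · exact Finset.sum_congr rfl fun k _ => by ring
    have hkey : (t:ℂ) * dA = 0 := by
      rw [expand, hdpe (n+1) t ht, hdpse (n+1) t ht]
      have hterm : ∀ k ∈ Finset.range (n+1), (-1:ℂ)^k *
          (((↑t * dqs k t ht) * q (n-k) t + qs k t * (↑t * dq (n-k) t ht)) -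
           ((↑t * dps k t ht) * p (n-k) t + ps k t * (↑t * dp (n-k) t ht)))
          = (fun k => (-1:ℂ)^k * (qs k t * q (n+1-k) t)) k -
            (fun k => (-1:ℂ)^k * (qs k t * q (n+1-k) t)) (k+1) := by
        intro k hk
        have hk' : k ≤ n := Nat.lt_succ_iff.mp (Finset.mem_range.mp hk)
        rw [hdqse k t ht, hdqe (n-k) t ht, hdpse k t ht, hdpe (n-k) t ht]
        have h1 : n - k + 1 = n + 1 - k := by omega
        have h2 : n + 1 - (k+1) = n - k := by omega
        simp only [h1, h2, pow_succ]
        ring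
      rw [Finset.sum_congr rfl hterm,
        Finset.sum_range_sub' (fun k => (-1:ℂ)^k * (qs k t * q (n+1-k) t))]
      simp only [Nat.sub_self, Nat.sub_zero, pow_zero, pow_succ]
      ring
    have hdA0 : dA = 0 := by
      rcases mul_eq_zero.mp hkey with h | h
      · exact absurd h ht0
      · exact h
    rwa [hdA0] at hdf
  intro t ht s hs
  have hconv : Convex ℝ J := hJc.convex
  have hdiff : DifferentiableOn ℝ f J := fun x hx =>
    ((key x hx).differentiableAt).differentiableWithinAt
  have hfder : ∀ x ∈ J, fderivWithin ℝ f J x = 0 := by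
    intro x hx
    rw [fderivWithin_of_isOpen hJo hx, (key x hx).hasFDerivAt.fderiv]
    ext
    simp
  exact hconv.is_const_of_fderivWithin_eq_zero hdiff hfder ht hs
end

section
/- Let ε > 0, a ≥ 2 + ε, and let φ : ℝ → ℂ be continuously differentiable with |φ(x)| ≤ e^{−a|x|} and |φ′(x)| ≤ e^{−a|x|} for all x ∈ ℝ. Then the formula r₁(z) := −i ∫_ℝ φ(y) e^{−izy} dy defines a function on the closed strip {z ∈ ℂ : |Im z| ≤ ε} that is analytic on its interior and continuous on the strip, and it satisfies |r₁(z)| ≤ 2a/((a−ε)(a+ε)) < 1 for all z with |Im z| ≤ ε; moreover, for all such z one has z·r₁(z) = −∫_ℝ φ′(y) e^{−izy} dy, and hence |z·r₁(z)| ≤ 2a/((a−ε)(a+ε)) < 1 on the same closed strip. -/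
open MeasureTheory Set Complex Filter Topology

lemma norm_cexp_aux (z : ℂ) (y : ℝ) :
    ‖Complex.exp (-Complex.I * z * (y : ℂ))‖ = Real.exp (z.im * y) := by
  rw [Complex.norm_exp]
  congr 1
  simp [Complex.mul_re, Complex.mul_im]

lemma integrable_exp_abs' {c : ℝ} (hc : 0 < c) :
    Integrable (fun y : ℝ => Real.exp (-c * |y|)) := by
  have h1 : IntegrableOn (fun y : ℝ => Real.exp (-c * |y|)) (Ioi 0) :=
    (exp_neg_integrableOn_Ioi 0 hc).congr_fun
      (fun x hx => by rw [abs_of_pos hx]) measurableSet_Ioi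
  have h2 : IntegrableOn (fun y : ℝ => Real.exp (-c * |y|)) (Iic 0) := by
    rw [← Measure.map_neg_eq_self (volume : Measure ℝ)]
    have m : MeasurableEmbedding fun x : ℝ => -x :=
      (Homeomorph.neg ℝ).measurableEmbedding
    rw [m.integrableOn_map_iff]
    simp_rw [Function.comp_def, abs_neg, neg_preimage, neg_Iic, neg_zero]
    exact Iff.mpr integrableOn_Ici_iff_integrableOn_Ioi h1
  rw [← integrableOn_univ, ← Iic_union_Ioi (a := (0:ℝ))]
  exact h2.union h1

lemma int_exp_Ioi {c : ℝ} (hc : 0 < c) :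
    ∫ x in Ioi (0:ℝ), Real.exp (-(c * x)) = 1 / c := by
  have := integral_comp_mul_left_Ioi (fun x => Real.exp (-x)) 0 hc
  simp only [mul_zero, smul_eq_mul, integral_exp_neg_Ioi_zero] at this
  rw [this, mul_one, one_div]

lemma int_exp_decay {a u : ℝ} (h : |u| < a) :
    ∫ y : ℝ, Real.exp (-a * |y| + u * y) = 1 / (a - u) + 1 / (a + u) := by
  have h1 : 0 < a - u := by cases abs_lt.mp h; linarith
  have h2 : 0 < a + u := by cases abs_lt.mp h; linarith
  have hIoi : ∫ y in Ioi (0:ℝ), Real.exp (-a * |y| + u * y) = 1 / (a - u) := by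
    rw [← int_exp_Ioi h1]
    refine setIntegral_congr_fun measurableSet_Ioi fun x hx => ?_
    rw [abs_of_pos hx]; ring_nf
  have hIic : ∫ y in Iic (0:ℝ), Real.exp (-a * |y| + u * y) = 1 / (a + u) := by
    have := integral_comp_neg_Iic (0:ℝ) (fun x => Real.exp (-((a + u) * x)))
    rw [neg_zero] at this
    rw [← int_exp_Ioi h2, ← this]
    refine setIntegral_congr_fun measurableSet_Iic fun x hx => ?_
    rw [abs_of_nonpos hx]; ring_nf
  have hint : Integrable (fun y : ℝ => Real.exp (-a * |y| + u * y)) := by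
    refine (integrable_exp_abs' (c := a - |u|) (by linarith)).mono'
      ((Real.continuous_exp.comp (by continuity)).aestronglyMeasurable)
      (ae_of_all _ fun y => ?_)
    rw [Real.norm_eq_abs, abs_of_pos (Real.exp_pos _), Real.exp_le_exp]
    have : u * y ≤ |u| * |y| := le_trans (le_abs_self _) (by rw [abs_mul])
    nlinarith [abs_nonneg y]
  rw [← intervalIntegral.integral_Iic_add_Ioi (hint.integrableOn) (hint.integrableOn),
    hIic, hIoi, add_comm]

lemma int_exp_decay_integrable {a u : ℝ} (h : |u| < a) :
    Integrable (fun y : ℝ => Real.exp (-a * |y| + u * y)) := by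
  refine (integrable_exp_abs' (c := a - |u|) (by linarith)).mono'
    ((Real.continuous_exp.comp (by continuity)).aestronglyMeasurable)
    (ae_of_all _ fun y => ?_)
  rw [Real.norm_eq_abs, abs_of_pos (Real.exp_pos _), Real.exp_le_exp]
  have : u * y ≤ |u| * |y| := le_trans (le_abs_self _) (by rw [abs_mul])
  nlinarith [abs_nonneg y]

/-- key norm bound for `∫ f y e^{-izy}` when `‖f‖ ≤ exp (-a|·|)`. -/
lemma norm_int_le {f : ℝ → ℂ} {a : ℝ} (hf : Continuous f)
    (hb : ∀ x, ‖f x‖ ≤ Real.exp (-a * |x|)) {z : ℂ} (hz : |z.im| < a) :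
    ‖∫ y : ℝ, f y * Complex.exp (-Complex.I * z * (y : ℂ))‖ ≤
      1 / (a - z.im) + 1 / (a + z.im) := by
  rw [← int_exp_decay hz]
  refine norm_integral_le_of_norm_le (int_exp_decay_integrable hz) (ae_of_all _ fun y => ?_)
  rw [norm_mul, norm_cexp_aux, Real.exp_add]
  exact mul_le_mul_of_nonneg_right (hb y) (Real.exp_pos _).le

lemma arith_bound {a ε u : ℝ} (hε : 0 < ε) (ha : 2 + ε ≤ a) (hu : |u| ≤ ε) :
    1 / (a - u) + 1 / (a + u) ≤ 2 * a / ((a - ε) * (a + ε)) := by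
  obtain ⟨hu1, hu2⟩ := abs_le.mp hu
  have h1 : 0 < a - u := by linarith
  have h2 : 0 < a + u := by linarith
  have h3 : 0 < a - ε := by linarith
  have h4 : 0 < a + ε := by linarith
  have heq : 1 / (a - u) + 1 / (a + u) = 2 * a / ((a - u) * (a + u)) := by
    field_simp; ring
  rw [heq]
  apply div_le_div_of_nonneg_left (by linarith) (by positivity)
  nlinarith

/-- Integrability of `f y * exp(-izy)` for `|Im z| ≤ b < a`. -/
lemma integrable_aux {f : ℝ → ℂ} {a b : ℝ} (hf : Continuous f)
    (hb : ∀ x, ‖f x‖ ≤ Real.exp (-a * |x|)) (hab : b < a) {z : ℂ} (hz : |z.im| ≤ b) :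
    Integrable (fun y : ℝ => f y * Complex.exp (-Complex.I * z * (y : ℂ))) := by
  refine (integrable_exp_abs' (c := a - b) (by linarith)).mono'
    ((hf.mul (Complex.continuous_exp.comp
      (continuous_const.mul Complex.continuous_ofReal))).aestronglyMeasurable)
    (ae_of_all _ fun y => ?_)
  rw [norm_mul, norm_cexp_aux]
  calc ‖f y‖ * Real.exp (z.im * y) ≤ Real.exp (-a * |y|) * Real.exp (z.im * y) :=
        mul_le_mul_of_nonneg_right (hb y) (Real.exp_pos _).le
    _ ≤ Real.exp (-(a - b) * |y|) := by
        rw [← Real.exp_add, Real.exp_le_exp]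
        have h1 : z.im * y ≤ |z.im| * |y| := le_trans (le_abs_self _) (by rw [abs_mul])
        nlinarith [abs_nonneg y]

/-- for `ε > 0`, `a ≥ 2 + ε` and `φ` continuously differentiable with
`|φ(x)| ≤ e^{−a|x|}` and `|φ′(x)| ≤ e^{−a|x|}`, the Fourier transform `r₁` is defined on the
closed strip `|Im z| ≤ ε`, analytic in its interior, continuous on the strip, and satisfies
`|r₁(z)| ≤ 2a/((a−ε)(a+ε)) < 1`; moreover `z·r₁(z) = −∫_ℝ φ′(y) e^{−izy} dy`, whence
`|z·r₁(z)| ≤ 2a/((a−ε)(a+ε)) < 1` on the same strip. -/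
theorem statement_15 (ε a : ℝ) (hε : 0 < ε) (ha : 2 + ε ≤ a)
    (φ φ' : ℝ → ℂ)
    (hφd : ∀ x : ℝ, HasDerivAt φ (φ' x) x) (hφ'c : Continuous φ')
    (hφb : ∀ x : ℝ, ‖φ x‖ ≤ Real.exp (-a * |x|))
    (hφ'b : ∀ x : ℝ, ‖φ' x‖ ≤ Real.exp (-a * |x|)) :
    (∀ z : ℂ, |z.im| ≤ ε →
        Integrable (fun y : ℝ => φ y * Complex.exp (-Complex.I * z * (y : ℂ))) volume) ∧
    AnalyticOnNhd ℂ (r₁ φ) {z : ℂ | |z.im| < ε} ∧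
    ContinuousOn (r₁ φ) {z : ℂ | |z.im| ≤ ε} ∧
    2 * a / ((a - ε) * (a + ε)) < 1 ∧
    (∀ z : ℂ, |z.im| ≤ ε → ‖r₁ φ z‖ ≤ 2 * a / ((a - ε) * (a + ε))) ∧
    (∀ z : ℂ, |z.im| ≤ ε →
        z * r₁ φ z = -∫ y : ℝ, φ' y * Complex.exp (-Complex.I * z * (y : ℂ))) ∧
    (∀ z : ℂ, |z.im| ≤ ε → ‖z * r₁ φ z‖ ≤ 2 * a / ((a - ε) * (a + ε))) := by
  have hφc : Continuous φ := by
    rw [continuous_iff_continuousAt]; exact fun x => (hφd x).continuousAt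
  have hεa : ε < a := by linarith
  -- Part 1
  have part1 : ∀ z : ℂ, |z.im| ≤ ε →
      Integrable (fun y : ℝ => φ y * Complex.exp (-Complex.I * z * (y : ℂ))) volume :=
    fun z hz => integrable_aux hφc hφb hεa hz
  -- strip bound inside ball of radius 1
  have hball : ∀ z₀ : ℂ, |z₀.im| ≤ ε → ∀ z ∈ Metric.ball z₀ 1, |z.im| ≤ ε + 1 := by
    intro z₀ hz₀ z hz
    have : |z.im - z₀.im| ≤ ‖z - z₀‖ := by
      rw [← Complex.sub_im]; exact Complex.abs_im_le_norm _
    rw [Metric.mem_ball, dist_eq_norm] at hz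
    have := abs_sub_abs_le_abs_sub z.im z₀.im
    linarith
  set c : ℝ := a - (ε + 1) with hc
  have hcpos : (1:ℝ) ≤ c := by simp only [hc]; linarith
  -- differentiability at every point of the closed strip
  have diffAt : ∀ z₀ : ℂ, |z₀.im| ≤ ε → DifferentiableAt ℂ (r₁ φ) z₀ := by
    intro z₀ hz₀
    have key := hasDerivAt_integral_of_dominated_loc_of_deriv_le
      (F := fun z (y : ℝ) => φ y * Complex.exp (-Complex.I * z * (y : ℂ)))
      (F' := fun z (y : ℝ) => φ y *
        (Complex.exp (-Complex.I * z * (y : ℂ)) * (-Complex.I * (y : ℂ))))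
      (x₀ := z₀) (bound := fun y => (2 / c) * Real.exp (-(c / 2) * |y|))
      (s := Metric.ball z₀ 1) (Metric.ball_mem_nhds z₀ one_pos)
      (Eventually.of_forall fun z => ((hφc.mul (Complex.continuous_exp.comp
        (continuous_const.mul Complex.continuous_ofReal))).aestronglyMeasurable))
      (part1 z₀ hz₀)
      (((hφc.mul ((Complex.continuous_exp.comp
        (continuous_const.mul Complex.continuous_ofReal)).mul
        (continuous_const.mul Complex.continuous_ofReal))).aestronglyMeasurable))
      (ae_of_all _ ?_)
      ((integrable_exp_abs' (c := c / 2) (by linarith)).const_mul _)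
      (ae_of_all _ ?_)
    · exact (key.2.differentiableAt.const_mul (-Complex.I) : _)
    · -- bound on derivative
      intro y z hz
      have him : |z.im| ≤ ε + 1 := hball z₀ hz₀ z hz
      have hnorm : ‖φ y * (Complex.exp (-Complex.I * z * (y : ℂ)) * (-Complex.I * (y : ℂ)))‖ =
          ‖φ y‖ * Real.exp (z.im * y) * |y| := by
        rw [norm_mul, norm_mul, norm_cexp_aux, norm_mul, norm_neg, Complex.norm_I, one_mul,
          Complex.norm_real, Real.norm_eq_abs]
        ring
      rw [hnorm]
      have h1 : ‖φ y‖ * Real.exp (z.im * y) ≤ Real.exp (-c * |y|) := by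
        calc ‖φ y‖ * Real.exp (z.im * y) ≤ Real.exp (-a * |y|) * Real.exp (z.im * y) :=
              mul_le_mul_of_nonneg_right (hφb y) (Real.exp_pos _).le
          _ ≤ Real.exp (-c * |y|) := by
              rw [← Real.exp_add, Real.exp_le_exp]
              have : z.im * y ≤ |z.im| * |y| := le_trans (le_abs_self _) (by rw [abs_mul])
              have h2 : |z.im| * |y| ≤ (ε + 1) * |y| :=
                mul_le_mul_of_nonneg_right him (abs_nonneg y)
              simp only [hc]; nlinarith [abs_nonneg y]
      have h2 : |y| ≤ (2 / c) * Real.exp ((c / 2) * |y|) := by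
        have h3 := Real.add_one_le_exp ((c / 2) * |y|)
        have h4 : (0:ℝ) < c := by linarith
        rw [div_mul_eq_mul_div, le_div_iff₀ h4]
        nlinarith [abs_nonneg y]
      calc ‖φ y‖ * Real.exp (z.im * y) * |y| ≤ Real.exp (-c * |y|) * |y| :=
            mul_le_mul_of_nonneg_right h1 (abs_nonneg y)
        _ ≤ Real.exp (-c * |y|) * ((2 / c) * Real.exp ((c / 2) * |y|)) :=
            mul_le_mul_of_nonneg_left h2 (Real.exp_pos _).le
        _ = (2 / c) * (Real.exp (-c * |y|) * Real.exp ((c / 2) * |y|)) := by ring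
        _ = (2 / c) * Real.exp (-(c / 2) * |y|) := by rw [← Real.exp_add]; ring_nf
    · -- differentiability in z
      intro y z _
      have h1 : HasDerivAt (fun w : ℂ => -Complex.I * w * (y : ℂ)) (-Complex.I * (y : ℂ)) z := by
        simpa using (((hasDerivAt_id z).const_mul (-Complex.I)).mul_const ((y : ℂ)))
      exact (h1.cexp).const_mul (φ y)
  -- Part 2 : analyticity
  have part2 : AnalyticOnNhd ℂ (r₁ φ) {z : ℂ | |z.im| < ε} := by
    refine DifferentiableOn.analyticOnNhd (fun z hz => (diffAt z hz.le).differentiableWithinAt) ?_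
    have : {z : ℂ | |z.im| < ε} = (fun z : ℂ => |z.im|) ⁻¹' Iio ε := rfl
    rw [this]
    exact isOpen_Iio.preimage (_root_.continuous_abs.comp Complex.continuous_im)
  -- Part 3 : continuity
  have part3 : ContinuousOn (r₁ φ) {z : ℂ | |z.im| ≤ ε} := by
    intro z₀ hz₀
    refine ContinuousAt.continuousWithinAt ?_
    have hcont : ContinuousAt (fun z : ℂ =>
        ∫ y : ℝ, φ y * Complex.exp (-Complex.I * z * (y : ℂ))) z₀ := by
      refine continuousAt_of_dominated
        (Eventually.of_forall fun z => ((hφc.mul (Complex.continuous_exp.comp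
          (continuous_const.mul Complex.continuous_ofReal))).aestronglyMeasurable))
        ?_ (integrable_exp_abs' (c := c) (by linarith)) (ae_of_all _ fun y => by fun_prop)
      filter_upwards [Metric.ball_mem_nhds z₀ one_pos] with z hz
      refine ae_of_all _ fun y => ?_
      have him : |z.im| ≤ ε + 1 := hball z₀ hz₀ z hz
      rw [norm_mul, norm_cexp_aux]
      calc ‖φ y‖ * Real.exp (z.im * y) ≤ Real.exp (-a * |y|) * Real.exp (z.im * y) :=
            mul_le_mul_of_nonneg_right (hφb y) (Real.exp_pos _).le
        _ ≤ Real.exp (-c * |y|) := by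
            rw [← Real.exp_add, Real.exp_le_exp]
            have : z.im * y ≤ |z.im| * |y| := le_trans (le_abs_self _) (by rw [abs_mul])
            have h2 : |z.im| * |y| ≤ (ε + 1) * |y| :=
              mul_le_mul_of_nonneg_right him (abs_nonneg y)
            simp only [hc]; nlinarith [abs_nonneg y]
    exact (hcont.const_mul (-Complex.I) : _)
  -- Part 4 : arithmetic
  have part4 : 2 * a / ((a - ε) * (a + ε)) < 1 := by
    rw [div_lt_one (by nlinarith)]
    nlinarith
  -- Part 5 : norm bound
  have part5 : ∀ z : ℂ, |z.im| ≤ ε → ‖r₁ φ z‖ ≤ 2 * a / ((a - ε) * (a + ε)) := by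
    intro z hz
    have : ‖r₁ φ z‖ = ‖∫ y : ℝ, φ y * Complex.exp (-Complex.I * z * (y : ℂ))‖ := by
      rw [r₁, norm_mul, norm_neg, Complex.norm_I, one_mul]
    rw [this]
    exact le_trans (norm_int_le hφc hφb (lt_of_le_of_lt hz hεa)) (arith_bound hε ha hz)
  -- Part 6 : integration by parts
  have part6 : ∀ z : ℂ, |z.im| ≤ ε →
      z * r₁ φ z = -∫ y : ℝ, φ' y * Complex.exp (-Complex.I * z * (y : ℂ)) := by
    intro z hz
    set e : ℝ → ℂ := fun y => Complex.exp (-Complex.I * z * (y : ℂ)) with he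
    have hde : ∀ y : ℝ, HasDerivAt e (-Complex.I * z * e y) y := by
      intro y
      have h1 : HasDerivAt (fun w : ℂ => -Complex.I * z * w) (-Complex.I * z) (y : ℂ) := by
        simpa using (hasDerivAt_id (y : ℂ)).const_mul (-Complex.I * z)
      have := (h1.cexp).comp_ofReal (z := (y : ℝ))
      simpa [he, mul_comm] using this
    have hg : ∀ y : ℝ, HasDerivAt (fun t => φ t * e t)
        (φ' y * e y + φ y * (-Complex.I * z * e y)) y :=
      fun y => (hφd y).mul (hde y)
    have hint1 : Integrable (fun y : ℝ => φ' y * e y) := integrable_aux hφ'c hφ'b hεa hz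
    have hint2 : Integrable (fun y : ℝ => φ y * e y) := part1 z hz
    have hint3 : Integrable (fun y : ℝ => φ' y * e y + φ y * (-Complex.I * z * e y)) := by
      refine hint1.add ?_
      have : (fun y : ℝ => φ y * (-Complex.I * z * e y)) =
          fun y => (-Complex.I * z) * (φ y * e y) := by funext y; ring
      rw [this]; exact hint2.const_mul _
    -- interval integrals
    have hTT : ∀ T : ℝ, ∫ y in (-T)..T,
        (φ' y * e y + φ y * (-Complex.I * z * e y)) = φ T * e T - φ (-T) * e (-T) := by
      intro T
      exact intervalIntegral.integral_eq_sub_of_hasDerivAt (fun y _ => hg y)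
        hint3.intervalIntegrable
    have hlim1 : Tendsto (fun T : ℝ => ∫ y in (-T)..T,
        (φ' y * e y + φ y * (-Complex.I * z * e y))) atTop
        (𝓝 (∫ y : ℝ, (φ' y * e y + φ y * (-Complex.I * z * e y)))) :=
      intervalIntegral_tendsto_integral hint3 tendsto_neg_atTop_atBot tendsto_id
    have hbnd : ∀ T : ℝ, ‖φ T * e T‖ ≤ Real.exp (-(a - ε) * |T|) := by
      intro T
      rw [norm_mul, he, norm_cexp_aux]
      calc ‖φ T‖ * Real.exp (z.im * T) ≤ Real.exp (-a * |T|) * Real.exp (z.im * T) :=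
            mul_le_mul_of_nonneg_right (hφb T) (Real.exp_pos _).le
        _ ≤ Real.exp (-(a - ε) * |T|) := by
            rw [← Real.exp_add, Real.exp_le_exp]
            have : z.im * T ≤ |z.im| * |T| := le_trans (le_abs_self _) (by rw [abs_mul])
            nlinarith [abs_nonneg T, mul_le_mul_of_nonneg_right hz (abs_nonneg T)]
    have hdecay : Tendsto (fun T : ℝ => Real.exp (-(a - ε) * |T|)) atTop (𝓝 0) := by
      have h1 : Tendsto (fun T : ℝ => (a - ε) * |T|) atTop atTop :=
        tendsto_abs_atTop_atTop.const_mul_atTop (by linarith)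
      have h2 : Tendsto (fun T : ℝ => -((a - ε) * |T|)) atTop atBot :=
        tendsto_neg_atTop_atBot.comp h1
      have h3 := Real.tendsto_exp_atBot.comp h2
      have heq : (fun T : ℝ => Real.exp (-(a - ε) * |T|)) =
          Real.exp ∘ (fun T : ℝ => -((a - ε) * |T|)) := by
        funext T; simp only [Function.comp_apply]; congr 1; ring
      rw [heq]; exact h3
    have hlim2 : Tendsto (fun T : ℝ => φ T * e T - φ (-T) * e (-T)) atTop (𝓝 0) := by
      have hA : Tendsto (fun T : ℝ => φ T * e T) atTop (𝓝 0) := by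
        apply squeeze_zero_norm hbnd hdecay
      have hB : Tendsto (fun T : ℝ => φ (-T) * e (-T)) atTop (𝓝 0) := by
        apply squeeze_zero_norm (fun T => ?_) hdecay
        simpa [abs_neg] using hbnd (-T)
      simpa using hA.sub hB
    have hzero : (∫ y : ℝ, (φ' y * e y + φ y * (-Complex.I * z * e y))) = 0 := by
      have := hlim1
      rw [show (fun T : ℝ => ∫ y in (-T)..T,
          (φ' y * e y + φ y * (-Complex.I * z * e y))) =
        (fun T : ℝ => φ T * e T - φ (-T) * e (-T)) from funext hTT] at this
      exact tendsto_nhds_unique this hlim2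
    have hsplit : (∫ y : ℝ, (φ' y * e y + φ y * (-Complex.I * z * e y))) =
        (∫ y : ℝ, φ' y * e y) + (-Complex.I * z) * ∫ y : ℝ, φ y * e y := by
      rw [integral_add hint1]
      · congr 1
        rw [← integral_const_mul]
        congr 1; funext y; ring
      · have : (fun y : ℝ => φ y * (-Complex.I * z * e y)) =
            fun y => (-Complex.I * z) * (φ y * e y) := by funext y; ring
        rw [this]; exact hint2.const_mul _
    rw [hsplit] at hzero
    have : (∫ y : ℝ, φ' y * e y) = Complex.I * z * ∫ y : ℝ, φ y * e y := by
      have := hzero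
      ring_nf at this ⊢
      linear_combination this
    rw [r₁, this]
    ring
  -- Part 7
  have part7 : ∀ z : ℂ, |z.im| ≤ ε → ‖z * r₁ φ z‖ ≤ 2 * a / ((a - ε) * (a + ε)) := by
    intro z hz
    rw [part6 z hz, norm_neg]
    exact le_trans (norm_int_le hφ'c hφ'b (lt_of_le_of_lt hz hεa)) (arith_bound hε ha hz)
  exact ⟨part1, part2, part3, part4, part5, part6, part7⟩
end

section
/- Let ε > 0, a ≥ 2 + ε, and let φ : (0,∞) → ℂ be continuously differentiable with |φ(x)| ≤ x^{−1/2} e^{−a|ln x|} and |x·φ′(x)| ≤ x^{−1/2} e^{−a|ln x|} for all x > 0. Then the formula r₁(z) := ∫_0^∞ y^{z−1} φ(y) dy defines a function on the closed strip {z ∈ ℂ : |Re z − 1/2| ≤ ε/2} that is analytic on its interior and continuous on the strip, and it satisfies |r₁(z)| ≤ 2/(a − ε/2) < 1 for all z with |Re z − 1/2| ≤ ε/2; moreover, for all such z one has z·r₁(z) = −∫_0^∞ y^{z−1} (y·φ′(y)) dy, and hence |z·r₁(z)| ≤ 2/(a − ε/2) < 1 on the same closed strip. -/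
open MeasureTheory Set Complex Filter Topology

/-- On `(0,1]` the weight equals a power. -/
lemma expabs_eq_of_le_one {a y : ℝ} (hy : 0 < y) (hy1 : y ≤ 1) :
    Real.exp (-a * |Real.log y|) / Real.sqrt y = y ^ (a - 1/2) := by
  rw [_root_.abs_of_nonpos (Real.log_nonpos hy.le hy1), Real.sqrt_eq_rpow,
    show -a * -Real.log y = Real.log y * a by ring, ← Real.rpow_def_of_pos hy,
    ← Real.rpow_sub hy]

/-- On `[1,∞)` the weight equals a power. -/
lemma expabs_eq_of_one_le {a y : ℝ} (hy1 : 1 ≤ y) :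
    Real.exp (-a * |Real.log y|) / Real.sqrt y = y ^ (-a - 1/2) := by
  have hy : (0:ℝ) < y := lt_of_lt_of_le one_pos hy1
  rw [_root_.abs_of_nonneg (Real.log_nonneg hy1), Real.sqrt_eq_rpow,
    show -a * Real.log y = Real.log y * (-a) by ring, ← Real.rpow_def_of_pos hy,
    ← Real.rpow_sub hy]

/-- Norm of `y^w * ψ y`. -/
lemma norm_cpow_mul_le {ψ : ℝ → ℂ} {a : ℝ}
    (hψb : ∀ x ∈ Ioi (0:ℝ), ‖ψ x‖ ≤ Real.exp (-a * |Real.log x|) / Real.sqrt x)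
    (w : ℂ) {y : ℝ} (hy : 0 < y) :
    ‖(y : ℂ) ^ w * ψ y‖ ≤ y ^ w.re * (Real.exp (-a * |Real.log y|) / Real.sqrt y) := by
  rw [norm_mul, Complex.norm_cpow_eq_rpow_re_of_pos hy]
  exact mul_le_mul_of_nonneg_left (hψb y hy) (Real.rpow_nonneg hy.le _)

/-- Key integrability/bound lemma. -/
lemma key_aux (ε a : ℝ) (hε : 0 < ε) (ha : 2 + ε ≤ a) (ψ : ℝ → ℂ)
    (hψc : ContinuousOn ψ (Ioi 0))
    (hψb : ∀ x ∈ Ioi (0:ℝ), ‖ψ x‖ ≤ Real.exp (-a * |Real.log x|) / Real.sqrt x)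
    (z : ℂ) (hz : |z.re - 1/2| ≤ ε/2) :
    IntegrableOn (fun y : ℝ => (y : ℂ) ^ (z - 1) * ψ y) (Ioi 0) volume ∧
    ‖∫ y in Ioi (0:ℝ), (y : ℂ) ^ (z - 1) * ψ y‖ ≤ 2 / (a - ε/2) := by
  obtain ⟨hz1, hz2⟩ := abs_le.mp hz
  set b : ℝ := a - ε/2 with hbdef
  have hb0 : 0 < b := by simp only [hbdef]; linarith
  set F : ℝ → ℂ := fun y : ℝ => (y : ℂ) ^ (z - 1) * ψ y with hF
  have hre : (z - 1).re = z.re - 1 := by simp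
  have hbd1 : ∀ y ∈ Ioc (0:ℝ) 1, ‖F y‖ ≤ y ^ (b - 1) := by
    intro y hy
    have h1 := norm_cpow_mul_le hψb (z - 1) hy.1
    rw [expabs_eq_of_le_one hy.1 hy.2, hre, ← Real.rpow_add hy.1] at h1
    refine h1.trans (Real.rpow_le_rpow_of_exponent_ge hy.1 hy.2 ?_)
    simp only [hbdef]; linarith
  have hbd2 : ∀ y ∈ Ioi (1:ℝ), ‖F y‖ ≤ y ^ (-b - 1) := by
    intro y hy
    have hy1 : (1:ℝ) ≤ y := le_of_lt hy
    have hy0 : (0:ℝ) < y := lt_of_lt_of_le one_pos hy1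
    have h1 := norm_cpow_mul_le hψb (z - 1) hy0
    rw [expabs_eq_of_one_le hy1, hre, ← Real.rpow_add hy0] at h1
    refine h1.trans (Real.rpow_le_rpow_of_exponent_le hy1 ?_)
    simp only [hbdef]; linarith
  have hFc : ContinuousOn F (Ioi 0) := by
    refine ContinuousOn.mul (fun y hy => ?_) hψc
    exact ((continuousAt_cpow_const
      (Complex.ofReal_mem_slitPlane.mpr hy)).comp
      Complex.continuous_ofReal.continuousAt).continuousWithinAt
  have hg1 : IntegrableOn (fun y : ℝ => y ^ (b - 1)) (Ioc 0 1) volume := by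
    have := intervalIntegral.intervalIntegrable_rpow' (a := 0) (b := 1)
      (r := b - 1) (by linarith)
    rwa [intervalIntegrable_iff_integrableOn_Ioc_of_le zero_le_one] at this
  have hg2 : IntegrableOn (fun y : ℝ => y ^ (-b - 1)) (Ioi 1) volume :=
    integrableOn_Ioi_rpow_of_lt (by linarith) one_pos
  have hi1 : IntegrableOn F (Ioc 0 1) volume := by
    refine Integrable.mono' hg1
      ((hFc.mono Ioc_subset_Ioi_self).aestronglyMeasurable measurableSet_Ioc) ?_
    exact (ae_restrict_iff' measurableSet_Ioc).mpr (ae_of_all _ hbd1)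
  have hi2 : IntegrableOn F (Ioi 1) volume := by
    refine Integrable.mono' hg2
      ((hFc.mono (Ioi_subset_Ioi zero_le_one)).aestronglyMeasurable measurableSet_Ioi) ?_
    exact (ae_restrict_iff' measurableSet_Ioi).mpr (ae_of_all _ hbd2)
  have hsplit : Ioc (0:ℝ) 1 ∪ Ioi 1 = Ioi 0 := Ioc_union_Ioi_eq_Ioi zero_le_one
  have hint : IntegrableOn F (Ioi 0) volume := by
    rw [← hsplit]; exact hi1.union hi2
  refine ⟨hint, ?_⟩
  have eq1 : ∫ y in Ioc (0:ℝ) 1, y ^ (b - 1) = 1 / b := by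
    rw [← intervalIntegral.integral_of_le zero_le_one,
      integral_rpow (Or.inl (by linarith))]
    rw [show b - 1 + 1 = b by ring, Real.one_rpow, Real.zero_rpow hb0.ne']
    ring
  have eq2 : ∫ y in Ioi (1:ℝ), y ^ (-b - 1) = 1 / b := by
    rw [integral_Ioi_rpow_of_lt (by linarith) one_pos, Real.one_rpow]
    rw [show -b - 1 + 1 = -b by ring]
    field_simp
  calc ‖∫ y in Ioi (0:ℝ), F y‖ ≤ ∫ y in Ioi (0:ℝ), ‖F y‖ :=
        norm_integral_le_integral_norm _
    _ = (∫ y in Ioc (0:ℝ) 1, ‖F y‖) + ∫ y in Ioi (1:ℝ), ‖F y‖ := by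
        rw [← hsplit, setIntegral_union (Ioc_disjoint_Ioi le_rfl) measurableSet_Ioi
          hi1.norm hi2.norm]
    _ ≤ (∫ y in Ioc (0:ℝ) 1, y ^ (b - 1)) + ∫ y in Ioi (1:ℝ), y ^ (-b - 1) := by
        refine add_le_add
          (setIntegral_mono_on hi1.norm hg1 measurableSet_Ioc hbd1)
          (setIntegral_mono_on hi2.norm hg2 measurableSet_Ioi hbd2)
    _ = 1 / b + 1 / b := by rw [eq1, eq2]
    _ = 2 / (a - ε/2) := by rw [← hbdef]; ring

/-- for `ε > 0`, `a ≥ 2 + ε` and `φ` continuously differentiable on `(0,∞)` with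
`|φ(x)| ≤ x^{−1/2} e^{−a|ln x|}` and `|x·φ′(x)| ≤ x^{−1/2} e^{−a|ln x|}`, the Mellin transform
`r₁` is defined on the closed strip `|Re z − 1/2| ≤ ε/2`, analytic in its interior, continuous
on the strip, and satisfies `|r₁(z)| ≤ 2/(a − ε/2) < 1`; moreover
`z·r₁(z) = −∫_0^∞ y^{z−1}(y·φ′(y)) dy`, whence `|z·r₁(z)| ≤ 2/(a − ε/2) < 1` on the strip. -/
theorem statement_16 (ε a : ℝ) (hε : 0 < ε) (ha : 2 + ε ≤ a)
    (φ φ' : ℝ → ℂ)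
    (hφd : ∀ x ∈ Ioi (0:ℝ), HasDerivAt φ (φ' x) x)
    (hφ'c : ContinuousOn φ' (Ioi 0))
    (hφb : ∀ x ∈ Ioi (0:ℝ), ‖φ x‖ ≤ Real.exp (-a * |Real.log x|) / Real.sqrt x)
    (hφ'b : ∀ x ∈ Ioi (0:ℝ), ‖(x : ℂ) * φ' x‖ ≤ Real.exp (-a * |Real.log x|) / Real.sqrt x) :
    (∀ z : ℂ, |z.re - 1/2| ≤ ε/2 →
        IntegrableOn (fun y : ℝ => (y : ℂ) ^ (z - 1) * φ y) (Ioi 0) volume) ∧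
    AnalyticOnNhd ℂ (mr₁ φ) {z : ℂ | |z.re - 1/2| < ε/2} ∧
    ContinuousOn (mr₁ φ) {z : ℂ | |z.re - 1/2| ≤ ε/2} ∧
    2 / (a - ε/2) < 1 ∧
    (∀ z : ℂ, |z.re - 1/2| ≤ ε/2 → ‖mr₁ φ z‖ ≤ 2 / (a - ε/2)) ∧
    (∀ z : ℂ, |z.re - 1/2| ≤ ε/2 →
        z * mr₁ φ z = -∫ y in Ioi (0:ℝ), (y : ℂ) ^ (z - 1) * ((y : ℂ) * φ' y)) ∧
    (∀ z : ℂ, |z.re - 1/2| ≤ ε/2 → ‖z * mr₁ φ z‖ ≤ 2 / (a - ε/2)) := by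
  have hφc : ContinuousOn φ (Ioi 0) := fun x hx =>
    (hφd x hx).continuousAt.continuousWithinAt
  set ψ : ℝ → ℂ := fun y => (y : ℂ) * φ' y with hψdef
  have hψc : ContinuousOn ψ (Ioi 0) :=
    Complex.continuous_ofReal.continuousOn.mul hφ'c
  have keyφ := key_aux ε a hε ha φ hφc hφb
  have keyψ := key_aux ε a hε ha ψ hψc hφ'b
  -- Differentiability on a large open strip
  have htop : φ =O[atTop] (fun x : ℝ => x ^ (-(a + 1/2))) := by
    rw [Asymptotics.isBigO_iff]
    refine ⟨1, ?_⟩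
    filter_upwards [eventually_ge_atTop (1:ℝ)] with x hx
    have hx0 : (0:ℝ) < x := lt_of_lt_of_le one_pos hx
    have h1 := (hφb x hx0).trans_eq (expabs_eq_of_one_le hx)
    rw [one_mul, Real.norm_eq_abs, _root_.abs_of_nonneg (Real.rpow_nonneg hx0.le _)]
    rwa [show -(a + 1/2) = -a - 1/2 by ring]
  have hbot : φ =O[𝓝[>] (0:ℝ)] (fun x : ℝ => x ^ (-(1/2 - a))) := by
    rw [Asymptotics.isBigO_iff]
    refine ⟨1, ?_⟩
    filter_upwards [Ioc_mem_nhdsGT_of_mem (Set.mem_Ico.mpr ⟨le_rfl, one_pos⟩)] with x hx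
    have h1 := (hφb x hx.1).trans_eq (expabs_eq_of_le_one hx.1 hx.2)
    rw [one_mul, Real.norm_eq_abs, _root_.abs_of_nonneg (Real.rpow_nonneg hx.1.le _)]
    rwa [show -(1/2 - a) = a - 1/2 by ring]
  have hloc : LocallyIntegrableOn φ (Ioi 0) :=
    hφc.locallyIntegrableOn measurableSet_Ioi
  have hdiff : ∀ z : ℂ, 1/2 - a < z.re → z.re < a + 1/2 →
      DifferentiableAt ℂ (mellin φ) z := fun z h1 h2 =>
    mellin_differentiableAt_of_isBigO_rpow hloc htop h2 hbot h1
  have hmeq : mr₁ φ = mellin φ := by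
    funext z; simp only [mr₁, mellin, smul_eq_mul]
  have hsub : {z : ℂ | |z.re - 1/2| ≤ ε/2} ⊆
      {z : ℂ | 1/2 - a < z.re ∧ z.re < a + 1/2} := by
    intro z hz
    rw [mem_setOf_eq] at hz
    obtain ⟨h1, h2⟩ := abs_le.mp hz
    constructor
    · show 1/2 - a < z.re; linarith
    · show z.re < a + 1/2; linarith
  have hmain : ∀ z : ℂ, |z.re - 1/2| ≤ ε/2 →
      z * mr₁ φ z = -∫ y in Ioi (0:ℝ), (y : ℂ) ^ (z - 1) * ((y : ℂ) * φ' y) := by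
    intro z hz
    obtain ⟨hz1, hz2⟩ := abs_le.mp hz
    set u : ℝ → ℂ := fun y => (y : ℂ) ^ z with hudef
    set u' : ℝ → ℂ := fun y => z * (y : ℂ) ^ (z - 1) with hu'def
    have hu : ∀ x ∈ Ioi (0:ℝ), HasDerivAt u (u' x) x := by
      intro x hx
      have h0 : (x : ℂ) ∈ Complex.slitPlane := Complex.ofReal_mem_slitPlane.mpr hx
      have := ((Complex.hasStrictDerivAt_cpow_const (c := z) h0).hasDerivAt).comp_ofReal
      simpa [hudef, hu'def] using this
    have hcpow_mul : ∀ y : ℝ, 0 < y → (y : ℂ) ^ (z - 1) * (y : ℂ) = (y : ℂ) ^ z := by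
      intro y hy
      have hy0 : (y : ℂ) ≠ 0 := Complex.ofReal_ne_zero.mpr hy.ne'
      rw [Complex.cpow_sub _ _ hy0, Complex.cpow_one]
      field_simp
    have huv' : IntegrableOn (u * φ') (Ioi 0) volume := by
      refine (keyψ z hz).1.congr_fun (fun y hy => ?_) measurableSet_Ioi
      simp only [hψdef, Pi.mul_apply, hudef]
      rw [← hcpow_mul y hy]; ring
    have hu'v : IntegrableOn (u' * φ) (Ioi 0) volume := by
      have hIc : IntegrableOn (fun y : ℝ => z * ((y : ℂ) ^ (z - 1) * φ y)) (Ioi 0) volume :=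
        (keyφ z hz).1.const_mul z
      refine hIc.congr_fun (fun y hy => ?_) measurableSet_Ioi
      simp only [Pi.mul_apply, hu'def]; ring
    have h_zero : Tendsto (u * φ) (𝓝[>] (0:ℝ)) (𝓝 0) := by
      have hc0 : (0:ℝ) < z.re + (a - 1/2) := by linarith
      have hlim : Tendsto (fun y : ℝ => y ^ (z.re + (a - 1/2))) (𝓝[>] (0:ℝ)) (𝓝 0) := by
        have := (Real.continuousAt_rpow_const 0 (z.re + (a - 1/2))
          (Or.inr hc0.le)).tendsto
        rw [Real.zero_rpow hc0.ne'] at this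
        exact this.mono_left nhdsWithin_le_nhds
      refine squeeze_zero_norm' ?_ hlim
      filter_upwards [Ioc_mem_nhdsGT_of_mem (Set.mem_Ico.mpr ⟨le_rfl, one_pos⟩)] with y hy
      have h1 := norm_cpow_mul_le hφb z hy.1
      rw [expabs_eq_of_le_one hy.1 hy.2, ← Real.rpow_add hy.1] at h1
      exact h1
    have h_infty : Tendsto (u * φ) atTop (𝓝 0) := by
      have hc1 : (0:ℝ) < -(z.re + (-a - 1/2)) := by linarith
      have hlim : Tendsto (fun y : ℝ => y ^ (z.re + (-a - 1/2))) atTop (𝓝 0) := by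
        have := tendsto_rpow_neg_atTop hc1
        simpa [sub_eq_add_neg] using this
      refine squeeze_zero_norm' ?_ hlim
      filter_upwards [eventually_ge_atTop (1:ℝ)] with y hy
      have hy0 : (0:ℝ) < y := lt_of_lt_of_le one_pos hy
      have h1 := norm_cpow_mul_le hφb z hy0
      rw [expabs_eq_of_one_le hy, ← Real.rpow_add hy0] at h1
      exact h1
    have hibp := integral_Ioi_mul_deriv_eq_deriv_mul hu hφd huv' hu'v h_zero h_infty
    rw [sub_zero, zero_sub] at hibp
    have e1 : ∫ y in Ioi (0:ℝ), (y : ℂ) ^ (z - 1) * ((y : ℂ) * φ' y)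
        = ∫ y in Ioi (0:ℝ), u y * φ' y := by
      refine setIntegral_congr_fun measurableSet_Ioi (fun y hy => ?_)
      simp only [hudef]
      rw [← hcpow_mul y hy]; ring
    have e2 : ∫ y in Ioi (0:ℝ), u' y * φ y = z * mr₁ φ z := by
      simp only [hu'def, mul_assoc, mr₁]
      rw [integral_const_mul]
    rw [e1, hibp, e2, neg_neg]
  refine ⟨fun z hz => (keyφ z hz).1, ?_, ?_, ?_, fun z hz => (keyφ z hz).2, hmain, ?_⟩
  · -- Analytic
    have hU : IsOpen {z : ℂ | 1/2 - a < z.re ∧ z.re < a + 1/2} :=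
      (isOpen_lt continuous_const Complex.continuous_re).inter
        (isOpen_lt Complex.continuous_re continuous_const)
    have hAn : AnalyticOnNhd ℂ (mellin φ)
        {z : ℂ | 1/2 - a < z.re ∧ z.re < a + 1/2} := by
      refine DifferentiableOn.analyticOnNhd (fun z hz =>
        (hdiff z hz.1 hz.2).differentiableWithinAt) hU
    rw [hmeq]
    exact hAn.mono (fun z hz => hsub (le_of_lt (show |z.re - 1/2| < ε/2 from hz)))
  · -- Continuous
    intro z hz
    have hz' := hsub hz
    rw [hmeq]
    exact (hdiff z hz'.1 hz'.2).continuousAt.continuousWithinAt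
  · -- 2/(a - ε/2) < 1
    rw [div_lt_one (by linarith)]
    linarith
  · -- final bound
    intro z hz
    rw [hmain z hz, norm_neg]
    exact (keyψ z hz).2
end
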